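/- arXiv:2312.16160 — 8 statements merged into one kernel-verified Lean document; each statement's English description precedes it below -/
import Mathlib

section
/- Assume Z is 𝒢-distributionally invariant (ρ(G)Z =_d Z) and V : 𝒵 → 𝒵̃ is 𝒢-distributionally equivariant (V(ρ(G)Z) =_d ρ̃(G)V(Z)). Let ψ : 𝒵̃ → ℝ be measurable and let t : 𝒵̃ → ℝ ∪ {+∞} be measurable and deterministically 𝒢-invariant, i.e., t(ρ̃(g)z̃) = t(z̃) for all g ∈ 𝒢 and z̃ ∈ 𝒵̃. Then P(ψ(V(Z)) ≤ t(V(Z))) = P(ψ(ρ̃(G)V(Z)) ≤ t(V(Z))), where the right-hand probability is over the independent pair (G, Z) with G ~ U. -/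
open MeasureTheory ProbabilityTheory

/-- Under distributional invariance of `Z` and distributional equivariance of
`V`, for any measurable `ψ : 𝒵̃ → ℝ` and any measurable deterministically 𝒢-invariant
threshold `t : 𝒵̃ → ℝ ∪ {+∞}` (modeled as `EReal`-valued),
`P(ψ(V(Z)) ≤ t(V(Z))) = P(ψ(ρ̃(G)V(Z)) ≤ t(V(Z)))`. -/
theorem stmt3
    {Ω 𝒢 𝒵 𝒵t : Type*} [MeasurableSpace Ω] [MeasurableSpace 𝒢] [MeasurableSpace 𝒵]
    [MeasurableSpace 𝒵t]
    [Group 𝒢] [TopologicalSpace 𝒢] [IsTopologicalGroup 𝒢] [CompactSpace 𝒢] [T2Space 𝒢]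
    [BorelSpace 𝒢]
    (P : Measure Ω) [IsProbabilityMeasure P]
    (U : Measure 𝒢) [IsProbabilityMeasure U]
    (hU : ∀ g : 𝒢, Measure.map (fun h => g * h) U = U)
    (ρ : 𝒢 → 𝒵 → 𝒵)
    (hρ_one : ρ 1 = id)
    (hρ_mul : ∀ g g' : 𝒢, ρ (g * g') = ρ g ∘ ρ g')
    (hρ_meas : Measurable (fun p : 𝒢 × 𝒵 => ρ p.1 p.2))
    (ρt : 𝒢 → 𝒵t → 𝒵t)
    (hρt_one : ρt 1 = id)
    (hρt_mul : ∀ g g' : 𝒢, ρt (g * g') = ρt g ∘ ρt g')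
    (hρt_meas : Measurable (fun p : 𝒢 × 𝒵t => ρt p.1 p.2))
    (V : 𝒵 → 𝒵t) (hV : Measurable V)
    (ψ : 𝒵t → ℝ) (hψ : Measurable ψ)
    (hψρ : Measurable (fun p : 𝒢 × 𝒵t => ψ (ρt p.1 p.2)))
    (t : 𝒵t → EReal) (ht : Measurable t)
    (htinv : ∀ (g : 𝒢) (z : 𝒵t), t (ρt g z) = t z)
    (Zv : Ω → 𝒵) (Gv : Ω → 𝒢) (hZ : Measurable Zv) (hG : Measurable Gv)
    (hGlaw : Measure.map Gv P = U)
    (hindep : IndepFun Gv Zv P)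
    (hinv : Measure.map (fun ω => ρ (Gv ω) (Zv ω)) P = Measure.map Zv P)
    (hequiv : Measure.map (fun ω => V (ρ (Gv ω) (Zv ω))) P
        = Measure.map (fun ω => ρt (Gv ω) (V (Zv ω))) P) :
    P {ω | (ψ (V (Zv ω)) : EReal) ≤ t (V (Zv ω))}
      = P {ω | (ψ (ρt (Gv ω) (V (Zv ω))) : EReal) ≤ t (V (Zv ω))} := by
  set A : Set 𝒵t := {z | (ψ z : EReal) ≤ t z} with hA
  have hAmeas : MeasurableSet A :=
    measurableSet_le (measurable_coe_real_ereal.comp hψ) ht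
  have hmeas1 : Measurable fun ω => ρ (Gv ω) (Zv ω) :=
    hρ_meas.comp (hG.prodMk hZ)
  have hmeas2 : Measurable fun ω => ρt (Gv ω) (V (Zv ω)) :=
    hρt_meas.comp (hG.prodMk (hV.comp hZ))
  have key : Measure.map (fun ω => V (Zv ω)) P = Measure.map (fun ω => ρt (Gv ω) (V (Zv ω))) P := by
    calc Measure.map (fun ω => V (Zv ω)) P
        = Measure.map V (Measure.map Zv P) := (Measure.map_map hV hZ).symm
      _ = Measure.map V (Measure.map (fun ω => ρ (Gv ω) (Zv ω)) P) := by rw [hinv]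
      _ = Measure.map (fun ω => V (ρ (Gv ω) (Zv ω))) P := Measure.map_map hV hmeas1
      _ = _ := hequiv
  have final : P ((fun ω => V (Zv ω)) ⁻¹' A) = P ((fun ω => ρt (Gv ω) (V (Zv ω))) ⁻¹' A) := by
    rw [← Measure.map_apply (f := fun ω => V (Zv ω)) (hV.comp hZ) hAmeas,
      ← Measure.map_apply hmeas2 hAmeas, key]
  have h3 : (fun ω => ρt (Gv ω) (V (Zv ω))) ⁻¹' A
      = {ω | (ψ (ρt (Gv ω) (V (Zv ω))) : EReal) ≤ t (V (Zv ω))} := by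
    ext ω; simp [hA, htinv]
  calc P {ω | (ψ (V (Zv ω)) : EReal) ≤ t (V (Zv ω))}
      = P ((fun ω => V (Zv ω)) ⁻¹' A) := rfl
    _ = _ := by rw [final, h3]
end

section
/- (Coverage lower bound of SymmPI.) Assume Z is 𝒢-distributionally invariant (ρ(G)Z =_d Z) and V : 𝒵 → 𝒵̃ is 𝒢-distributionally equivariant (V(ρ(G)Z) =_d ρ̃(G)V(Z)). Then P(ψ(V(Z)) ≤ t_{V(Z)}) ≥ 1 − α; equivalently, the SymmPI prediction set T(o(Z)) = {z ∈ 𝒵 : ψ(V(z)) ≤ t_{V(z)}, o(z) = o(Z)} contains Z with probability at least 1 − α for any observation function o : 𝒵 → 𝒪. -/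
open MeasureTheory ProbabilityTheory Filter

/-- CDF of `ψ(ρ̃(G)z̃)` for `G ~ U`, evaluated at `x ∈ ℝ`. -/
noncomputable def symmPIcdf {𝒢 𝒵t : Type*} [MeasurableSpace 𝒢] (U : Measure 𝒢)
    (ρt : 𝒢 → 𝒵t → 𝒵t) (ψ : 𝒵t → ℝ) (z : 𝒵t) (x : ℝ) : ℝ :=
  (U {g | ψ (ρt g z) ≤ x}).toReal

/-- The SymmPI threshold `t_{z̃} := inf{x ∈ ℝ : F_{z̃}(x) ≥ 1−α}` (equal to `+∞` if this set
is empty), as an extended real number. -/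
noncomputable def symmPIthr {𝒢 𝒵t : Type*} [MeasurableSpace 𝒢] (U : Measure 𝒢)
    (ρt : 𝒢 → 𝒵t → 𝒵t) (ψ : 𝒵t → ℝ) (α : ℝ) (z : 𝒵t) : EReal :=
  sInf ((fun x : ℝ => (x : EReal)) '' {x : ℝ | 1 - α ≤ symmPIcdf U ρt ψ z x})

set_option linter.unusedSectionVars false
set_option linter.unusedVariables false

section auxmeas

variable {𝒢 𝒵t : Type*} [MeasurableSpace 𝒢] [MeasurableSpace 𝒵t]
  {ρt : 𝒢 → 𝒵t → 𝒵t} {ψ : 𝒵t → ℝ}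

lemma aux_meas (hψρ : Measurable (fun p : 𝒢 × 𝒵t => ψ (ρt p.1 p.2))) (z' : 𝒵t) :
    Measurable fun h : 𝒢 => ψ (ρt h z') :=
  hψρ.comp (measurable_id.prodMk measurable_const)

lemma aux_set_meas (hψρ : Measurable (fun p : 𝒢 × 𝒵t => ψ (ρt p.1 p.2))) (z' : 𝒵t) (x : ℝ) :
    MeasurableSet {h : 𝒢 | ψ (ρt h z') ≤ x} :=
  measurableSet_le (aux_meas hψρ z') measurable_const

end auxmeas

section aux

variable {𝒢 𝒵t : Type*} [MeasurableSpace 𝒢] [MeasurableSpace 𝒵t]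
  [Group 𝒢] [TopologicalSpace 𝒢] [IsTopologicalGroup 𝒢] [BorelSpace 𝒢]
  (U : Measure 𝒢) [IsProbabilityMeasure U]
  {ρt : 𝒢 → 𝒵t → 𝒵t} {ψ : 𝒵t → ℝ}

lemma left_inv_set (hU : ∀ g : 𝒢, Measure.map (fun h => g * h) U = U) (g : 𝒢)
    {A : Set 𝒢} (hA : MeasurableSet A) : U ((fun h => g * h) ⁻¹' A) = U A := by
  conv_rhs => rw [← hU g]
  rw [Measure.map_apply (continuous_mul_left g).measurable hA]

lemma U_eq_inv (hU : ∀ g : 𝒢, Measure.map (fun h => g * h) U = U)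
    (hρt_mul : ∀ g g' : 𝒢, ρt (g * g') = ρt g ∘ ρt g')
    (hρt_meas : Measurable (fun p : 𝒢 × 𝒵t => ρt p.1 p.2))
    (hψρ : Measurable (fun p : 𝒢 × 𝒵t => ψ (ρt p.1 p.2))) (z' : 𝒵t) (x : ℝ) :
    U {h | ψ (ρt h z') ≤ x} = (Measure.map Inv.inv U) {h | ψ (ρt h z') ≤ x} := by
  haveI hPinv : IsProbabilityMeasure (Measure.map (Inv.inv : 𝒢 → 𝒢) U) :=
    Measure.isProbabilityMeasure_map measurable_inv.aemeasurable
  set Uc := Measure.map (Inv.inv : 𝒢 → 𝒢) U with hUc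
  have hUcS : ∀ z'' : 𝒵t, Uc {h | ψ (ρt h z'') ≤ x} = U {h | ψ (ρt h⁻¹ z'') ≤ x} := by
    intro z''
    rw [hUc, Measure.map_apply measurable_inv (aux_set_meas hψρ z'' x)]
    rfl
  -- the joint set
  set B : Set (𝒢 × 𝒢) := {p | ψ (ρt p.1 (ρt p.2 z')) ≤ x} with hB
  have hBmeas : MeasurableSet B := by
    have : Measurable fun p : 𝒢 × 𝒢 => ψ (ρt p.1 (ρt p.2 z')) :=
      hψρ.comp (measurable_fst.prodMk
        ((hρt_meas.comp (measurable_id.prodMk measurable_const)).comp measurable_snd))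
    exact measurableSet_le this measurable_const
  have key1 : (Uc.prod U) B = U {h | ψ (ρt h z') ≤ x} := by
    rw [Measure.prod_apply hBmeas]
    have hsec : ∀ k : 𝒢, U (Prod.mk k ⁻¹' B) = U {h | ψ (ρt h z') ≤ x} := by
      intro k
      have hset : Prod.mk k ⁻¹' B = (fun h => k * h) ⁻¹' {h | ψ (ρt h z') ≤ x} := by
        ext h
        simp only [hB, Set.mem_preimage, Set.mem_setOf_eq, hρt_mul k h, Function.comp_apply]
      rw [hset, left_inv_set U hU k (aux_set_meas hψρ z' x)]
    simp only [hsec]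
    simp
  have key2 : (Uc.prod U) B = Uc {h | ψ (ρt h z') ≤ x} := by
    rw [Measure.prod_apply_symm hBmeas]
    have hsec : ∀ h : 𝒢, Uc ((fun k => (k, h)) ⁻¹' B) = Uc {h | ψ (ρt h z') ≤ x} := by
      intro h
      have hset1 : ((fun k => (k, h)) ⁻¹' B) = {k | ψ (ρt k (ρt h z')) ≤ x} := rfl
      rw [hset1, hUcS (ρt h z'), hUcS z']
      have hset2 : {k | ψ (ρt k⁻¹ (ρt h z')) ≤ x}
          = (fun k => h⁻¹ * k) ⁻¹' {m | ψ (ρt m⁻¹ z') ≤ x} := by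
        ext k
        simp only [Set.mem_preimage, Set.mem_setOf_eq, mul_inv_rev, inv_inv]
        rw [hρt_mul k⁻¹ h]
        rfl
      have hAmeas : MeasurableSet {m : 𝒢 | ψ (ρt m⁻¹ z') ≤ x} := by
        have : Measurable fun m : 𝒢 => ψ (ρt m⁻¹ z') :=
          (aux_meas hψρ z').comp measurable_inv
        exact measurableSet_le this measurable_const
      rw [hset2, left_inv_set U hU h⁻¹ hAmeas]
    simp only [hsec]
    simp
  rw [← key1, key2]

lemma cdf_inv_pt (hU : ∀ g : 𝒢, Measure.map (fun h => g * h) U = U)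
    (hρt_mul : ∀ g g' : 𝒢, ρt (g * g') = ρt g ∘ ρt g')
    (hρt_meas : Measurable (fun p : 𝒢 × 𝒵t => ρt p.1 p.2))
    (hψρ : Measurable (fun p : 𝒢 × 𝒵t => ψ (ρt p.1 p.2))) (g : 𝒢) (z : 𝒵t) (x : ℝ) :
    U {h | ψ (ρt h (ρt g z)) ≤ x} = U {h | ψ (ρt h z) ≤ x} := by
  haveI hPinv : IsProbabilityMeasure (Measure.map (Inv.inv : 𝒢 → 𝒢) U) :=
    Measure.isProbabilityMeasure_map measurable_inv.aemeasurable
  have hUcS : ∀ z'' : 𝒵t, (Measure.map (Inv.inv : 𝒢 → 𝒢) U) {h | ψ (ρt h z'') ≤ x}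
      = U {h | ψ (ρt h⁻¹ z'') ≤ x} := by
    intro z''
    rw [Measure.map_apply measurable_inv (aux_set_meas hψρ z'' x)]
    rfl
  rw [U_eq_inv U hU hρt_mul hρt_meas hψρ (ρt g z) x, hUcS (ρt g z),
    U_eq_inv U hU hρt_mul hρt_meas hψρ z x, hUcS z]
  have hset : {k : 𝒢 | ψ (ρt k⁻¹ (ρt g z)) ≤ x}
      = (fun k => g⁻¹ * k) ⁻¹' {m | ψ (ρt m⁻¹ z) ≤ x} := by
    ext k
    simp only [Set.mem_preimage, Set.mem_setOf_eq, mul_inv_rev, inv_inv]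
    rw [hρt_mul k⁻¹ g]
    rfl
  have hAmeas : MeasurableSet {m : 𝒢 | ψ (ρt m⁻¹ z) ≤ x} := by
    have : Measurable fun m : 𝒢 => ψ (ρt m⁻¹ z) := (aux_meas hψρ z).comp measurable_inv
    exact measurableSet_le this measurable_const
  rw [hset, left_inv_set U hU g⁻¹ hAmeas]

lemma thr_inv (hU : ∀ g : 𝒢, Measure.map (fun h => g * h) U = U)
    (hρt_mul : ∀ g g' : 𝒢, ρt (g * g') = ρt g ∘ ρt g')
    (hρt_meas : Measurable (fun p : 𝒢 × 𝒵t => ρt p.1 p.2))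
    (hψρ : Measurable (fun p : 𝒢 × 𝒵t => ψ (ρt p.1 p.2))) (α : ℝ) (g : 𝒢) (z : 𝒵t) :
    symmPIthr U ρt ψ α (ρt g z) = symmPIthr U ρt ψ α z := by
  have hset : {x : ℝ | 1 - α ≤ symmPIcdf U ρt ψ (ρt g z) x}
      = {x : ℝ | 1 - α ≤ symmPIcdf U ρt ψ z x} := by
    ext x
    simp only [Set.mem_setOf_eq, symmPIcdf, cdf_inv_pt U hU hρt_mul hρt_meas hψρ g z x]
  unfold symmPIthr
  rw [hset]

end aux

lemma ereal_tri (x : EReal) : x = ⊥ ∨ x = ⊤ ∨ ∃ r : ℝ, x = (r : EReal) := by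
  induction x using EReal.rec <;> simp

section cov
variable {𝒢 𝒵t : Type*} [MeasurableSpace 𝒢] [MeasurableSpace 𝒵t]
  (U : Measure 𝒢) [IsProbabilityMeasure U]
  {ρt : 𝒢 → 𝒵t → 𝒵t} {ψ : 𝒵t → ℝ}

lemma coverage_pt (hψρ : Measurable (fun p : 𝒢 × 𝒵t => ψ (ρt p.1 p.2)))
    {α : ℝ} (hα : α ∈ Set.Icc (0:ℝ) 1) (w : 𝒵t) :
    ENNReal.ofReal (1 - α) ≤ U {g | (ψ (ρt g w) : EReal) ≤ symmPIthr U ρt ψ α w} := by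
  have hFmono : Monotone (symmPIcdf U ρt ψ w) := fun x y hxy =>
    ENNReal.toReal_mono (measure_ne_top U _)
      (measure_mono (fun g hg => le_trans hg hxy))
  rcases ereal_tri (symmPIthr U ρt ψ α w) with ht | ht | ⟨r, ht⟩
  · -- bottom case: 1 - α ≤ 0
    have hall : ∀ r : ℝ, 1 - α ≤ symmPIcdf U ρt ψ w r := by
      intro r
      by_contra hr
      have hlb : (r : EReal) ≤ symmPIthr U ρt ψ α w := by
        unfold symmPIthr
        apply le_sInf
        rintro b ⟨s, hs, rfl⟩
        have hrs : r ≤ s := by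
          by_contra hrs
          push_neg at hrs
          exact hr (le_trans hs (hFmono hrs.le))
        exact EReal.coe_le_coe_iff.mpr hrs
      rw [ht] at hlb
      exact (EReal.coe_ne_bot r) (le_bot_iff.mp hlb)
    have h0 : 1 - α ≤ 0 := by
      set A : ℕ → Set 𝒢 := fun n => {g | ψ (ρt g w) ≤ -(n : ℝ)} with hA
      have hAm : ∀ n, MeasurableSet (A n) :=
        fun n => measurableSet_le (aux_meas hψρ w) measurable_const
      have hAanti : Antitone A := by
        intro m n hmn g hg
        simp only [hA, Set.mem_setOf_eq] at hg ⊢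
        refine le_trans hg ?_
        simp only [neg_le_neg_iff]
        exact_mod_cast hmn
      have hInter : ⋂ n, A n = ∅ := by
        ext g
        simp only [Set.mem_iInter, Set.mem_empty_iff_false, iff_false]
        intro hg
        obtain ⟨n, hn⟩ := exists_nat_gt (-(ψ (ρt g w)))
        have h2 := hg n
        simp only [hA, Set.mem_setOf_eq] at h2
        linarith
      have htend : Tendsto (fun n => (U (A n)).toReal) atTop (nhds 0) := by
        have h1 := tendsto_measure_iInter_atTop (μ := U)
          (fun n => (hAm n).nullMeasurableSet) hAanti ⟨0, measure_ne_top U _⟩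
        rw [hInter, measure_empty] at h1
        exact (ENNReal.tendsto_toReal (by simp)).comp h1
      exact ge_of_tendsto' htend (fun n => hall (-(n : ℝ)))
    have hz : ENNReal.ofReal (1 - α) = 0 := ENNReal.ofReal_eq_zero.mpr h0
    simp [hz]
  · -- top case
    have hset : {g : 𝒢 | (ψ (ρt g w) : EReal) ≤ symmPIthr U ρt ψ α w} = Set.univ := by
      ext g; simp [ht]
    rw [hset, measure_univ]
    exact ENNReal.ofReal_le_one.mpr (by linarith [hα.1])
  · -- real case
    have hmem : ∀ ε : ℝ, 0 < ε → 1 - α ≤ symmPIcdf U ρt ψ w (r + ε) := by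
      intro ε hε
      have hlt : symmPIthr U ρt ψ α w < ((r + ε : ℝ) : EReal) := by
        rw [ht]
        exact_mod_cast (by linarith : r < r + ε)
      unfold symmPIthr at hlt
      obtain ⟨b, hb, hblt⟩ := sInf_lt_iff.mp hlt
      obtain ⟨s, hs, rfl⟩ := hb
      have hsr : s ≤ r + ε := le_of_lt (EReal.coe_lt_coe_iff.mp hblt)
      exact le_trans hs (hFmono hsr)
    set B : ℕ → Set 𝒢 := fun n => {g | ψ (ρt g w) ≤ r + 1/((n:ℝ)+1)} with hB
    have hBm : ∀ n, MeasurableSet (B n) :=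
      fun n => measurableSet_le (aux_meas hψρ w) measurable_const
    have hBanti : Antitone B := by
      intro m n hmn g hg
      simp only [hB, Set.mem_setOf_eq] at hg ⊢
      refine le_trans hg ?_
      have : 1/((n:ℝ)+1) ≤ 1/((m:ℝ)+1) := by
        apply one_div_le_one_div_of_le
        · positivity
        · exact_mod_cast Nat.add_le_add_right hmn 1
      linarith
    have hInter : ⋂ n, B n = {g | ψ (ρt g w) ≤ r} := by
      ext g
      simp only [Set.mem_iInter, hB, Set.mem_setOf_eq]
      constructor
      · intro hg
        refine le_of_forall_pos_le_add ?_
        intro ε hε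
        obtain ⟨n, hn⟩ := exists_nat_one_div_lt hε
        have := hg n
        linarith
      · intro hg n
        have : (0:ℝ) < 1/((n:ℝ)+1) := by positivity
        linarith
    have htend : Tendsto (fun n => (U (B n)).toReal) atTop
        (nhds ((U {g | ψ (ρt g w) ≤ r}).toReal)) := by
      have h1 := tendsto_measure_iInter_atTop (μ := U)
        (fun n => (hBm n).nullMeasurableSet) hBanti ⟨0, measure_ne_top U _⟩
      rw [hInter] at h1
      exact (ENNReal.tendsto_toReal (measure_ne_top U _)).comp h1
    have h1 : 1 - α ≤ (U {g | ψ (ρt g w) ≤ r}).toReal :=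
      ge_of_tendsto' htend (fun n => hmem (1/((n:ℝ)+1)) (by positivity))
    have hset : {g : 𝒢 | (ψ (ρt g w) : EReal) ≤ symmPIthr U ρt ψ α w}
        = {g | ψ (ρt g w) ≤ r} := by
      ext g
      rw [Set.mem_setOf_eq, Set.mem_setOf_eq, ht]
      exact EReal.coe_le_coe_iff
    rw [hset]
    exact ENNReal.ofReal_le_of_le_toReal h1

end cov


/-- coverage lower bound of SymmPI: under distributional invariance of `Z`
and distributional equivariance of `V`, `P(ψ(V(Z)) ≤ t_{V(Z)}) ≥ 1 − α`; equivalently,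
the SymmPI prediction set `T(o(Z)) = {z : ψ(V(z)) ≤ t_{V(z)}, o(z) = o(Z)}` contains `Z`
with probability at least `1 − α` for any observation function `o`. -/
theorem stmt4
    {Ω 𝒢 𝒵 𝒵t 𝒪 : Type*} [MeasurableSpace Ω] [MeasurableSpace 𝒢] [MeasurableSpace 𝒵]
    [MeasurableSpace 𝒵t]
    [Group 𝒢] [TopologicalSpace 𝒢] [IsTopologicalGroup 𝒢] [CompactSpace 𝒢] [T2Space 𝒢]
    [BorelSpace 𝒢]
    (P : Measure Ω) [IsProbabilityMeasure P]
    (U : Measure 𝒢) [IsProbabilityMeasure U]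
    (hU : ∀ g : 𝒢, Measure.map (fun h => g * h) U = U)
    (ρ : 𝒢 → 𝒵 → 𝒵)
    (hρ_one : ρ 1 = id)
    (hρ_mul : ∀ g g' : 𝒢, ρ (g * g') = ρ g ∘ ρ g')
    (hρ_meas : Measurable (fun p : 𝒢 × 𝒵 => ρ p.1 p.2))
    (ρt : 𝒢 → 𝒵t → 𝒵t)
    (hρt_one : ρt 1 = id)
    (hρt_mul : ∀ g g' : 𝒢, ρt (g * g') = ρt g ∘ ρt g')
    (hρt_meas : Measurable (fun p : 𝒢 × 𝒵t => ρt p.1 p.2))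
    (V : 𝒵 → 𝒵t) (hV : Measurable V)
    (ψ : 𝒵t → ℝ) (hψ : Measurable ψ)
    (hψρ : Measurable (fun p : 𝒢 × 𝒵t => ψ (ρt p.1 p.2)))
    (α : ℝ) (hα : α ∈ Set.Icc (0 : ℝ) 1)
    (ht_meas : Measurable (fun z : 𝒵t => symmPIthr U ρt ψ α z))
    (o : 𝒵 → 𝒪)
    (Zv : Ω → 𝒵) (Gv : Ω → 𝒢) (hZ : Measurable Zv) (hG : Measurable Gv)
    (hGlaw : Measure.map Gv P = U)
    (hindep : IndepFun Gv Zv P)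
    (hinv : Measure.map (fun ω => ρ (Gv ω) (Zv ω)) P = Measure.map Zv P)
    (hequiv : Measure.map (fun ω => V (ρ (Gv ω) (Zv ω))) P
        = Measure.map (fun ω => ρt (Gv ω) (V (Zv ω))) P) :
    1 - α ≤ (P {ω | (ψ (V (Zv ω)) : EReal) ≤ symmPIthr U ρt ψ α (V (Zv ω))}).toReal ∧
    1 - α ≤ (P {ω | Zv ω ∈ {z : 𝒵 |
        (ψ (V z) : EReal) ≤ symmPIthr U ρt ψ α (V z) ∧ o z = o (Zv ω)}}).toReal := by
  have hW : Measurable (fun ω => V (Zv ω)) := hV.comp hZ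
  have hQP : IsProbabilityMeasure (Measure.map (fun ω => V (Zv ω)) P) :=
    Measure.isProbabilityMeasure_map hW.aemeasurable
  set Q := Measure.map (fun ω => V (Zv ω)) P with hQ
  have hρZ : Measurable (fun ω => ρ (Gv ω) (Zv ω)) := hρ_meas.comp (hG.prodMk hZ)
  have hcoe : Measurable (fun z : 𝒵t => (ψ z : EReal)) := measurable_coe_real_ereal.comp hψ
  have hA : MeasurableSet {z : 𝒵t | (ψ z : EReal) ≤ symmPIthr U ρt ψ α z} :=
    measurableSet_le hcoe ht_meas
  have h1 : Q = Measure.map (fun ω => ρt (Gv ω) (V (Zv ω))) P := by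
    rw [hQ, ← hequiv]
    calc Measure.map (fun ω => V (Zv ω)) P = Measure.map V (Measure.map Zv P) :=
      (Measure.map_map hV hZ).symm
    _ = Measure.map V (Measure.map (fun ω => ρ (Gv ω) (Zv ω)) P) := by rw [hinv]
    _ = Measure.map (fun ω => V (ρ (Gv ω) (Zv ω))) P := Measure.map_map hV hρZ
  have hindep2 : IndepFun Gv (fun ω => V (Zv ω)) P := hindep.comp measurable_id hV
  have hjoint : Measure.map (fun ω => (Gv ω, V (Zv ω))) P = U.prod Q := by
    rw [hQ, ← hGlaw]
    exact (indepFun_iff_map_prod_eq_prod_map_map hG.aemeasurable hW.aemeasurable).mp hindep2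
  set B' : Set (𝒢 × 𝒵t) := {p | (ψ (ρt p.1 p.2) : EReal) ≤ symmPIthr U ρt ψ α p.2} with hB'
  have hB'meas : MeasurableSet B' :=
    measurableSet_le (measurable_coe_real_ereal.comp hψρ) (ht_meas.comp measurable_snd)
  have hmain : ENNReal.ofReal (1 - α)
      ≤ P {ω | (ψ (V (Zv ω)) : EReal) ≤ symmPIthr U ρt ψ α (V (Zv ω))} := by
    have e1 : P {ω | (ψ (V (Zv ω)) : EReal) ≤ symmPIthr U ρt ψ α (V (Zv ω))}
        = Q {z | (ψ z : EReal) ≤ symmPIthr U ρt ψ α z} := by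
      rw [hQ, Measure.map_apply hW hA]
      rfl
    have e2 : Q {z | (ψ z : EReal) ≤ symmPIthr U ρt ψ α z}
        = P ((fun ω => (Gv ω, V (Zv ω))) ⁻¹' B') := by
      have hm2 : Measurable fun ω => ρt (Gv ω) (V (Zv ω)) := hρt_meas.comp (hG.prodMk hW)
      rw [h1, Measure.map_apply hm2 hA]
      congr 1
      ext ω
      simp only [Set.mem_preimage, Set.mem_setOf_eq, hB']
      rw [thr_inv U hU hρt_mul hρt_meas hψρ α (Gv ω) (V (Zv ω))]
    have e3 : P ((fun ω => (Gv ω, V (Zv ω))) ⁻¹' B') = (U.prod Q) B' := by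
      have hm3 : Measurable fun ω => (Gv ω, V (Zv ω)) := hG.prodMk hW
      rw [← hjoint, Measure.map_apply hm3 hB'meas]
    have e4 : (U.prod Q) B'
        = ∫⁻ w, U {g | (ψ (ρt g w) : EReal) ≤ symmPIthr U ρt ψ α w} ∂Q := by
      rw [Measure.prod_apply_symm hB'meas]
      rfl
    have e5 : ENNReal.ofReal (1 - α)
        ≤ ∫⁻ w, U {g | (ψ (ρt g w) : EReal) ≤ symmPIthr U ρt ψ α w} ∂Q := by
      calc ENNReal.ofReal (1 - α) = ∫⁻ _, ENNReal.ofReal (1 - α) ∂Q := by simp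
      _ ≤ _ := lintegral_mono (fun w => coverage_pt U hψρ hα w)
    rw [e1, e2, e3, e4]
    exact e5
  have hfin : 1 - α ≤ (P {ω | (ψ (V (Zv ω)) : EReal)
      ≤ symmPIthr U ρt ψ α (V (Zv ω))}).toReal := by
    have h2 := ENNReal.toReal_mono (measure_ne_top P _) hmain
    rwa [ENNReal.toReal_ofReal (by linarith [hα.2])] at h2
  refine ⟨hfin, ?_⟩
  have hset : {ω | Zv ω ∈ {z : 𝒵 |
        (ψ (V z) : EReal) ≤ symmPIthr U ρt ψ α (V z) ∧ o z = o (Zv ω)}}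
      = {ω | (ψ (V (Zv ω)) : EReal) ≤ symmPIthr U ρt ψ α (V (Zv ω))} := by
    ext ω
    simp
  rw [hset]
  exact hfin
end

section
/- (Coverage upper bound of SymmPI.) Assume Z is 𝒢-distributionally invariant (ρ(G)Z =_d Z) and V : 𝒵 → 𝒵̃ is 𝒢-distributionally equivariant (V(ρ(G)Z) =_d ρ̃(G)V(Z)). Then P(ψ(V(Z)) ≤ t_{V(Z)}) ≤ 1 − α + E[F'_{V(Z)}(t_{V(Z)})], where F'_{z̃}(x) = F_{z̃}(x) − lim_{y↑x} F_{z̃}(y) is the jump of the CDF F_{z̃} at x. -/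
open MeasureTheory ProbabilityTheory
open scoped ENNReal

set_option linter.unusedSectionVars false
set_option linter.unusedVariables false

/-- The CDF of `ψ(ρ̃(G)z̃)`, `G ~ U`, extended to `EReal` arguments. -/
noncomputable def symmPIcdfE {𝒢 𝒵t : Type*} [MeasurableSpace 𝒢] (U : Measure 𝒢)
    (ρt : 𝒢 → 𝒵t → 𝒵t) (ψ : 𝒵t → ℝ) (z : 𝒵t) (t : EReal) : ℝ :=
  (U {g | (ψ (ρt g z) : EReal) ≤ t}).toReal

/-- The left limit `F⁻_{z̃}(t) = lim_{y↑t} F_{z̃}(y)` of the CDF. -/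
noncomputable def symmPIcdfLeft {𝒢 𝒵t : Type*} [MeasurableSpace 𝒢] (U : Measure 𝒢)
    (ρt : 𝒢 → 𝒵t → 𝒵t) (ψ : 𝒵t → ℝ) (z : 𝒵t) (t : EReal) : ℝ :=
  sSup (symmPIcdfE U ρt ψ z '' Set.Iio t)

/-- The jump `F'_{z̃}(t) = F_{z̃}(t) − lim_{y↑t} F_{z̃}(y)` of the CDF at `t`. -/
noncomputable def symmPIjump {𝒢 𝒵t : Type*} [MeasurableSpace 𝒢] (U : Measure 𝒢)
    (ρt : 𝒢 → 𝒵t → 𝒵t) (ψ : 𝒵t → ℝ) (z : 𝒵t) (t : EReal) : ℝ :=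
  symmPIcdfE U ρt ψ z t - symmPIcdfLeft U ρt ψ z t

section Aux2
variable {𝒢 𝒵t : Type*} [MeasurableSpace 𝒢] [MeasurableSpace 𝒵t]
    (U : Measure 𝒢) [IsProbabilityMeasure U]
    (ρt : 𝒢 → 𝒵t → 𝒵t) (ψ : 𝒵t → ℝ)

lemma cdfE_nonneg (z : 𝒵t) (s : EReal) : 0 ≤ symmPIcdfE U ρt ψ z s :=
  ENNReal.toReal_nonneg

lemma cdfE_le_one (z : 𝒵t) (s : EReal) : symmPIcdfE U ρt ψ z s ≤ 1 := by
  have := prob_le_one (μ := U) (s := {g | (ψ (ρt g z) : EReal) ≤ s})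
  have h := ENNReal.toReal_mono ENNReal.one_ne_top this
  simpa [symmPIcdfE] using h

lemma cdfE_mono (z : 𝒵t) {s u : EReal} (h : s ≤ u) :
    symmPIcdfE U ρt ψ z s ≤ symmPIcdfE U ρt ψ z u := by
  refine ENNReal.toReal_mono (measure_ne_top U _) (measure_mono fun g hg => le_trans hg h)

lemma left_le_cdfE (z : 𝒵t) (s : EReal) :
    symmPIcdfLeft U ρt ψ z s ≤ symmPIcdfE U ρt ψ z s := by
  refine Real.sSup_le (fun y hy => ?_) (cdfE_nonneg U ρt ψ z s)
  obtain ⟨u, hu, rfl⟩ := hy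
  exact cdfE_mono U ρt ψ z (le_of_lt hu)

lemma left_nonneg (z : 𝒵t) (s : EReal) : 0 ≤ symmPIcdfLeft U ρt ψ z s :=
  Real.sSup_nonneg (by rintro y ⟨u, _, rfl⟩; exact cdfE_nonneg U ρt ψ z u)

lemma jump_nonneg (z : 𝒵t) (s : EReal) : 0 ≤ symmPIjump U ρt ψ z s :=
  sub_nonneg.mpr (left_le_cdfE U ρt ψ z s)

lemma jump_le_one (z : 𝒵t) (s : EReal) : symmPIjump U ρt ψ z s ≤ 1 := by
  have h1 := cdfE_le_one U ρt ψ z s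
  have h2 := left_nonneg U ρt ψ z s
  simp only [symmPIjump]; linarith

lemma cdfE_coe (z : 𝒵t) (x : ℝ) :
    symmPIcdfE U ρt ψ z (x : EReal) = symmPIcdf U ρt ψ z x := by
  simp only [symmPIcdfE, symmPIcdf, EReal.coe_le_coe_iff]

lemma left_le_one_sub {α : ℝ} (hα0 : 0 ≤ α) (hα1 : α ≤ 1) (z : 𝒵t) :
    symmPIcdfLeft U ρt ψ z (symmPIthr U ρt ψ α z) ≤ 1 - α := by
  refine Real.sSup_le (fun y hy => ?_) (by linarith)
  obtain ⟨s, hs, rfl⟩ := hy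
  induction s with
  | bot =>
      have : {g : 𝒢 | (ψ (ρt g z) : EReal) ≤ (⊥ : EReal)} = ∅ := by
        ext g; simp
      simp only [symmPIcdfE, this, measure_empty, ENNReal.toReal_zero]; linarith
  | coe x =>
      rw [cdfE_coe]
      by_contra hcon
      push_neg at hcon
      have hx : 1 - α ≤ symmPIcdf U ρt ψ z x := le_of_lt hcon
      have : symmPIthr U ρt ψ α z ≤ (x : EReal) :=
        sInf_le ⟨x, hx, rfl⟩
      exact absurd (lt_of_lt_of_le hs this) (lt_irrefl _)
  | top => exact absurd hs (by simp)

lemma cdfE_thr_le {α : ℝ} (hα0 : 0 ≤ α) (hα1 : α ≤ 1) (z : 𝒵t) :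
    symmPIcdfE U ρt ψ z (symmPIthr U ρt ψ α z)
      ≤ (1 - α) + symmPIjump U ρt ψ z (symmPIthr U ρt ψ α z) := by
  have h := left_le_one_sub U ρt ψ hα0 hα1 z
  simp only [symmPIjump]; linarith

end Aux2
section Aux
variable {𝒢 𝒵t : Type*} [MeasurableSpace 𝒢] [MeasurableSpace 𝒵t]
    [Group 𝒢] [TopologicalSpace 𝒢] [IsTopologicalGroup 𝒢] [BorelSpace 𝒢]
    (U : Measure 𝒢) [IsProbabilityMeasure U]
    (ρt : 𝒢 → 𝒵t → 𝒵t) (ψ : 𝒵t → ℝ)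

lemma sect_meas (hψρ : Measurable (fun p : 𝒢 × 𝒵t => ψ (ρt p.1 p.2))) (z : 𝒵t) :
    Measurable fun g => ψ (ρt g z) :=
  hψρ.comp (measurable_id.prodMk measurable_const)

/-- Key right-invariance lemma. -/
lemma key (hU : ∀ g : 𝒢, Measure.map (fun h => g * h) U = U)
    (hρt_mul : ∀ g g' : 𝒢, ρt (g * g') = ρt g ∘ ρt g')
    (hρt_meas : Measurable (fun p : 𝒢 × 𝒵t => ρt p.1 p.2))
    (hψρ : Measurable (fun p : 𝒢 × 𝒵t => ψ (ρt p.1 p.2)))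
    (M : Set ℝ) (hM : MeasurableSet M) (g : 𝒢) (z : 𝒵t) :
    U {h | ψ (ρt h (ρt g z)) ∈ M} = U {h | ψ (ρt h z) ∈ M} := by
  classical
  set ν : Measure 𝒢 := Measure.map (fun h : 𝒢 => h⁻¹) U with hν
  have hinv_meas : Measurable fun h : 𝒢 => h⁻¹ := continuous_inv.measurable
  have hCmeas : ∀ w : 𝒵t, MeasurableSet {h : 𝒢 | ψ (ρt h w) ∈ M} := fun w =>
    (sect_meas ρt ψ hψρ w) hM
  have hνprob : IsProbabilityMeasure ν := Measure.isProbabilityMeasure_map hinv_meas.aemeasurable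
  -- (a) left invariance
  have ha : ∀ (k : 𝒢) (w : 𝒵t), U {g | ψ (ρt (k * g) w) ∈ M} = U {h | ψ (ρt h w) ∈ M} := by
    intro k w
    have : {g : 𝒢 | ψ (ρt (k * g) w) ∈ M} = (fun g => k * g) ⁻¹' {h | ψ (ρt h w) ∈ M} := rfl
    rw [this, ← Measure.map_apply (continuous_mul_left k).measurable (hCmeas w), hU k]
  -- (b) ν right invariance
  have hb : ∀ (k : 𝒢) (w : 𝒵t), ν {h | ψ (ρt (h * k) w) ∈ M} = ν {h | ψ (ρt h w) ∈ M} := by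
    intro k w
    have hms : MeasurableSet {h : 𝒢 | ψ (ρt (h * k) w) ∈ M} :=
      ((sect_meas ρt ψ hψρ w).comp (measurable_mul_const k)) hM
    rw [hν, Measure.map_apply hinv_meas hms, Measure.map_apply hinv_meas (hCmeas w)]
    have h1 : (fun h : 𝒢 => h⁻¹) ⁻¹' {h | ψ (ρt (h * k) w) ∈ M}
        = (fun h : 𝒢 => k⁻¹ * h) ⁻¹' ((fun h : 𝒢 => h⁻¹) ⁻¹' {h | ψ (ρt h w) ∈ M}) := by
      ext h
      simp only [Set.mem_preimage, Set.mem_setOf_eq, mul_inv_rev, inv_inv]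
    rw [h1, ← Measure.map_apply (continuous_mul_left k⁻¹).measurable
      (hinv_meas (hCmeas w)), hU k⁻¹]
  -- (c) U = ν on these sets
  have hc : ∀ w : 𝒵t, U {h | ψ (ρt h w) ∈ M} = ν {h | ψ (ρt h w) ∈ M} := by
    intro w
    have hT : MeasurableSet {p : 𝒢 × 𝒢 | ψ (ρt p.2 (ρt p.1 w)) ∈ M} := by
      have : Measurable fun p : 𝒢 × 𝒢 => ψ (ρt p.2 (ρt p.1 w)) :=
        hψρ.comp (measurable_snd.prodMk
          (hρt_meas.comp (measurable_fst.prodMk measurable_const)))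
      exact this hM
    have hswap := lintegral_lintegral_swap (μ := U) (ν := ν)
        (f := fun g h => Set.indicator {p : 𝒢 × 𝒢 | ψ (ρt p.2 (ρt p.1 w)) ∈ M} 1 (g, h))
        ((measurable_one.indicator hT).aemeasurable)
    have hL : ∫⁻ g, ∫⁻ h, Set.indicator {p : 𝒢 × 𝒢 | ψ (ρt p.2 (ρt p.1 w)) ∈ M} 1 (g, h) ∂ν ∂U
        = ν {h | ψ (ρt h w) ∈ M} := by
      have : ∀ g : 𝒢, ∫⁻ h, Set.indicator {p : 𝒢 × 𝒢 | ψ (ρt p.2 (ρt p.1 w)) ∈ M} 1 (g, h) ∂ν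
          = ν {h | ψ (ρt h w) ∈ M} := by
        intro g
        have heq : (fun h => Set.indicator {p : 𝒢 × 𝒢 | ψ (ρt p.2 (ρt p.1 w)) ∈ M} 1 (g, h))
            = Set.indicator {h : 𝒢 | ψ (ρt h (ρt g w)) ∈ M} (1 : 𝒢 → ℝ≥0∞) := by
          ext h
          by_cases hmem : ψ (ρt h (ρt g w)) ∈ M <;>
            simp [Set.indicator, hmem]
        rw [heq, lintegral_indicator (hCmeas (ρt g w))]
        simp only [Pi.one_apply, lintegral_one, Measure.restrict_apply_univ]
        have : {h : 𝒢 | ψ (ρt h (ρt g w)) ∈ M} = {h : 𝒢 | ψ (ρt (h * g) w) ∈ M} := by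
          ext h; simp [hρt_mul h g]
        rw [this, hb g w]
      simp only [this, lintegral_const, measure_univ, mul_one]
    have hR : ∫⁻ h, ∫⁻ g, Set.indicator {p : 𝒢 × 𝒢 | ψ (ρt p.2 (ρt p.1 w)) ∈ M} 1 (g, h) ∂U ∂ν
        = U {h | ψ (ρt h w) ∈ M} := by
      have : ∀ h : 𝒢, ∫⁻ g, Set.indicator {p : 𝒢 × 𝒢 | ψ (ρt p.2 (ρt p.1 w)) ∈ M} 1 (g, h) ∂U
          = U {h' | ψ (ρt h' w) ∈ M} := by
        intro h
        have heq : (fun g => Set.indicator {p : 𝒢 × 𝒢 | ψ (ρt p.2 (ρt p.1 w)) ∈ M} 1 (g, h))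
            = Set.indicator {g : 𝒢 | ψ (ρt (h * g) w) ∈ M} (1 : 𝒢 → ℝ≥0∞) := by
          ext g
          by_cases hmem : ψ (ρt (h * g) w) ∈ M <;>
            simp [Set.indicator, hmem, hρt_mul h g]
        have hms : MeasurableSet {g : 𝒢 | ψ (ρt (h * g) w) ∈ M} :=
          ((sect_meas ρt ψ hψρ w).comp (measurable_const_mul h)) hM
        rw [heq, lintegral_indicator hms]
        simp only [Pi.one_apply, lintegral_one, Measure.restrict_apply_univ]
        rw [ha h w]
      simp only [this, lintegral_const, measure_univ, mul_one]
    rw [← hL, hswap, hR]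
  -- (d) conclude
  have h1 : {h : 𝒢 | ψ (ρt h (ρt g z)) ∈ M} = {h : 𝒢 | ψ (ρt (h * g) z) ∈ M} := by
    ext h; simp [hρt_mul h g]
  rw [hc (ρt g z), h1, hb g z, ← hc z]

end Aux

section Inv
variable {𝒢 𝒵t : Type*} [MeasurableSpace 𝒢] [MeasurableSpace 𝒵t]
    [Group 𝒢] [TopologicalSpace 𝒢] [IsTopologicalGroup 𝒢] [BorelSpace 𝒢]
    (U : Measure 𝒢) [IsProbabilityMeasure U]
    (ρt : 𝒢 → 𝒵t → 𝒵t) (ψ : 𝒵t → ℝ)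
    (hU : ∀ g : 𝒢, Measure.map (fun h => g * h) U = U)
    (hρt_mul : ∀ g g' : 𝒢, ρt (g * g') = ρt g ∘ ρt g')
    (hρt_meas : Measurable (fun p : 𝒢 × 𝒵t => ρt p.1 p.2))
    (hψρ : Measurable (fun p : 𝒢 × 𝒵t => ψ (ρt p.1 p.2)))

include hU hρt_mul hρt_meas hψρ

lemma cdf_inv (g : 𝒢) (z : 𝒵t) (x : ℝ) :
    symmPIcdf U ρt ψ (ρt g z) x = symmPIcdf U ρt ψ z x := by
  simp only [symmPIcdf]
  congr 1
  exact key U ρt ψ hU hρt_mul hρt_meas hψρ (Set.Iic x) measurableSet_Iic g z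

lemma thr_inv_s5 (α : ℝ) (g : 𝒢) (z : 𝒵t) :
    symmPIthr U ρt ψ α (ρt g z) = symmPIthr U ρt ψ α z := by
  have h : {x : ℝ | 1 - α ≤ symmPIcdf U ρt ψ (ρt g z) x}
      = {x : ℝ | 1 - α ≤ symmPIcdf U ρt ψ z x} := by
    ext x
    simp only [Set.mem_setOf_eq, cdf_inv U ρt ψ hU hρt_mul hρt_meas hψρ g z x]
  simp only [symmPIthr, h]

end Inv

/-- coverage upper bound of SymmPI: under distributional invariance of `Z`
and distributional equivariance of `V`,
`P(ψ(V(Z)) ≤ t_{V(Z)}) ≤ 1 − α + E[F'_{V(Z)}(t_{V(Z)})]`. -/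
theorem stmt5
    {Ω 𝒢 𝒵 𝒵t : Type*} [MeasurableSpace Ω] [MeasurableSpace 𝒢] [MeasurableSpace 𝒵]
    [MeasurableSpace 𝒵t]
    [Group 𝒢] [TopologicalSpace 𝒢] [IsTopologicalGroup 𝒢] [CompactSpace 𝒢] [T2Space 𝒢]
    [BorelSpace 𝒢]
    (P : Measure Ω) [IsProbabilityMeasure P]
    (U : Measure 𝒢) [IsProbabilityMeasure U]
    (hU : ∀ g : 𝒢, Measure.map (fun h => g * h) U = U)
    (ρ : 𝒢 → 𝒵 → 𝒵)
    (hρ_one : ρ 1 = id)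
    (hρ_mul : ∀ g g' : 𝒢, ρ (g * g') = ρ g ∘ ρ g')
    (hρ_meas : Measurable (fun p : 𝒢 × 𝒵 => ρ p.1 p.2))
    (ρt : 𝒢 → 𝒵t → 𝒵t)
    (hρt_one : ρt 1 = id)
    (hρt_mul : ∀ g g' : 𝒢, ρt (g * g') = ρt g ∘ ρt g')
    (hρt_meas : Measurable (fun p : 𝒢 × 𝒵t => ρt p.1 p.2))
    (V : 𝒵 → 𝒵t) (hV : Measurable V)
    (ψ : 𝒵t → ℝ) (hψ : Measurable ψ)
    (hψρ : Measurable (fun p : 𝒢 × 𝒵t => ψ (ρt p.1 p.2)))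
    (α : ℝ) (hα : α ∈ Set.Icc (0 : ℝ) 1)
    (ht_meas : Measurable (fun z : 𝒵t => symmPIthr U ρt ψ α z))
    (hjump_meas : Measurable (fun z : 𝒵t => symmPIjump U ρt ψ z (symmPIthr U ρt ψ α z)))
    (Zv : Ω → 𝒵) (Gv : Ω → 𝒢) (hZ : Measurable Zv) (hG : Measurable Gv)
    (hGlaw : Measure.map Gv P = U)
    (hindep : IndepFun Gv Zv P)
    (hinv : Measure.map (fun ω => ρ (Gv ω) (Zv ω)) P = Measure.map Zv P)
    (hequiv : Measure.map (fun ω => V (ρ (Gv ω) (Zv ω))) P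
        = Measure.map (fun ω => ρt (Gv ω) (V (Zv ω))) P) :
    (P {ω | (ψ (V (Zv ω)) : EReal) ≤ symmPIthr U ρt ψ α (V (Zv ω))}).toReal
      ≤ 1 - α + ∫ ω, symmPIjump U ρt ψ (V (Zv ω)) (symmPIthr U ρt ψ α (V (Zv ω))) ∂P := by
  obtain ⟨hα0, hα1⟩ := hα
  set t : 𝒵t → EReal := fun z => symmPIthr U ρt ψ α z with hts
  set W : Ω → 𝒵t := fun ω => V (Zv ω) with hWdef
  have hWm : Measurable W := hV.comp hZ
  set μW : Measure 𝒵t := Measure.map W P with hμW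
  have hμWprob : IsProbabilityMeasure μW := Measure.isProbabilityMeasure_map hWm.aemeasurable
  have hψE : Measurable fun z : 𝒵t => (ψ z : EReal) := measurable_coe_real_ereal.comp hψ
  set A : Set 𝒵t := {z : 𝒵t | (ψ z : EReal) ≤ t z} with hAdef
  have hA : MeasurableSet A := measurableSet_le hψE ht_meas
  -- event rewriting
  have hev : P {ω | (ψ (W ω) : EReal) ≤ t (W ω)} = μW A := by
    rw [hμW, Measure.map_apply hWm hA]
    rfl
  -- law identity
  have hGZ : Measurable fun ω => ρ (Gv ω) (Zv ω) := hρ_meas.comp (hG.prodMk hZ)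
  have hlaw : μW = Measure.map (fun ω => ρt (Gv ω) (W ω)) P := by
    calc μW = Measure.map V (Measure.map Zv P) := (Measure.map_map hV hZ).symm
    _ = Measure.map V (Measure.map (fun ω => ρ (Gv ω) (Zv ω)) P) := by rw [hinv]
    _ = Measure.map (fun ω => V (ρ (Gv ω) (Zv ω))) P := Measure.map_map hV hGZ
    _ = Measure.map (fun ω => ρt (Gv ω) (V (Zv ω))) P := hequiv
  -- joint law via independence
  have hjoint : Measure.map (fun ω => (Gv ω, W ω)) P = U.prod μW := by
    rw [← hGlaw, hμW]
    exact (indepFun_iff_map_prod_eq_prod_map_map hG.aemeasurable hWm.aemeasurable).mp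
      (hindep.comp measurable_id hV)
  have hB : MeasurableSet {p : 𝒢 × 𝒵t | ρt p.1 p.2 ∈ A} := hρt_meas hA
  have h2 : μW A = (U.prod μW) {p : 𝒢 × 𝒵t | ρt p.1 p.2 ∈ A} := by
    have hm1 : Measurable fun ω => ρt (Gv ω) (W ω) := hρt_meas.comp (hG.prodMk hWm)
    have hm2 : Measurable fun ω => (Gv ω, W ω) := hG.prodMk hWm
    conv_lhs => rw [hlaw]
    rw [Measure.map_apply hm1 hA, ← hjoint, Measure.map_apply hm2 hB]
    rfl
  -- slice value
  have hslice : ∀ z : 𝒵t, U ((fun g => (g, z)) ⁻¹' {p : 𝒢 × 𝒵t | ρt p.1 p.2 ∈ A})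
      = ENNReal.ofReal (symmPIcdfE U ρt ψ z (t z)) := by
    intro z
    have h1 : (fun g : 𝒢 => (g, z)) ⁻¹' {p : 𝒢 × 𝒵t | ρt p.1 p.2 ∈ A}
        = {g : 𝒢 | (ψ (ρt g z) : EReal) ≤ t z} := by
      ext g
      simp only [Set.mem_preimage, Set.mem_setOf_eq, hAdef, hts,
        thr_inv_s5 U ρt ψ hU hρt_mul hρt_meas hψρ α g z]
    rw [h1, ← ENNReal.ofReal_toReal (measure_ne_top U _)]
    rfl
  have h3 : (U.prod μW) {p : 𝒢 × 𝒵t | ρt p.1 p.2 ∈ A}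
      = ∫⁻ z, ENNReal.ofReal (symmPIcdfE U ρt ψ z (t z)) ∂μW := by
    rw [Measure.prod_apply_symm hB]
    exact lintegral_congr hslice
  -- integrability of the bound
  have hjump_int : Integrable (fun z => symmPIjump U ρt ψ z (t z)) μW := by
    refine (integrable_const (1 : ℝ)).mono' hjump_meas.aestronglyMeasurable
      (ae_of_all _ fun z => ?_)
    rw [Real.norm_eq_abs, abs_le]
    exact ⟨by linarith [jump_nonneg U ρt ψ z (t z)], jump_le_one U ρt ψ z (t z)⟩
  have hbound_int : Integrable (fun z => (1 - α) + symmPIjump U ρt ψ z (t z)) μW :=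
    (integrable_const (1 - α)).add hjump_int
  have hbound_nn : 0 ≤ᵐ[μW] fun z => (1 - α) + symmPIjump U ρt ψ z (t z) :=
    ae_of_all _ fun z => by
      simp only [Pi.zero_apply]
      linarith [jump_nonneg U ρt ψ z (t z)]
  have h4 : ∫⁻ z, ENNReal.ofReal (symmPIcdfE U ρt ψ z (t z)) ∂μW
      ≤ ENNReal.ofReal (∫ z, ((1 - α) + symmPIjump U ρt ψ z (t z)) ∂μW) := by
    rw [ofReal_integral_eq_lintegral_ofReal hbound_int hbound_nn]
    exact lintegral_mono fun z =>
      ENNReal.ofReal_le_ofReal (cdfE_thr_le U ρt ψ hα0 hα1 z)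
  have h5 : (P {ω | (ψ (W ω) : EReal) ≤ t (W ω)}).toReal
      ≤ ∫ z, ((1 - α) + symmPIjump U ρt ψ z (t z)) ∂μW := by
    rw [hev, h2, h3]
    have := ENNReal.toReal_mono ENNReal.ofReal_ne_top h4
    calc (∫⁻ z, ENNReal.ofReal (symmPIcdfE U ρt ψ z (t z)) ∂μW).toReal
        ≤ (ENNReal.ofReal (∫ z, ((1 - α) + symmPIjump U ρt ψ z (t z)) ∂μW)).toReal := this
      _ ≤ ∫ z, ((1 - α) + symmPIjump U ρt ψ z (t z)) ∂μW := by
          rw [ENNReal.toReal_ofReal (integral_nonneg_of_ae hbound_nn)]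
  have h6 : ∫ z, ((1 - α) + symmPIjump U ρt ψ z (t z)) ∂μW
      = (1 - α) + ∫ ω, symmPIjump U ρt ψ (W ω) (t (W ω)) ∂P := by
    rw [integral_add (integrable_const _) hjump_int, integral_const]
    simp only [measure_univ, ENNReal.toReal_one, one_smul, probReal_univ]
    congr 1
    rw [hμW, integral_map hWm.aemeasurable hjump_meas.aestronglyMeasurable]
  calc (P {ω | (ψ (W ω) : EReal) ≤ t (W ω)}).toReal
      ≤ ∫ z, ((1 - α) + symmPIjump U ρt ψ z (t z)) ∂μW := h5
    _ = (1 - α) + ∫ ω, symmPIjump U ρt ψ (W ω) (t (W ω)) ∂P := h6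
    _ = 1 - α + ∫ ω, symmPIjump U ρt ψ (V (Zv ω)) (symmPIthr U ρt ψ α (V (Zv ω))) ∂P := by
        rw [sub_eq_add_neg] <;> rfl
end

section
/- (Exact coverage of randomized SymmPI.) Let α ∈ (0,1]. Assume Z is 𝒢-distributionally invariant (ρ(G)Z =_d Z) and V : 𝒵 → 𝒵̃ is 𝒢-distributionally equivariant (V(ρ(G)Z) =_d ρ̃(G)V(Z)). For z̃ ∈ 𝒵̃ define Δ_{z̃} := 0 if F'_{z̃}(t_{z̃}) = 0 and Δ_{z̃} := (1 − α − F⁻_{z̃}(t_{z̃}))/F'_{z̃}(t_{z̃}) otherwise, and let U' ~ Unif[0,1] be independent of Z. Then P( ψ(V(Z)) < t_{V(Z)} or ( ψ(V(Z)) = t_{V(Z)} and U' < Δ_{V(Z)} ) ) = 1 − α. -/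
open MeasureTheory ProbabilityTheory

/-- The randomization probability `Δ_{z̃}`: `0` if `F'_{z̃}(t_{z̃}) = 0`, and
`(1 − α − F⁻_{z̃}(t_{z̃}))/F'_{z̃}(t_{z̃})` otherwise. -/
noncomputable def symmPIDelta {𝒢 𝒵t : Type*} [MeasurableSpace 𝒢] (U : Measure 𝒢)
    (ρt : 𝒢 → 𝒵t → 𝒵t) (ψ : 𝒵t → ℝ) (α : ℝ) (z : 𝒵t) : ℝ :=
  if symmPIjump U ρt ψ z (symmPIthr U ρt ψ α z) = 0 then 0
  else (1 - α - symmPIcdfLeft U ρt ψ z (symmPIthr U ρt ψ α z)) /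
    symmPIjump U ρt ψ z (symmPIthr U ρt ψ α z)


open MeasureTheory ProbabilityTheory
open scoped ENNReal
set_option linter.unusedSectionVars false

section aux
variable {𝒢 : Type*} [MeasurableSpace 𝒢]
  [Group 𝒢] [TopologicalSpace 𝒢] [IsTopologicalGroup 𝒢] [BorelSpace 𝒢]
  (U : Measure 𝒢) [IsProbabilityMeasure U]

lemma sp_right_inv_map (hU : ∀ g : 𝒢, Measure.map (fun h => g * h) U = U) (g : 𝒢) :
    (U.map Inv.inv).map (fun h => h * g) = U.map Inv.inv := by
  have hinv : Measurable (Inv.inv : 𝒢 → 𝒢) := measurable_inv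
  have hcomp : (fun h : 𝒢 => h * g) ∘ Inv.inv = Inv.inv ∘ (fun h => g⁻¹ * h) := by
    funext h; simp
  rw [Measure.map_map (measurable_mul_const g) hinv, hcomp,
    ← Measure.map_map hinv (measurable_const_mul g⁻¹), hU g⁻¹]

lemma sp_meas_eq (hU : ∀ g : 𝒢, Measure.map (fun h => g * h) U = U)
    (A : Set 𝒢) (hA : MeasurableSet A)
    (hB : MeasurableSet {p : 𝒢 × 𝒢 | p.1 * p.2 ∈ A}) :
    U A = (U.map Inv.inv) A := by
  set ν := U.map Inv.inv with hν_def
  have hinv : Measurable (Inv.inv : 𝒢 → 𝒢) := measurable_inv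
  have hν : IsProbabilityMeasure ν := Measure.isProbabilityMeasure_map hinv.aemeasurable
  set F : 𝒢 → ℝ≥0∞ := A.indicator (fun _ => 1) with hF_def
  have hF : Measurable F := (measurable_const.indicator hA)
  have hF2 : Measurable fun p : 𝒢 × 𝒢 => F (p.1 * p.2) := by
    have : (fun p : 𝒢 × 𝒢 => F (p.1 * p.2))
        = {p : 𝒢 × 𝒢 | p.1 * p.2 ∈ A}.indicator (fun _ => 1) := by
      funext p
      rfl
    rw [this]
    exact measurable_const.indicator hB
  have h1 : ∀ h : 𝒢, ∫⁻ k, F (h * k) ∂U = ∫⁻ k, F k ∂U := by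
    intro h
    conv_rhs => rw [← hU h]
    rw [lintegral_map hF (measurable_const_mul h)]
  have h2 : ∀ k : 𝒢, ∫⁻ h, F (h * k) ∂ν = ∫⁻ h, F h ∂ν := by
    intro k
    conv_rhs => rw [hν_def, ← sp_right_inv_map U hU k]
    rw [lintegral_map hF (measurable_mul_const k)]
  have key : ∫⁻ h, F h ∂U = ∫⁻ h, F h ∂ν := by
    calc ∫⁻ h, F h ∂U = ∫⁻ h, ∫⁻ k, F (h * k) ∂U ∂ν := by
          simp only [h1]; simp
      _ = ∫⁻ k, ∫⁻ h, F (h * k) ∂ν ∂U := lintegral_lintegral_swap hF2.aemeasurable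
      _ = ∫⁻ k, ∫⁻ h, F h ∂ν ∂U := by simp only [h2]
      _ = ∫⁻ h, F h ∂ν := by simp
  simpa only [hF_def, lintegral_indicator_const hA, one_mul] using key

lemma sp_key_inv {𝒵t : Type*} [MeasurableSpace 𝒵t]
    (hU : ∀ g : 𝒢, Measure.map (fun h => g * h) U = U)
    (ρt : 𝒢 → 𝒵t → 𝒵t)
    (hρt_meas : Measurable (fun p : 𝒢 × 𝒵t => ρt p.1 p.2))
    (hρt_mul : ∀ g g' : 𝒢, ρt (g * g') = ρt g ∘ ρt g')
    (ψ : 𝒵t → ℝ)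
    (hψρ : Measurable (fun p : 𝒢 × 𝒵t => ψ (ρt p.1 p.2)))
    (z : 𝒵t) (g₀ : 𝒢) (S : Set ℝ) (hS : MeasurableSet S) :
    U {h | ψ (ρt (h * g₀) z) ∈ S} = U {h | ψ (ρt h z) ∈ S} := by
  have hφ : ∀ w : 𝒵t, Measurable fun g => ψ (ρt g w) := fun w =>
    hψρ.comp (measurable_id.prodMk measurable_const)
  set A : Set 𝒢 := {h | ψ (ρt h z) ∈ S} with hA_def
  have hA : MeasurableSet A := (hφ z) hS
  have hjoint : ∀ c : 𝒢, Measurable fun p : 𝒢 × 𝒢 => ψ (ρt (p.1 * p.2 * c) z) := by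
    intro c
    have : (fun p : 𝒢 × 𝒢 => ψ (ρt (p.1 * p.2 * c) z))
        = (fun q : 𝒢 × 𝒵t => ψ (ρt q.1 q.2)) ∘ (fun p : 𝒢 × 𝒢 => (p.1, ρt (p.2 * c) z)) := by
      funext p
      simp only [Function.comp_apply]
      rw [mul_assoc, hρt_mul p.1 (p.2 * c)]
      rfl
    rw [this]
    exact hψρ.comp (measurable_fst.prodMk
      (hρt_meas.comp ((measurable_snd.mul_const c).prodMk measurable_const)))
  have hB : ∀ c : 𝒢, MeasurableSet {p : 𝒢 × 𝒢 | ψ (ρt (p.1 * p.2 * c) z) ∈ S} :=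
    fun c => (hjoint c) hS
  set Ag : Set 𝒢 := {h | ψ (ρt (h * g₀) z) ∈ S} with hAg_def
  have hAg : MeasurableSet Ag := by
    have : Measurable fun h : 𝒢 => ψ (ρt (h * g₀) z) :=
      (hφ z).comp (measurable_mul_const g₀)
    exact this hS
  have e1 : U Ag = (U.map Inv.inv) Ag := by
    apply sp_meas_eq U hU Ag hAg
    have : {p : 𝒢 × 𝒢 | p.1 * p.2 ∈ Ag} = {p : 𝒢 × 𝒢 | ψ (ρt (p.1 * p.2 * g₀) z) ∈ S} := rfl
    rw [this]; exact hB g₀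
  have e2 : (U.map Inv.inv) Ag = (U.map Inv.inv) A := by
    have : Ag = (fun h => h * g₀) ⁻¹' A := rfl
    rw [this, ← Measure.map_apply (measurable_mul_const g₀) hA, sp_right_inv_map U hU g₀]
  have e3 : (U.map Inv.inv) A = U A := by
    symm
    apply sp_meas_eq U hU A hA
    have : {p : 𝒢 × 𝒢 | p.1 * p.2 ∈ A} = {p : 𝒢 × 𝒢 | ψ (ρt (p.1 * p.2 * 1) z) ∈ S} := by
      simp only [mul_one]; rfl
    rw [this]; exact hB 1
  rw [e1, e2, e3]



variable {𝒵t : Type*} [MeasurableSpace 𝒵t]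
  (ρt : 𝒢 → 𝒵t → 𝒵t) (ψ : 𝒵t → ℝ)

lemma sp_cdf_inv (hU : ∀ g : 𝒢, Measure.map (fun h => g * h) U = U)
    (hρt_meas : Measurable (fun p : 𝒢 × 𝒵t => ρt p.1 p.2))
    (hρt_mul : ∀ g g' : 𝒢, ρt (g * g') = ρt g ∘ ρt g')
    (hψρ : Measurable (fun p : 𝒢 × 𝒵t => ψ (ρt p.1 p.2)))
    (g₀ : 𝒢) (z : 𝒵t) (x : ℝ) :
    symmPIcdf U ρt ψ (ρt g₀ z) x = symmPIcdf U ρt ψ z x := by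
  unfold symmPIcdf
  congr 1
  have hset : {g : 𝒢 | ψ (ρt g (ρt g₀ z)) ≤ x} = {h : 𝒢 | ψ (ρt (h * g₀) z) ∈ Set.Iic x} := by
    ext g
    simp only [Set.mem_setOf_eq, Set.mem_Iic, hρt_mul g g₀, Function.comp_apply]
  rw [hset, sp_key_inv U hU ρt hρt_meas hρt_mul ψ hψρ z g₀ (Set.Iic x) measurableSet_Iic]
  rfl

lemma sp_cdfE_inv (hU : ∀ g : 𝒢, Measure.map (fun h => g * h) U = U)
    (hρt_meas : Measurable (fun p : 𝒢 × 𝒵t => ρt p.1 p.2))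
    (hρt_mul : ∀ g g' : 𝒢, ρt (g * g') = ρt g ∘ ρt g')
    (hψρ : Measurable (fun p : 𝒢 × 𝒵t => ψ (ρt p.1 p.2)))
    (g₀ : 𝒢) (z : 𝒵t) (t : EReal) :
    symmPIcdfE U ρt ψ (ρt g₀ z) t = symmPIcdfE U ρt ψ z t := by
  unfold symmPIcdfE
  congr 1
  have hS : MeasurableSet {r : ℝ | (r : EReal) ≤ t} :=
    measurable_coe_real_ereal measurableSet_Iic
  have hset : {g : 𝒢 | (ψ (ρt g (ρt g₀ z)) : EReal) ≤ t}
      = {h : 𝒢 | ψ (ρt (h * g₀) z) ∈ {r : ℝ | (r : EReal) ≤ t}} := by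
    ext g
    simp only [Set.mem_setOf_eq, hρt_mul g g₀, Function.comp_apply]
  rw [hset, sp_key_inv U hU ρt hρt_meas hρt_mul ψ hψρ z g₀ _ hS]
  rfl

lemma sp_thr_inv (hU : ∀ g : 𝒢, Measure.map (fun h => g * h) U = U)
    (hρt_meas : Measurable (fun p : 𝒢 × 𝒵t => ρt p.1 p.2))
    (hρt_mul : ∀ g g' : 𝒢, ρt (g * g') = ρt g ∘ ρt g')
    (hψρ : Measurable (fun p : 𝒢 × 𝒵t => ψ (ρt p.1 p.2)))
    (α : ℝ) (g₀ : 𝒢) (z : 𝒵t) :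
    symmPIthr U ρt ψ α (ρt g₀ z) = symmPIthr U ρt ψ α z := by
  unfold symmPIthr
  have hset : {x : ℝ | 1 - α ≤ symmPIcdf U ρt ψ (ρt g₀ z) x}
      = {x : ℝ | 1 - α ≤ symmPIcdf U ρt ψ z x} := by
    ext x
    simp only [Set.mem_setOf_eq, sp_cdf_inv U ρt ψ hU hρt_meas hρt_mul hψρ g₀ z x]
  rw [hset]

lemma sp_left_inv (hU : ∀ g : 𝒢, Measure.map (fun h => g * h) U = U)
    (hρt_meas : Measurable (fun p : 𝒢 × 𝒵t => ρt p.1 p.2))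
    (hρt_mul : ∀ g g' : 𝒢, ρt (g * g') = ρt g ∘ ρt g')
    (hψρ : Measurable (fun p : 𝒢 × 𝒵t => ψ (ρt p.1 p.2)))
    (g₀ : 𝒢) (z : 𝒵t) (t : EReal) :
    symmPIcdfLeft U ρt ψ (ρt g₀ z) t = symmPIcdfLeft U ρt ψ z t := by
  unfold symmPIcdfLeft
  congr 1
  have : symmPIcdfE U ρt ψ (ρt g₀ z) = symmPIcdfE U ρt ψ z := by
    funext s
    exact sp_cdfE_inv U ρt ψ hU hρt_meas hρt_mul hψρ g₀ z s
  rw [this]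

lemma sp_jump_inv (hU : ∀ g : 𝒢, Measure.map (fun h => g * h) U = U)
    (hρt_meas : Measurable (fun p : 𝒢 × 𝒵t => ρt p.1 p.2))
    (hρt_mul : ∀ g g' : 𝒢, ρt (g * g') = ρt g ∘ ρt g')
    (hψρ : Measurable (fun p : 𝒢 × 𝒵t => ψ (ρt p.1 p.2)))
    (g₀ : 𝒢) (z : 𝒵t) (t : EReal) :
    symmPIjump U ρt ψ (ρt g₀ z) t = symmPIjump U ρt ψ z t := by
  unfold symmPIjump
  rw [sp_cdfE_inv U ρt ψ hU hρt_meas hρt_mul hψρ g₀ z t,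
    sp_left_inv U ρt ψ hU hρt_meas hρt_mul hψρ g₀ z t]

lemma sp_Delta_inv (hU : ∀ g : 𝒢, Measure.map (fun h => g * h) U = U)
    (hρt_meas : Measurable (fun p : 𝒢 × 𝒵t => ρt p.1 p.2))
    (hρt_mul : ∀ g g' : 𝒢, ρt (g * g') = ρt g ∘ ρt g')
    (hψρ : Measurable (fun p : 𝒢 × 𝒵t => ψ (ρt p.1 p.2)))
    (α : ℝ) (g₀ : 𝒢) (z : 𝒵t) :
    symmPIDelta U ρt ψ α (ρt g₀ z) = symmPIDelta U ρt ψ α z := by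
  unfold symmPIDelta
  rw [sp_thr_inv U ρt ψ hU hρt_meas hρt_mul hψρ α g₀ z,
    sp_jump_inv U ρt ψ hU hρt_meas hρt_mul hψρ g₀ z _,
    sp_left_inv U ρt ψ hU hρt_meas hρt_mul hψρ g₀ z _]

lemma sp_quantile (hU : ∀ g : 𝒢, Measure.map (fun h => g * h) U = U)
    (hρt_meas : Measurable (fun p : 𝒢 × 𝒵t => ρt p.1 p.2))
    (hρt_mul : ∀ g g' : 𝒢, ρt (g * g') = ρt g ∘ ρt g')
    (hψρ : Measurable (fun p : 𝒢 × 𝒵t => ψ (ρt p.1 p.2)))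
    (α : ℝ) (hα0 : 0 < α) (hα1 : α < 1) (z : 𝒵t) :
    ∃ tr : ℝ, symmPIthr U ρt ψ α z = (tr : EReal) ∧
      (U {g | ψ (ρt g z) < tr}).toReal = symmPIcdfLeft U ρt ψ z (tr : EReal) ∧
      (U {g | ψ (ρt g z) = tr}).toReal = symmPIjump U ρt ψ z (tr : EReal) ∧
      0 ≤ symmPIDelta U ρt ψ α z ∧ symmPIDelta U ρt ψ α z ≤ 1 ∧
      symmPIcdfLeft U ρt ψ z (tr : EReal) +
        symmPIDelta U ρt ψ α z * symmPIjump U ρt ψ z (tr : EReal) = 1 - α := by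
  have hφ : Measurable fun g => ψ (ρt g z) :=
    hψρ.comp (measurable_id.prodMk measurable_const)
  set A : ℝ → Set 𝒢 := fun x => {g | ψ (ρt g z) ≤ x} with hA_def
  have hA : ∀ x, MeasurableSet (A x) := fun x => hφ measurableSet_Iic
  have hne : ∀ s : Set 𝒢, U s ≠ ⊤ := fun s => measure_ne_top U s
  set F : ℝ → ℝ := fun x => symmPIcdf U ρt ψ z x with hF_def
  have hFA : ∀ x, F x = (U (A x)).toReal := fun x => rfl
  have hFmono : Monotone F := by
    intro x y hxy
    exact ENNReal.toReal_mono (hne _) (measure_mono (fun g hg => le_trans hg hxy))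
  -- existence of an upper point
  have hcover : ⋃ n : ℕ, A (n : ℝ) = Set.univ := by
    ext g
    simp only [Set.mem_iUnion, Set.mem_univ, iff_true, hA_def, Set.mem_setOf_eq]
    exact exists_nat_ge _
  have hdirU : Directed (· ⊆ ·) (fun n : ℕ => A (n : ℝ)) := by
    have hm : Monotone (fun n : ℕ => A (n : ℝ)) := by
      intro m n hmn g hg
      simp only [hA_def, Set.mem_setOf_eq] at hg ⊢
      exact le_trans hg (by exact_mod_cast hmn)
    exact hm.directed_le
  have hsup1 : (⨆ n : ℕ, U (A (n : ℝ))) = 1 := by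
    rw [← hdirU.measure_iUnion, hcover, measure_univ]
  obtain ⟨n₁, hn₁⟩ : ∃ n : ℕ, ENNReal.ofReal (1 - α) < U (A (n : ℝ)) := by
    rw [← lt_iSup_iff, hsup1]
    exact ENNReal.ofReal_lt_one.mpr (by linarith)
  have hx₁ : 1 - α ≤ F (n₁ : ℝ) := by
    rw [hFA]
    exact (ENNReal.ofReal_le_iff_le_toReal (hne _)).mp hn₁.le
  -- existence of a lower point
  have hempty : ⋂ n : ℕ, A (-(n : ℝ)) = ∅ := by
    ext g
    simp only [Set.mem_iInter, Set.mem_empty_iff_false, iff_false, not_forall, hA_def,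
      Set.mem_setOf_eq]
    obtain ⟨n, hn⟩ := exists_nat_gt (-(ψ (ρt g z)))
    exact ⟨n, by push_neg; linarith⟩
  have hdirD : Directed (· ⊇ ·) (fun n : ℕ => A (-(n : ℝ))) := by
    intro m n
    refine ⟨max m n, fun g hg => ?_, fun g hg => ?_⟩ <;>
      · simp only [hA_def, Set.mem_setOf_eq] at hg ⊢
        refine le_trans hg (neg_le_neg ?_)
        first
        | exact_mod_cast le_max_left m n
        | exact_mod_cast le_max_right m n
  have hinf0 : (⨅ n : ℕ, U (A (-(n : ℝ)))) = 0 := by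
    rw [← Directed.measure_iInter (fun n => (hA _).nullMeasurableSet) hdirD ⟨0, hne _⟩,
      hempty, measure_empty]
  obtain ⟨n₀, hn₀⟩ : ∃ n : ℕ, U (A (-(n : ℝ))) < ENNReal.ofReal (1 - α) := by
    rw [← iInf_lt_iff, hinf0]
    exact ENNReal.ofReal_pos.mpr (by linarith)
  have hx₀ : F (-(n₀ : ℝ)) < 1 - α := by
    rw [hFA]
    exact (ENNReal.lt_ofReal_iff_toReal_lt (hne _)).mp hn₀
  -- threshold is a real number
  set Sset : Set ℝ := {x : ℝ | 1 - α ≤ F x} with hSset_def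
  have hthr_def : symmPIthr U ρt ψ α z = sInf ((fun x : ℝ => (x : EReal)) '' Sset) := rfl
  have hmem₁ : ((n₁ : ℝ) : EReal) ∈ (fun x : ℝ => (x : EReal)) '' Sset :=
    ⟨(n₁ : ℝ), hx₁, rfl⟩
  have h_ne_top : symmPIthr U ρt ψ α z ≠ ⊤ := by
    rw [hthr_def]
    exact ne_top_of_le_ne_top (EReal.coe_ne_top _) (sInf_le hmem₁)
  have hlb : ∀ b ∈ (fun x : ℝ => (x : EReal)) '' Sset, ((-(n₀ : ℝ) : ℝ) : EReal) ≤ b := by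
    rintro b ⟨x, hx, rfl⟩
    rw [EReal.coe_le_coe_iff]
    by_contra hcon
    push_neg at hcon
    exact absurd hx (not_le.mpr (lt_of_le_of_lt (hFmono hcon.le) hx₀))
  have h_ne_bot : symmPIthr U ρt ψ α z ≠ ⊥ := by
    intro hbot
    have := le_sInf hlb
    rw [← hthr_def, hbot, le_bot_iff] at this
    exact EReal.coe_ne_bot _ this
  set tr : ℝ := (symmPIthr U ρt ψ α z).toReal with htr_def
  have htr : symmPIthr U ρt ψ α z = (tr : EReal) := (EReal.coe_toReal h_ne_top h_ne_bot).symm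
  -- F s < 1 - α for s < tr
  have hq3 : ∀ s : ℝ, s < tr → F s < 1 - α := by
    intro s hs
    by_contra hcon
    push_neg at hcon
    have : symmPIthr U ρt ψ α z ≤ (s : EReal) := by
      rw [hthr_def]
      exact sInf_le ⟨s, hcon, rfl⟩
    rw [htr, EReal.coe_le_coe_iff] at this
    linarith
  -- 1 - α ≤ F tr (right continuity)
  have hε : ∀ ε : ℝ, 0 < ε → 1 - α ≤ F (tr + ε) := by
    intro ε hεpos
    by_contra hcon
    push_neg at hcon
    have hub : ∀ b ∈ (fun x : ℝ => (x : EReal)) '' Sset, ((tr + ε : ℝ) : EReal) ≤ b := by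
      rintro b ⟨x, hx, rfl⟩
      rw [EReal.coe_le_coe_iff]
      by_contra hcc
      push_neg at hcc
      exact absurd hx (not_le.mpr (lt_of_le_of_lt (hFmono hcc.le) hcon))
    have := le_sInf hub
    rw [← hthr_def, htr, EReal.coe_le_coe_iff] at this
    linarith
  have hAtr : A tr = ⋂ n : ℕ, A (tr + 1 / ((n : ℝ) + 1)) := by
    ext g
    simp only [Set.mem_iInter, hA_def, Set.mem_setOf_eq]
    constructor
    · intro h n
      have : (0 : ℝ) < 1 / ((n : ℝ) + 1) := by positivity
      linarith
    · intro h
      by_contra hcon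
      push_neg at hcon
      obtain ⟨n, hn⟩ := exists_nat_one_div_lt (sub_pos.mpr hcon)
      have := h n
      linarith
  have hdir3 : Directed (· ⊇ ·) (fun n : ℕ => A (tr + 1 / ((n : ℝ) + 1))) := by
    have hanti : Antitone (fun n : ℕ => A (tr + 1 / ((n : ℝ) + 1))) := by
      intro m n hmn g hg
      simp only [hA_def, Set.mem_setOf_eq] at hg ⊢
      have h1 : 1 / ((n : ℝ) + 1) ≤ 1 / ((m : ℝ) + 1) := by
        apply one_div_le_one_div_of_le (by positivity)
        exact_mod_cast add_le_add_left (Nat.cast_le.mpr hmn) 1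
      linarith
    exact hanti.directed_ge
  have hq2 : 1 - α ≤ F tr := by
    have hUAtr : U (A tr) = ⨅ n : ℕ, U (A (tr + 1 / ((n : ℝ) + 1))) := by
      rw [hAtr]
      exact Directed.measure_iInter (fun n => (hA _).nullMeasurableSet) hdir3 ⟨0, hne _⟩
    have hge : ENNReal.ofReal (1 - α) ≤ U (A tr) := by
      rw [hUAtr]
      refine le_iInf fun n => ?_
      rw [ENNReal.ofReal_le_iff_le_toReal (hne _)]
      exact hε _ (by positivity)
    rw [hFA]
    exact (ENNReal.ofReal_le_iff_le_toReal (hne _)).mp hge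
  -- cdfE at real coordinates
  have hcdfE_coe : ∀ s : ℝ, symmPIcdfE U ρt ψ z (s : EReal) = F s := by
    intro s
    unfold symmPIcdfE
    rw [hFA]
    have hset : {g : 𝒢 | (ψ (ρt g z) : EReal) ≤ (s : EReal)} = A s := by
      ext g
      simp only [Set.mem_setOf_eq, EReal.coe_le_coe_iff, hA_def]
    rw [hset]
  have hcdfE_bot : symmPIcdfE U ρt ψ z ⊥ = 0 := by
    unfold symmPIcdfE
    have : {g : 𝒢 | (ψ (ρt g z) : EReal) ≤ ⊥} = ∅ := by
      ext g
      simp only [Set.mem_setOf_eq, le_bot_iff, Set.mem_empty_iff_false, iff_false]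
      exact EReal.coe_ne_bot _
    rw [this, measure_empty, ENNReal.toReal_zero]
  -- identification of the left limit
  set Slt : Set 𝒢 := {g | ψ (ρt g z) < tr} with hSlt_def
  have hSltm : MeasurableSet Slt := hφ measurableSet_Iio
  set img : Set ℝ := symmPIcdfE U ρt ψ z '' Set.Iio (tr : EReal) with himg_def
  have himg_ne : img.Nonempty := ⟨_, ⟨⊥, EReal.bot_lt_coe tr, rfl⟩⟩
  have h0mem : (0 : ℝ) ∈ img := ⟨⊥, EReal.bot_lt_coe tr, hcdfE_bot⟩
  have helem_le_L : ∀ b ∈ img, b ≤ (U Slt).toReal := by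
    rintro b ⟨s, hs, rfl⟩
    induction s using EReal.rec with
    | bot => rw [hcdfE_bot]; exact ENNReal.toReal_nonneg
    | coe s' =>
      rw [hcdfE_coe, hFA]
      refine ENNReal.toReal_mono (hne _) (measure_mono fun g hg => ?_)
      rw [Set.mem_Iio, EReal.coe_lt_coe_iff] at hs
      exact lt_of_le_of_lt hg hs
    | top => exact absurd hs (by simp)
  have hbdd : BddAbove img := ⟨(U Slt).toReal, helem_le_L⟩
  have hq7 : symmPIcdfLeft U ρt ψ z (tr : EReal) = (U Slt).toReal := by
    refine le_antisymm (csSup_le himg_ne helem_le_L) ?_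
    have hSlt_cover : Slt = ⋃ n : ℕ, A (tr - 1 / ((n : ℝ) + 1)) := by
      ext g
      simp only [Set.mem_iUnion, hA_def, Set.mem_setOf_eq, hSlt_def]
      constructor
      · intro h
        obtain ⟨n, hn⟩ := exists_nat_one_div_lt (sub_pos.mpr h)
        exact ⟨n, by linarith⟩
      · rintro ⟨n, hn⟩
        have : (0 : ℝ) < 1 / ((n : ℝ) + 1) := by positivity
        linarith
    have hdir4 : Directed (· ⊆ ·) (fun n : ℕ => A (tr - 1 / ((n : ℝ) + 1))) := by
      have hm : Monotone (fun n : ℕ => A (tr - 1 / ((n : ℝ) + 1))) := by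
        intro m n hmn g hg
        simp only [hA_def, Set.mem_setOf_eq] at hg ⊢
        have h1 : 1 / ((n : ℝ) + 1) ≤ 1 / ((m : ℝ) + 1) := by
          apply one_div_le_one_div_of_le (by positivity)
          exact_mod_cast add_le_add_left (Nat.cast_le.mpr hmn) 1
        linarith
      exact hm.directed_le
    have hUSlt : U Slt = ⨆ n : ℕ, U (A (tr - 1 / ((n : ℝ) + 1))) := by
      rw [hSlt_cover]
      exact hdir4.measure_iUnion
    have hsup_nonneg : 0 ≤ sSup img := le_csSup hbdd h0mem
    have hle : U Slt ≤ ENNReal.ofReal (sSup img) := by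
      rw [hUSlt]
      refine iSup_le fun n => ?_
      have hmem : (U (A (tr - 1 / ((n : ℝ) + 1)))).toReal ∈ img := by
        refine ⟨((tr - 1 / ((n : ℝ) + 1) : ℝ) : EReal), ?_, ?_⟩
        · rw [Set.mem_Iio, EReal.coe_lt_coe_iff]
          have : (0 : ℝ) < 1 / ((n : ℝ) + 1) := by positivity
          linarith
        · rw [hcdfE_coe, hFA]
      calc U (A (tr - 1 / ((n : ℝ) + 1)))
          = ENNReal.ofReal ((U (A (tr - 1 / ((n : ℝ) + 1)))).toReal) :=
            (ENNReal.ofReal_toReal (hne _)).symm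
        _ ≤ ENNReal.ofReal (sSup img) := ENNReal.ofReal_le_ofReal (le_csSup hbdd hmem)
    calc (U Slt).toReal ≤ (ENNReal.ofReal (sSup img)).toReal :=
          ENNReal.toReal_mono ENNReal.ofReal_ne_top hle
      _ = sSup img := ENNReal.toReal_ofReal hsup_nonneg
  -- identification of the jump
  set Seq : Set 𝒢 := {g | ψ (ρt g z) = tr} with hSeq_def
  have hSeqm : MeasurableSet Seq := hφ (measurableSet_singleton tr)
  have hsplit : A tr = Slt ∪ Seq := by
    ext g
    simp only [hA_def, Set.mem_setOf_eq, Set.mem_union, hSlt_def, hSeq_def, le_iff_lt_or_eq]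
  have hdisj : Disjoint Slt Seq := by
    rw [Set.disjoint_left]
    intro g hg1 hg2
    simp only [hSlt_def, Set.mem_setOf_eq] at hg1
    simp only [hSeq_def, Set.mem_setOf_eq] at hg2
    exact absurd hg2 (ne_of_lt hg1)
  have hUsplit : U (A tr) = U Slt + U Seq := by
    rw [hsplit]
    exact measure_union hdisj hSeqm
  have hFtr_split : F tr = (U Slt).toReal + (U Seq).toReal := by
    rw [hFA, hUsplit, ENNReal.toReal_add (hne _) (hne _)]
  have hq8 : symmPIjump U ρt ψ z (tr : EReal) = (U Seq).toReal := by
    unfold symmPIjump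
    rw [hcdfE_coe]
    have : symmPIcdfLeft U ρt ψ z (tr : EReal) = (U Slt).toReal := hq7
    rw [this, hFtr_split]
    ring
  -- left limit is at most 1 - α
  have hq9 : symmPIcdfLeft U ρt ψ z (tr : EReal) ≤ 1 - α := by
    refine csSup_le himg_ne ?_
    rintro b ⟨s, hs, rfl⟩
    induction s using EReal.rec with
    | bot => rw [hcdfE_bot]; linarith
    | coe s' =>
      rw [hcdfE_coe]
      rw [Set.mem_Iio, EReal.coe_lt_coe_iff] at hs
      exact (hq3 s' hs).le
    | top => exact absurd hs (by simp)
  -- assemble Delta facts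
  have hL0 : 0 ≤ symmPIcdfLeft U ρt ψ z (tr : EReal) := by
    rw [hq7]; exact ENNReal.toReal_nonneg
  have hJ0 : 0 ≤ symmPIjump U ρt ψ z (tr : EReal) := by
    rw [hq8]; exact ENNReal.toReal_nonneg
  have hLJ : symmPIcdfLeft U ρt ψ z (tr : EReal) + symmPIjump U ρt ψ z (tr : EReal) = F tr := by
    rw [hq7, hq8, hFtr_split]
  have hDelta : symmPIDelta U ρt ψ α z = if symmPIjump U ρt ψ z (tr : EReal) = 0 then 0
      else (1 - α - symmPIcdfLeft U ρt ψ z (tr : EReal)) / symmPIjump U ρt ψ z (tr : EReal) := by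
    unfold symmPIDelta
    rw [htr]
  refine ⟨tr, htr, hq7.symm, hq8.symm, ?_, ?_, ?_⟩
  · rw [hDelta]
    split_ifs with hJ
    · exact le_refl 0
    · exact div_nonneg (by linarith [hq9]) hJ0
  · rw [hDelta]
    split_ifs with hJ
    · linarith
    · rw [div_le_one (lt_of_le_of_ne hJ0 (Ne.symm hJ))]
      linarith [hq2, hLJ]
  · rw [hDelta]
    split_ifs with hJ
    · rw [hJ] at hLJ
      have hLeq : symmPIcdfLeft U ρt ψ z (tr : EReal) = 1 - α := by
        linarith [hq2, hq9, hLJ]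
      rw [hLeq]
      ring
    · rw [div_mul_cancel₀ _ hJ]
      ring

end aux

/-- exact coverage of randomized SymmPI: with `α ∈ (0,1]`, distributional
invariance of `Z`, distributional equivariance of `V`, and `U' ~ Unif[0,1]` independent
of `Z`, `P(ψ(V(Z)) < t_{V(Z)} or (ψ(V(Z)) = t_{V(Z)} and U' < Δ_{V(Z)})) = 1 − α`. -/
theorem stmt6
    {Ω 𝒢 𝒵 𝒵t : Type*} [MeasurableSpace Ω] [MeasurableSpace 𝒢] [MeasurableSpace 𝒵]
    [MeasurableSpace 𝒵t]
    [Group 𝒢] [TopologicalSpace 𝒢] [IsTopologicalGroup 𝒢] [CompactSpace 𝒢] [T2Space 𝒢]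
    [BorelSpace 𝒢]
    (P : Measure Ω) [IsProbabilityMeasure P]
    (U : Measure 𝒢) [IsProbabilityMeasure U]
    (hU : ∀ g : 𝒢, Measure.map (fun h => g * h) U = U)
    (ρ : 𝒢 → 𝒵 → 𝒵)
    (hρ_one : ρ 1 = id)
    (hρ_mul : ∀ g g' : 𝒢, ρ (g * g') = ρ g ∘ ρ g')
    (hρ_meas : Measurable (fun p : 𝒢 × 𝒵 => ρ p.1 p.2))
    (ρt : 𝒢 → 𝒵t → 𝒵t)
    (hρt_one : ρt 1 = id)
    (hρt_mul : ∀ g g' : 𝒢, ρt (g * g') = ρt g ∘ ρt g')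
    (hρt_meas : Measurable (fun p : 𝒢 × 𝒵t => ρt p.1 p.2))
    (V : 𝒵 → 𝒵t) (hV : Measurable V)
    (ψ : 𝒵t → ℝ) (hψ : Measurable ψ)
    (hψρ : Measurable (fun p : 𝒢 × 𝒵t => ψ (ρt p.1 p.2)))
    (α : ℝ) (hα : α ∈ Set.Ioc (0 : ℝ) 1)
    (ht_meas : Measurable (fun z : 𝒵t => symmPIthr U ρt ψ α z))
    (hΔ_meas : Measurable (fun z : 𝒵t => symmPIDelta U ρt ψ α z))
    (Zv : Ω → 𝒵) (Gv : Ω → 𝒢) (hZ : Measurable Zv) (hG : Measurable Gv)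
    (hGlaw : Measure.map Gv P = U)
    (hindep : IndepFun Gv Zv P)
    (hinv : Measure.map (fun ω => ρ (Gv ω) (Zv ω)) P = Measure.map Zv P)
    (hequiv : Measure.map (fun ω => V (ρ (Gv ω) (Zv ω))) P
        = Measure.map (fun ω => ρt (Gv ω) (V (Zv ω))) P)
    (U' : Ω → ℝ) (hU'meas : Measurable U')
    (hU'law : Measure.map U' P = volume.restrict (Set.Icc (0 : ℝ) 1))
    (hU'indep : IndepFun U' Zv P) :
    (P {ω | (ψ (V (Zv ω)) : EReal) < symmPIthr U ρt ψ α (V (Zv ω)) ∨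
        ((ψ (V (Zv ω)) : EReal) = symmPIthr U ρt ψ α (V (Zv ω)) ∧
          U' ω < symmPIDelta U ρt ψ α (V (Zv ω)))}).toReal = 1 - α := by
  have hα0 : 0 < α := hα.1
  have hα1 : α ≤ 1 := hα.2
  classical
  rcases eq_or_lt_of_le hα1 with hα_eq | hα_lt
  · -- α = 1 : the threshold is ⊥ and the event is empty
    have hthr_bot : ∀ w : 𝒵t, symmPIthr U ρt ψ α w = ⊥ := by
      intro w
      unfold symmPIthr
      rw [sInf_eq_bot]
      intro b hb
      induction b using EReal.rec with
      | bot => exact absurd hb (lt_irrefl _)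
      | coe r =>
        refine ⟨((r - 1 : ℝ) : EReal), ⟨r - 1, ?_, rfl⟩, ?_⟩
        · simp only [Set.mem_setOf_eq, ← hα_eq, sub_self]
          exact ENNReal.toReal_nonneg
        · exact EReal.coe_lt_coe_iff.mpr (by linarith)
      | top =>
        refine ⟨((0 : ℝ) : EReal), ⟨0, ?_, rfl⟩, EReal.coe_lt_top 0⟩
        simp only [Set.mem_setOf_eq, ← hα_eq, sub_self]
        exact ENNReal.toReal_nonneg
    have hset : {ω | (ψ (V (Zv ω)) : EReal) < symmPIthr U ρt ψ α (V (Zv ω)) ∨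
        ((ψ (V (Zv ω)) : EReal) = symmPIthr U ρt ψ α (V (Zv ω)) ∧
          U' ω < symmPIDelta U ρt ψ α (V (Zv ω)))} = ∅ := by
      ext ω
      simp only [Set.mem_setOf_eq, Set.mem_empty_iff_false, iff_false]
      rintro (hlt | ⟨heq, _⟩)
      · rw [hthr_bot] at hlt
        exact not_lt_bot hlt
      · rw [hthr_bot] at heq
        exact EReal.coe_ne_bot _ heq
    rw [hset, measure_empty, ENNReal.toReal_zero, ← hα_eq]
    ring
  · -- α < 1 : the main computation
    have hcoeψ : Measurable fun w : 𝒵t => (ψ w : EReal) := measurable_coe_real_ereal.comp hψ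
    have hVZ : Measurable fun ω => V (Zv ω) := hV.comp hZ
    set μ : Measure 𝒵t := Measure.map (fun ω => V (Zv ω)) P with hμ_def
    have hμprob : IsProbabilityMeasure μ := Measure.isProbabilityMeasure_map hVZ.aemeasurable
    have hquant := fun w : 𝒵t =>
      sp_quantile U ρt ψ hU hρt_meas hρt_mul hψρ α hα0 hα_lt w
    set hfun : 𝒵t → ℝ≥0∞ := fun w =>
      (if (ψ w : EReal) < symmPIthr U ρt ψ α w then (1 : ℝ≥0∞) else 0) +
      (if (ψ w : EReal) = symmPIthr U ρt ψ α w then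
        ENNReal.ofReal (symmPIDelta U ρt ψ α w) else 0) with hfun_def
    have heqset : MeasurableSet {w : 𝒵t | (ψ w : EReal) = symmPIthr U ρt ψ α w} := by
      have : {w : 𝒵t | (ψ w : EReal) = symmPIthr U ρt ψ α w}
          = {w | (ψ w : EReal) ≤ symmPIthr U ρt ψ α w}
            ∩ {w | symmPIthr U ρt ψ α w ≤ (ψ w : EReal)} := by
        ext w
        simp [le_antisymm_iff, Set.mem_setOf_eq]
      rw [this]
      exact (measurableSet_le hcoeψ ht_meas).inter (measurableSet_le ht_meas hcoeψ)
    have hfun_meas : Measurable hfun := by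
      rw [hfun_def]
      apply Measurable.add
      · exact Measurable.ite (measurableSet_lt hcoeψ ht_meas) measurable_const measurable_const
      · exact Measurable.ite heqset (ENNReal.measurable_ofReal.comp hΔ_meas) measurable_const
    set C : Set (𝒵t × ℝ) := {p | (ψ p.1 : EReal) < symmPIthr U ρt ψ α p.1 ∨
      ((ψ p.1 : EReal) = symmPIthr U ρt ψ α p.1 ∧ p.2 < symmPIDelta U ρt ψ α p.1)} with hC_def
    have hC : MeasurableSet C := by
      rw [hC_def]
      have hm1 : Measurable fun p : 𝒵t × ℝ => (ψ p.1 : EReal) := hcoeψ.comp measurable_fst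
      have hm2 : Measurable fun p : 𝒵t × ℝ => symmPIthr U ρt ψ α p.1 :=
        ht_meas.comp measurable_fst
      have hm3 : Measurable fun p : 𝒵t × ℝ => symmPIDelta U ρt ψ α p.1 :=
        hΔ_meas.comp measurable_fst
      apply MeasurableSet.union
      · exact measurableSet_lt (α := EReal) hm1 hm2
      · exact (measurable_fst heqset).inter (measurableSet_lt measurable_snd hm3)
    have hpre : {ω | (ψ (V (Zv ω)) : EReal) < symmPIthr U ρt ψ α (V (Zv ω)) ∨
        ((ψ (V (Zv ω)) : EReal) = symmPIthr U ρt ψ α (V (Zv ω)) ∧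
          U' ω < symmPIDelta U ρt ψ α (V (Zv ω)))}
        = (fun ω => (V (Zv ω), U' ω)) ⁻¹' C := rfl
    have hjoint : Measure.map (fun ω => (V (Zv ω), U' ω)) P
        = μ.prod (volume.restrict (Set.Icc (0 : ℝ) 1)) := by
      rw [hμ_def, ← hU'law]
      exact (indepFun_iff_map_prod_eq_prod_map_map hVZ.aemeasurable hU'meas.aemeasurable).mp
        ((hU'indep.symm).comp hV measurable_id)
    have hPE : P ((fun ω => (V (Zv ω), U' ω)) ⁻¹' C)
        = ∫⁻ w, (volume.restrict (Set.Icc (0 : ℝ) 1)) (Prod.mk w ⁻¹' C) ∂μ := by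
      rw [← Measure.map_apply (hVZ.prodMk hU'meas) hC, hjoint, Measure.prod_apply hC]
    have hslice : ∀ w, (volume.restrict (Set.Icc (0 : ℝ) 1)) (Prod.mk w ⁻¹' C) = hfun w := by
      intro w
      obtain ⟨tr, htr, hleft, hjump, hΔ0, hΔ1, hid⟩ := hquant w
      by_cases h1 : (ψ w : EReal) < symmPIthr U ρt ψ α w
      · have hne : (ψ w : EReal) ≠ symmPIthr U ρt ψ α w := ne_of_lt h1
        have hsl : Prod.mk w ⁻¹' C = Set.univ := by
          ext u
          simp only [hC_def, Set.mem_preimage, Set.mem_setOf_eq, Set.mem_univ, iff_true]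
          exact Or.inl h1
        rw [hsl]
        simp only [hfun_def]
        rw [if_pos h1, if_neg hne, add_zero, Measure.restrict_apply_univ, Real.volume_Icc]
        norm_num
      · by_cases h2 : (ψ w : EReal) = symmPIthr U ρt ψ α w
        · have hsl : Prod.mk w ⁻¹' C = Set.Iio (symmPIDelta U ρt ψ α w) := by
            ext u
            simp only [hC_def, Set.mem_preimage, Set.mem_setOf_eq, Set.mem_Iio, h1, false_or]
            constructor
            · rintro ⟨_, hu⟩; exact hu
            · intro hu; exact ⟨h2, hu⟩
          rw [hsl, Measure.restrict_apply measurableSet_Iio]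
          have hinter : Set.Iio (symmPIDelta U ρt ψ α w) ∩ Set.Icc (0 : ℝ) 1
              = Set.Ico (0 : ℝ) (symmPIDelta U ρt ψ α w) := by
            ext u
            simp only [Set.mem_inter_iff, Set.mem_Iio, Set.mem_Icc, Set.mem_Ico]
            constructor
            · rintro ⟨hu1, hu2, _⟩; exact ⟨hu2, hu1⟩
            · rintro ⟨hu1, hu2⟩; exact ⟨hu2, hu1, by linarith⟩
          rw [hinter, Real.volume_Ico]
          simp only [hfun_def]
          rw [if_neg h1, if_pos h2, zero_add, sub_zero]
        · have hsl : Prod.mk w ⁻¹' C = ∅ := by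
            ext u
            simp only [hC_def, Set.mem_preimage, Set.mem_setOf_eq, Set.mem_empty_iff_false,
              iff_false]
            rintro (hlt | ⟨heq, _⟩)
            · exact h1 hlt
            · exact h2 heq
          rw [hsl, measure_empty]
          simp only [hfun_def]
          rw [if_neg h1, if_neg h2, add_zero]
    have hGVZ : Measurable fun ω => (Gv ω, V (Zv ω)) := hG.prodMk hVZ
    have hjoint2 : Measure.map (fun ω => (Gv ω, V (Zv ω))) P = U.prod μ := by
      rw [hμ_def, ← hGlaw]
      exact (indepFun_iff_map_prod_eq_prod_map_map hG.aemeasurable hVZ.aemeasurable).mp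
        (hindep.comp measurable_id hV)
    have hμ_inv : μ = Measure.map (fun p : 𝒢 × 𝒵t => ρt p.1 p.2) (U.prod μ) := by
      have e1 : Measure.map (fun ω => V (ρ (Gv ω) (Zv ω))) P = μ := by
        have m1 : Measurable fun ω => ρ (Gv ω) (Zv ω) := hρ_meas.comp (hG.prodMk hZ)
        have hc : (fun ω => V (ρ (Gv ω) (Zv ω))) = V ∘ (fun ω => ρ (Gv ω) (Zv ω)) := rfl
        rw [hc, ← Measure.map_map hV m1, hinv, Measure.map_map hV hZ, hμ_def]
        rfl
      have e2 : Measure.map (fun ω => ρt (Gv ω) (V (Zv ω))) P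
          = Measure.map (fun p : 𝒢 × 𝒵t => ρt p.1 p.2) (U.prod μ) := by
        rw [← hjoint2, Measure.map_map hρt_meas hGVZ]
        rfl
      conv_lhs => rw [← e1]
      rw [hequiv, e2]
    have key : ∀ w : 𝒵t, ∫⁻ g, hfun (ρt g w) ∂U = ENNReal.ofReal (1 - α) := by
      intro w
      obtain ⟨tr, htr, hleft, hjump, hΔ0, hΔ1, hid⟩ := hquant w
      have hφw : Measurable fun g : 𝒢 => ψ (ρt g w) :=
        hψρ.comp (measurable_id.prodMk measurable_const)
      have hmlt : MeasurableSet {g : 𝒢 | ψ (ρt g w) < tr} := hφw measurableSet_Iio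
      have hmeq : MeasurableSet {g : 𝒢 | ψ (ρt g w) = tr} := hφw (measurableSet_singleton tr)
      have hrw : (fun g => hfun (ρt g w)) = fun g =>
          ({g : 𝒢 | ψ (ρt g w) < tr}.indicator (fun _ => (1 : ℝ≥0∞)) g)
          + ({g : 𝒢 | ψ (ρt g w) = tr}.indicator
              (fun _ => ENNReal.ofReal (symmPIDelta U ρt ψ α w)) g) := by
        funext g
        simp only [hfun_def]
        simp only [Set.indicator_apply, Set.mem_setOf_eq,
          sp_thr_inv U ρt ψ hU hρt_meas hρt_mul hψρ α g w,
          sp_Delta_inv U ρt ψ hU hρt_meas hρt_mul hψρ α g w, htr,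
          EReal.coe_lt_coe_iff, EReal.coe_eq_coe_iff]
      rw [hrw, lintegral_add_left (measurable_const.indicator hmlt),
        lintegral_indicator_const hmlt, lintegral_indicator_const hmeq, one_mul]
      have hL0 : 0 ≤ symmPIcdfLeft U ρt ψ w (tr : EReal) := by
        rw [← hleft]; exact ENNReal.toReal_nonneg
      have hJ0 : 0 ≤ symmPIjump U ρt ψ w (tr : EReal) := by
        rw [← hjump]; exact ENNReal.toReal_nonneg
      have e1 : U {g : 𝒢 | ψ (ρt g w) < tr}
          = ENNReal.ofReal (symmPIcdfLeft U ρt ψ w (tr : EReal)) := by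
        rw [← hleft, ENNReal.ofReal_toReal (measure_ne_top U _)]
      have e2 : U {g : 𝒢 | ψ (ρt g w) = tr}
          = ENNReal.ofReal (symmPIjump U ρt ψ w (tr : EReal)) := by
        rw [← hjump, ENNReal.ofReal_toReal (measure_ne_top U _)]
      rw [e1, e2, ← ENNReal.ofReal_mul hΔ0, ← ENNReal.ofReal_add hL0 (mul_nonneg hΔ0 hJ0), hid]
    have hfinal : P {ω | (ψ (V (Zv ω)) : EReal) < symmPIthr U ρt ψ α (V (Zv ω)) ∨
        ((ψ (V (Zv ω)) : EReal) = symmPIthr U ρt ψ α (V (Zv ω)) ∧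
          U' ω < symmPIDelta U ρt ψ α (V (Zv ω)))} = ENNReal.ofReal (1 - α) := by
      rw [hpre, hPE]
      calc ∫⁻ w, (volume.restrict (Set.Icc (0 : ℝ) 1)) (Prod.mk w ⁻¹' C) ∂μ
          = ∫⁻ w, hfun w ∂μ := lintegral_congr hslice
        _ = ∫⁻ p : 𝒢 × 𝒵t, hfun (ρt p.1 p.2) ∂(U.prod μ) := by
            conv_lhs => rw [hμ_inv]
            rw [lintegral_map hfun_meas hρt_meas]
        _ = ∫⁻ w, ∫⁻ g, hfun (ρt g w) ∂U ∂μ :=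
            lintegral_prod_symm _ ((hfun_meas.comp hρt_meas).aemeasurable)
        _ = ∫⁻ w, ENNReal.ofReal (1 - α) ∂μ := lintegral_congr key
        _ = ENNReal.ofReal (1 - α) := by simp
    rw [hfinal, ENNReal.toReal_ofReal (by linarith)]
end

section
/- (Coverage under distribution shift.) Let Z be an arbitrary random element of 𝒵 (not assumed distributionally invariant) and V : 𝒵 → 𝒵̃ an arbitrary measurable map. Define ν(z̃) := ψ(z̃) − t_{z̃} and Δ := ∫_𝒢 TV( ν(V(Z)), ν(ρ̃(g)V(Z)) ) dU(g), where TV(X,Y) := sup over Borel sets A ⊆ ℝ of |P(X ∈ A) − P(Y ∈ A)| (this Haar-averaged Δ coincides with the average of the same total-variation terms over the invariant measure on the cosets of H := {h ∈ 𝒢 : ψ(ρ̃(h)z̃) = ψ(z̃) for all z̃}, since g ↦ ν∘ρ̃(g) is constant on cosets Hg). Then −Δ ≤ P(ψ(V(Z)) ≤ t_{V(Z)}) − (1 − α) ≤ Δ + E[F'_{V(Z)}(t_{V(Z)})]. -/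
open MeasureTheory ProbabilityTheory

/-- Total variation distance between the laws of two random elements, as the supremum over
measurable sets of the absolute difference of probabilities. -/
noncomputable def TVdist {β : Type*} [MeasurableSpace β] (μ ν : Measure β) : ℝ :=
  ⨆ A : {A : Set β // MeasurableSet A}, |(μ A.1).toReal - (ν A.1).toReal|

open scoped ENNReal
set_option linter.unusedSectionVars false
set_option linter.unusedVariables false

lemma s9_meas_sect {𝒢 𝒵t : Type*} [MeasurableSpace 𝒢] [MeasurableSpace 𝒵t]
    (ρt : 𝒢 → 𝒵t → 𝒵t) (ψ : 𝒵t → ℝ)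
    (hψρ : Measurable fun p : 𝒢 × 𝒵t => ψ (ρt p.1 p.2)) (z : 𝒵t) :
    Measurable fun g => ψ (ρt g z) :=
  hψρ.comp (measurable_id.prodMk measurable_const)

section Aux
variable {𝒢 𝒵t : Type*} [MeasurableSpace 𝒢] [MeasurableSpace 𝒵t]
  [Group 𝒢] [TopologicalSpace 𝒢] [IsTopologicalGroup 𝒢] [BorelSpace 𝒢]
  (U : Measure 𝒢) [IsProbabilityMeasure U]
  (ρt : 𝒢 → 𝒵t → 𝒵t) (ψ : 𝒵t → ℝ)

lemma s9_translate (hU : ∀ g : 𝒢, Measure.map (fun h => g * h) U = U) (g : 𝒢)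
    {T : Set 𝒢} (hT : MeasurableSet T) : U ((fun h => g * h) ⁻¹' T) = U T := by
  have h := Measure.map_apply (μ := U) (continuous_mul_left g).measurable hT
  rw [hU g] at h
  exact h.symm

lemma s9_inv_invariant (hU : ∀ g : 𝒢, Measure.map (fun h => g * h) U = U)
    (hρt_mul : ∀ g g' : 𝒢, ρt (g * g') = ρt g ∘ ρt g')
    (hρt_meas : Measurable (fun p : 𝒢 × 𝒵t => ρt p.1 p.2))
    (hψρ : Measurable fun p : 𝒢 × 𝒵t => ψ (ρt p.1 p.2)) (z : 𝒵t) (x : ℝ) :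
    U {h | ψ (ρt h⁻¹ z) ≤ x} = U {h | ψ (ρt h z) ≤ x} := by
  have hmz : Measurable fun h : 𝒢 => ρt h z :=
    hρt_meas.comp (measurable_id.prodMk measurable_const)
  have hwm : Measurable fun p : 𝒢 × 𝒢 => ψ (ρt (p.2⁻¹ * p.1) z) := by
    have he : (fun p : 𝒢 × 𝒢 => ψ (ρt (p.2⁻¹ * p.1) z))
        = fun p : 𝒢 × 𝒢 => ψ (ρt p.2⁻¹ (ρt p.1 z)) := by
      funext p; rw [hρt_mul]; rfl
    rw [he]
    exact hψρ.comp ((measurable_snd.inv).prodMk (hmz.comp measurable_fst))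
  set W : Set (𝒢 × 𝒢) := {p | ψ (ρt (p.2⁻¹ * p.1) z) ≤ x} with hWdef
  have hW : MeasurableSet W := hwm measurableSet_Iic
  have hinvm : Measurable fun h : 𝒢 => ψ (ρt h⁻¹ z) :=
    (s9_meas_sect ρt ψ hψρ z).comp measurable_inv
  have hSm : MeasurableSet {h : 𝒢 | ψ (ρt h z) ≤ x} :=
    (s9_meas_sect ρt ψ hψρ z) measurableSet_Iic
  -- first iterated integral
  have h1 : (U.prod U) W = U {h : 𝒢 | ψ (ρt h⁻¹ z) ≤ x} := by
    rw [Measure.prod_apply hW]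
    have hsec : ∀ h : 𝒢, U (Prod.mk h ⁻¹' W) = U {k : 𝒢 | ψ (ρt k⁻¹ z) ≤ x} := by
      intro h
      have hTm : MeasurableSet (Prod.mk h ⁻¹' W) := hW.preimage (measurable_prodMk_left)
      have := s9_translate U hU h hTm
      rw [← this]
      congr 1
      ext k
      simp only [Set.mem_preimage, Set.mem_setOf_eq, hWdef]
      constructor
      · intro hk
        have heq : (h * k)⁻¹ * h = k⁻¹ := by group
        rw [← heq]; exact hk
      · intro hk
        have heq : (h * k)⁻¹ * h = k⁻¹ := by group
        rw [heq]; exact hk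
    simp only [hsec]
    simp [lintegral_const]
  -- second iterated integral
  have h2 : (U.prod U) W = U {h : 𝒢 | ψ (ρt h z) ≤ x} := by
    rw [Measure.prod_apply_symm hW]
    have hsec : ∀ k : 𝒢, U ((fun h => (h, k)) ⁻¹' W) = U {h : 𝒢 | ψ (ρt h z) ≤ x} := by
      intro k
      have hpre : ((fun h : 𝒢 => (h, k)) ⁻¹' W)
          = (fun h : 𝒢 => k⁻¹ * h) ⁻¹' {h : 𝒢 | ψ (ρt h z) ≤ x} := by
        ext h; simp [hWdef]
      rw [hpre, s9_translate U hU k⁻¹ hSm]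
    simp only [hsec]
    simp [lintegral_const]
  rw [← h1, h2]

end Aux

section Aux2
variable {𝒢 𝒵t : Type*} [MeasurableSpace 𝒢] [MeasurableSpace 𝒵t]
  [Group 𝒢] [TopologicalSpace 𝒢] [IsTopologicalGroup 𝒢] [BorelSpace 𝒢]
  (U : Measure 𝒢) [IsProbabilityMeasure U]
  (ρt : 𝒢 → 𝒵t → 𝒵t) (ψ : 𝒵t → ℝ)

lemma s9_cdf_invariant (hU : ∀ g : 𝒢, Measure.map (fun h => g * h) U = U)
    (hρt_mul : ∀ g g' : 𝒢, ρt (g * g') = ρt g ∘ ρt g')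
    (hρt_meas : Measurable (fun p : 𝒢 × 𝒵t => ρt p.1 p.2))
    (hψρ : Measurable fun p : 𝒢 × 𝒵t => ψ (ρt p.1 p.2)) (g : 𝒢) (z : 𝒵t) (x : ℝ) :
    symmPIcdf U ρt ψ (ρt g z) x = symmPIcdf U ρt ψ z x := by
  unfold symmPIcdf
  congr 1
  have h1 : U {h : 𝒢 | ψ (ρt h (ρt g z)) ≤ x} = U {h : 𝒢 | ψ (ρt h⁻¹ (ρt g z)) ≤ x} :=
    (s9_inv_invariant U ρt ψ hU hρt_mul hρt_meas hψρ (ρt g z) x).symm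
  have h2 : {h : 𝒢 | ψ (ρt h⁻¹ (ρt g z)) ≤ x}
      = (fun h : 𝒢 => g⁻¹ * h) ⁻¹' {h : 𝒢 | ψ (ρt h⁻¹ z) ≤ x} := by
    ext h
    simp only [Set.mem_setOf_eq, Set.mem_preimage]
    have e1 : ρt h⁻¹ (ρt g z) = ρt (h⁻¹ * g) z := by rw [hρt_mul]; rfl
    have e2 : ρt (g⁻¹ * h)⁻¹ z = ρt (h⁻¹ * g) z := by congr 1; group
    rw [e1, e2]
  have hinvS : MeasurableSet {h : 𝒢 | ψ (ρt h⁻¹ z) ≤ x} :=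
    ((s9_meas_sect ρt ψ hψρ z).comp measurable_inv) measurableSet_Iic
  rw [h1, h2, s9_translate U hU g⁻¹ hinvS,
    s9_inv_invariant U ρt ψ hU hρt_mul hρt_meas hψρ z x]

lemma s9_thr_invariant (hU : ∀ g : 𝒢, Measure.map (fun h => g * h) U = U)
    (hρt_mul : ∀ g g' : 𝒢, ρt (g * g') = ρt g ∘ ρt g')
    (hρt_meas : Measurable (fun p : 𝒢 × 𝒵t => ρt p.1 p.2))
    (hψρ : Measurable fun p : 𝒢 × 𝒵t => ψ (ρt p.1 p.2)) (α : ℝ) (g : 𝒢) (z : 𝒵t) :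
    symmPIthr U ρt ψ α (ρt g z) = symmPIthr U ρt ψ α z := by
  have hc : ∀ x : ℝ, symmPIcdf U ρt ψ (ρt g z) x = symmPIcdf U ρt ψ z x :=
    fun x => s9_cdf_invariant U ρt ψ hU hρt_mul hρt_meas hψρ g z x
  unfold symmPIthr
  congr 1
  ext e
  simp only [Set.mem_image, Set.mem_setOf_eq, hc]

end Aux2

lemma s9_ereal_iff (a : ℝ) (t : EReal) : (a : EReal) - t ≤ 0 ↔ (a : EReal) ≤ t := by
  induction t using EReal.rec with
  | bot =>
    simp only [EReal.coe_sub_bot, le_bot_iff]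
    constructor
    · intro h; exact absurd h (by simp)
    · intro h; exact absurd h (by simp)
  | coe r =>
    rw [← EReal.coe_sub, EReal.coe_le_coe_iff]
    constructor
    · intro h
      have : (a - r : ℝ) ≤ 0 := by exact_mod_cast h
      exact_mod_cast by linarith
    · intro h
      have : a ≤ r := by exact_mod_cast h
      exact_mod_cast by linarith
  | top =>
    simp [EReal.sub_top, le_top]

section Aux3
variable {𝒢 𝒵t : Type*} [MeasurableSpace 𝒢] [MeasurableSpace 𝒵t]
  (U : Measure 𝒢) [IsProbabilityMeasure U]
  (ρt : 𝒢 → 𝒵t → 𝒵t) (ψ : 𝒵t → ℝ)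

lemma s9_cdf_mono (z : 𝒵t) : Monotone (symmPIcdf U ρt ψ z) := by
  intro x y hxy
  unfold symmPIcdf
  have hsub : {g : 𝒢 | ψ (ρt g z) ≤ x} ⊆ {g : 𝒢 | ψ (ρt g z) ≤ y} :=
    fun g hg => le_trans hg hxy
  exact (ENNReal.toReal_le_toReal (measure_ne_top U _) (measure_ne_top U _)).mpr
    (measure_mono hsub)

lemma s9_quantile (hψρ : Measurable fun p : 𝒢 × 𝒵t => ψ (ρt p.1 p.2))
    {α : ℝ} (hα : α ∈ Set.Icc (0:ℝ) 1) (z : 𝒵t) :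
    1 - α ≤ symmPIcdfE U ρt ψ z (symmPIthr U ρt ψ α z) ∧
      symmPIcdfLeft U ρt ψ z (symmPIthr U ρt ψ α z) ≤ 1 - α := by
  constructor
  · -- part A
    by_cases htop : symmPIthr U ρt ψ α z = ⊤
    · rw [htop]
      unfold symmPIcdfE
      have huniv : {g : 𝒢 | (ψ (ρt g z) : EReal) ≤ (⊤:EReal)} = Set.univ := by
        ext g; simp
      rw [huniv, measure_univ]
      simp only [ENNReal.toReal_one]
      linarith [hα.1]
    · by_cases hbot : symmPIthr U ρt ψ α z = ⊥
      · have hbot' : sInf ((fun x : ℝ => (x:EReal)) ''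
            {x : ℝ | 1 - α ≤ symmPIcdf U ρt ψ z x}) = ⊥ := hbot
        have hall : ∀ x : ℝ, 1 - α ≤ symmPIcdf U ρt ψ z x := by
          intro x
          obtain ⟨a, ⟨s, hs, rfl⟩, hlt⟩ := sInf_eq_bot.mp hbot' (x : EReal) (by simp)
          have hsx : s ≤ x := le_of_lt (EReal.coe_lt_coe_iff.mp hlt)
          exact le_trans hs (s9_cdf_mono U ρt ψ z hsx)
        have hA0 : Antitone (fun n : ℕ => {g : 𝒢 | ψ (ρt g z) ≤ -(n:ℝ)}) := by
          intro n m hnm g hg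
          simp only [Set.mem_setOf_eq] at hg ⊢
          have hcast : (n:ℝ) ≤ (m:ℝ) := by exact_mod_cast hnm
          linarith
        have hint : ⋂ n : ℕ, {g : 𝒢 | ψ (ρt g z) ≤ -(n:ℝ)} = ∅ := by
          ext g
          simp only [Set.mem_iInter, Set.mem_setOf_eq, Set.mem_empty_iff_false, iff_false,
            not_forall]
          obtain ⟨n, hn⟩ := exists_nat_gt (-(ψ (ρt g z)))
          exact ⟨n, by push_neg; linarith⟩
        have htend := tendsto_measure_iInter_atTop (μ := U)
          (s := fun n : ℕ => {g : 𝒢 | ψ (ρt g z) ≤ -(n:ℝ)})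
          (fun n => ((s9_meas_sect ρt ψ hψρ z) measurableSet_Iic).nullMeasurableSet) hA0
          ⟨0, measure_ne_top U _⟩
        rw [hint, measure_empty] at htend
        have htendR : Filter.Tendsto (fun n : ℕ => symmPIcdf U ρt ψ z (-(n:ℝ)))
            Filter.atTop (nhds 0) := by
          have := (ENNReal.tendsto_toReal (by simp : (0:ℝ≥0∞) ≠ ⊤)).comp htend
          simpa [Function.comp_def, symmPIcdf] using this
        have hle0 : 1 - α ≤ 0 := ge_of_tendsto' htendR fun n => hall _
        rw [hbot]
        unfold symmPIcdfE
        have hempty : {g : 𝒢 | (ψ (ρt g z) : EReal) ≤ (⊥:EReal)} = ∅ := by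
          ext g; simp
        rw [hempty]
        simp only [measure_empty, ENNReal.toReal_zero]
        linarith
      · set r := (symmPIthr U ρt ψ α z).toReal with hrdef
        have hr : (r : EReal) = symmPIthr U ρt ψ α z := EReal.coe_toReal htop hbot
        have hstep : ∀ n : ℕ, 1 - α ≤ symmPIcdf U ρt ψ z (r + 1/((n:ℝ)+1)) := by
          intro n
          have hpos : (0:ℝ) < 1/((n:ℝ)+1) := by positivity
          have hlt : sInf ((fun x : ℝ => (x:EReal)) ''
              {x : ℝ | 1 - α ≤ symmPIcdf U ρt ψ z x}) < ((r + 1/((n:ℝ)+1) : ℝ) : EReal) := by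
            show symmPIthr U ρt ψ α z < _
            rw [← hr]
            exact_mod_cast (by linarith : r < r + 1/((n:ℝ)+1))
          obtain ⟨a, ⟨s, hs, rfl⟩, hlt2⟩ := sInf_lt_iff.mp hlt
          have hsle : s ≤ r + 1/((n:ℝ)+1) := le_of_lt (EReal.coe_lt_coe_iff.mp hlt2)
          exact le_trans hs (s9_cdf_mono U ρt ψ z hsle)
        have hBant : Antitone (fun n : ℕ => {g : 𝒢 | ψ (ρt g z) ≤ r + 1/((n:ℝ)+1)}) := by
          intro n m hnm g hg
          have hle : 1/((m:ℝ)+1) ≤ 1/((n:ℝ)+1) := by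
            apply one_div_le_one_div_of_le (by positivity)
            have : (n:ℝ) ≤ (m:ℝ) := by exact_mod_cast hnm
            linarith
          simp only [Set.mem_setOf_eq] at hg ⊢
          linarith
        have hint : ⋂ n : ℕ, {g : 𝒢 | ψ (ρt g z) ≤ r + 1/((n:ℝ)+1)}
            = {g : 𝒢 | ψ (ρt g z) ≤ r} := by
          ext g
          simp only [Set.mem_iInter, Set.mem_setOf_eq]
          constructor
          · intro h
            refine le_of_forall_pos_le_add fun ε hε => ?_
            obtain ⟨n, hn⟩ := exists_nat_one_div_lt hε
            linarith [h n]
          · intro h n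
            have hpos : (0:ℝ) < 1/((n:ℝ)+1) := by positivity
            linarith
        have htend := tendsto_measure_iInter_atTop (μ := U)
          (s := fun n : ℕ => {g : 𝒢 | ψ (ρt g z) ≤ r + 1/((n:ℝ)+1)})
          (fun n => ((s9_meas_sect ρt ψ hψρ z) measurableSet_Iic).nullMeasurableSet) hBant
          ⟨0, measure_ne_top U _⟩
        rw [hint] at htend
        have htendR : Filter.Tendsto (fun n : ℕ => symmPIcdf U ρt ψ z (r + 1/((n:ℝ)+1)))
            Filter.atTop (nhds (symmPIcdf U ρt ψ z r)) :=
          (ENNReal.tendsto_toReal (measure_ne_top U _)).comp htend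
        have hfinal : 1 - α ≤ symmPIcdf U ρt ψ z r := ge_of_tendsto' htendR hstep
        rw [← hr]
        unfold symmPIcdfE
        have hset : {g : 𝒢 | (ψ (ρt g z) : EReal) ≤ ((r:ℝ):EReal)} = {g : 𝒢 | ψ (ρt g z) ≤ r} := by
          ext g; simp [EReal.coe_le_coe_iff]
        rw [hset]
        exact hfinal
  · -- part B
    apply Real.sSup_le _ (by linarith [hα.2])
    rintro v ⟨y, hy, rfl⟩
    induction y using EReal.rec with
    | bot =>
      unfold symmPIcdfE
      have hempty : {g : 𝒢 | (ψ (ρt g z) : EReal) ≤ (⊥:EReal)} = ∅ := by ext g; simp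
      rw [hempty]
      simp only [measure_empty, ENNReal.toReal_zero]
      linarith [hα.2]
    | coe s =>
      have hs_not : ¬ (1 - α ≤ symmPIcdf U ρt ψ z s) := by
        intro hs
        have hle : symmPIthr U ρt ψ α z ≤ (s:EReal) := sInf_le ⟨s, hs, rfl⟩
        exact absurd (lt_of_lt_of_le hy hle) (lt_irrefl _)
      have hset2 : {g : 𝒢 | (ψ (ρt g z) : EReal) ≤ ((s:ℝ):EReal)}
          = {g : 𝒢 | ψ (ρt g z) ≤ s} := by
        ext g; simp [EReal.coe_le_coe_iff]
      have he : symmPIcdfE U ρt ψ z ((s:ℝ):EReal) = symmPIcdf U ρt ψ z s := by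
        unfold symmPIcdfE symmPIcdf
        rw [hset2]
      rw [he]
      linarith [not_le.mp hs_not]
    | top => exact absurd (Set.mem_Iio.mp hy) not_top_lt
end Aux3

section Aux4
variable {𝒢 𝒵t : Type*} [MeasurableSpace 𝒢] [MeasurableSpace 𝒵t]
  (U : Measure 𝒢) [IsProbabilityMeasure U]
  (ρt : 𝒢 → 𝒵t → 𝒵t) (ψ : 𝒵t → ℝ)

lemma s9_prob_toReal_mem {β : Type*} [MeasurableSpace β] (μ : Measure β)
    [IsProbabilityMeasure μ] (A : Set β) : (μ A).toReal ∈ Set.Icc (0:ℝ) 1 := by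
  refine ⟨ENNReal.toReal_nonneg, ?_⟩
  calc (μ A).toReal ≤ (1:ℝ≥0∞).toReal :=
        (ENNReal.toReal_le_toReal (measure_ne_top μ _) ENNReal.one_ne_top).mpr prob_le_one
    _ = 1 := ENNReal.toReal_one

lemma s9_cdfE_mem (z : 𝒵t) (t : EReal) : symmPIcdfE U ρt ψ z t ∈ Set.Icc (0:ℝ) 1 :=
  s9_prob_toReal_mem U _

lemma s9_cdfLeft_mem (z : 𝒵t) (t : EReal) : symmPIcdfLeft U ρt ψ z t ∈ Set.Icc (0:ℝ) 1 := by
  constructor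
  · apply Real.sSup_nonneg
    rintro v ⟨y, _, rfl⟩
    exact (s9_cdfE_mem U ρt ψ z y).1
  · apply Real.sSup_le
    · rintro v ⟨y, _, rfl⟩
      exact (s9_cdfE_mem U ρt ψ z y).2
    · exact zero_le_one

lemma s9_jump_abs (z : 𝒵t) (t : EReal) : |symmPIjump U ρt ψ z t| ≤ 1 := by
  have h1 := s9_cdfE_mem U ρt ψ z t
  have h2 := s9_cdfLeft_mem U ρt ψ z t
  unfold symmPIjump
  rw [abs_le]
  constructor <;> [linarith [h1.1, h2.2]; linarith [h1.2, h2.1]]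

lemma s9_TV_le {β : Type*} [MeasurableSpace β] (μ μ' : Measure β)
    [IsProbabilityMeasure μ] [IsProbabilityMeasure μ'] {A : Set β} (hA : MeasurableSet A) :
    |(μ A).toReal - (μ' A).toReal| ≤ TVdist μ μ' := by
  have hbdd : BddAbove (Set.range fun B : {B : Set β // MeasurableSet B} =>
      |(μ B.1).toReal - (μ' B.1).toReal|) := by
    refine ⟨1, ?_⟩
    rintro v ⟨B, rfl⟩
    have h1 := s9_prob_toReal_mem μ B.1
    have h2 := s9_prob_toReal_mem μ' B.1
    rw [abs_le]
    constructor <;> [linarith [h1.1, h2.2]; linarith [h1.2, h2.1]]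
  exact le_ciSup hbdd ⟨A, hA⟩

lemma s9_TV_nonneg {β : Type*} [MeasurableSpace β] (μ μ' : Measure β)
    [IsProbabilityMeasure μ] [IsProbabilityMeasure μ'] : 0 ≤ TVdist μ μ' :=
  le_trans (abs_nonneg _) (s9_TV_le μ μ' MeasurableSet.empty)

lemma s9_TV_le_one {β : Type*} [MeasurableSpace β] (μ μ' : Measure β)
    [IsProbabilityMeasure μ] [IsProbabilityMeasure μ'] : TVdist μ μ' ≤ 1 := by
  haveI : Nonempty {B : Set β // MeasurableSet B} := ⟨⟨∅, MeasurableSet.empty⟩⟩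
  apply ciSup_le
  intro B
  have h1 := s9_prob_toReal_mem μ B.1
  have h2 := s9_prob_toReal_mem μ' B.1
  rw [abs_le]
  constructor <;> [linarith [h1.1, h2.2]; linarith [h1.2, h2.1]]

end Aux4

/-- coverage under distribution shift: for an arbitrary random element `Z`
and arbitrary measurable `V`, with `ν(z̃) = ψ(z̃) − t_{z̃}` and
`Δ = ∫_𝒢 TV(ν(V(Z)), ν(ρ̃(g)V(Z))) dU(g)`,
`−Δ ≤ P(ψ(V(Z)) ≤ t_{V(Z)}) − (1 − α) ≤ Δ + E[F'_{V(Z)}(t_{V(Z)})]`. -/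
theorem stmt9
    {Ω 𝒢 𝒵 𝒵t : Type*} [MeasurableSpace Ω] [MeasurableSpace 𝒢] [MeasurableSpace 𝒵]
    [MeasurableSpace 𝒵t]
    [Group 𝒢] [TopologicalSpace 𝒢] [IsTopologicalGroup 𝒢] [CompactSpace 𝒢] [T2Space 𝒢]
    [BorelSpace 𝒢]
    (P : Measure Ω) [IsProbabilityMeasure P]
    (U : Measure 𝒢) [IsProbabilityMeasure U]
    (hU : ∀ g : 𝒢, Measure.map (fun h => g * h) U = U)
    (ρ : 𝒢 → 𝒵 → 𝒵)
    (hρ_one : ρ 1 = id)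
    (hρ_mul : ∀ g g' : 𝒢, ρ (g * g') = ρ g ∘ ρ g')
    (hρ_meas : Measurable (fun p : 𝒢 × 𝒵 => ρ p.1 p.2))
    (ρt : 𝒢 → 𝒵t → 𝒵t)
    (hρt_one : ρt 1 = id)
    (hρt_mul : ∀ g g' : 𝒢, ρt (g * g') = ρt g ∘ ρt g')
    (hρt_meas : Measurable (fun p : 𝒢 × 𝒵t => ρt p.1 p.2))
    (V : 𝒵 → 𝒵t) (hV : Measurable V)
    (ψ : 𝒵t → ℝ) (hψ : Measurable ψ)
    (hψρ : Measurable (fun p : 𝒢 × 𝒵t => ψ (ρt p.1 p.2)))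
    (α : ℝ) (hα : α ∈ Set.Icc (0 : ℝ) 1)
    (ht_meas : Measurable (fun z : 𝒵t => symmPIthr U ρt ψ α z))
    (hjump_meas : Measurable (fun z : 𝒵t => symmPIjump U ρt ψ z (symmPIthr U ρt ψ α z)))
    -- the "score-minus-threshold" function ν(z̃) = ψ(z̃) − t_{z̃}, and its measurability
    (ν : 𝒵t → EReal) (hν_def : ∀ z : 𝒵t, ν z = (ψ z : EReal) - symmPIthr U ρt ψ α z)
    (hν_meas : Measurable ν)
    (Zv : Ω → 𝒵) (hZ : Measurable Zv)
    (hTV_meas : Measurable (fun g : 𝒢 =>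
      TVdist (Measure.map (fun ω => ν (V (Zv ω))) P)
        (Measure.map (fun ω => ν (ρt g (V (Zv ω)))) P))) :
    -(∫ g, TVdist (Measure.map (fun ω => ν (V (Zv ω))) P)
          (Measure.map (fun ω => ν (ρt g (V (Zv ω)))) P) ∂U)
      ≤ (P {ω | (ψ (V (Zv ω)) : EReal) ≤ symmPIthr U ρt ψ α (V (Zv ω))}).toReal - (1 - α) ∧
    (P {ω | (ψ (V (Zv ω)) : EReal) ≤ symmPIthr U ρt ψ α (V (Zv ω))}).toReal - (1 - α)
      ≤ (∫ g, TVdist (Measure.map (fun ω => ν (V (Zv ω))) P)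
            (Measure.map (fun ω => ν (ρt g (V (Zv ω)))) P) ∂U)
        + ∫ ω, symmPIjump U ρt ψ (V (Zv ω)) (symmPIthr U ρt ψ α (V (Zv ω))) ∂P := by
  classical
  have hzf : Measurable fun ω => V (Zv ω) := hV.comp hZ
  -- the joint event set
  set W : Set (𝒢 × Ω) :=
    {p : 𝒢 × Ω | (ψ (ρt p.1 (V (Zv p.2))) : EReal) ≤ symmPIthr U ρt ψ α (V (Zv p.2))}
    with hWdef
  have hcoe : Measurable (fun p : 𝒢 × Ω => (ψ (ρt p.1 (V (Zv p.2))) : EReal)) :=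
    measurable_coe_real_ereal.comp (hψρ.comp (measurable_fst.prodMk (hzf.comp measurable_snd)))
  have hthrm : Measurable (fun p : 𝒢 × Ω => symmPIthr U ρt ψ α (V (Zv p.2))) :=
    (ht_meas.comp hzf).comp measurable_snd
  have hW : MeasurableSet W := measurableSet_le hcoe hthrm
  have hfm : Measurable fun g : 𝒢 => P (Prod.mk g ⁻¹' W) :=
    measurable_measure_prodMk_left hW
  have hkm : Measurable fun ω : Ω => U ((fun g => (g, ω)) ⁻¹' W) :=
    measurable_measure_prodMk_right hW
  -- Tonelli swap
  have hswap : ∫⁻ g, P (Prod.mk g ⁻¹' W) ∂U = ∫⁻ ω, U ((fun g => (g, ω)) ⁻¹' W) ∂P := by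
    rw [← Measure.prod_apply hW, Measure.prod_apply_symm hW]
  have hIf : ∫ g, (P (Prod.mk g ⁻¹' W)).toReal ∂U = (∫⁻ g, P (Prod.mk g ⁻¹' W) ∂U).toReal :=
    integral_toReal hfm.aemeasurable (ae_of_all _ fun g => measure_lt_top P _)
  have hJk : ∫ ω, (U ((fun g => (g, ω)) ⁻¹' W)).toReal ∂P
      = (∫⁻ ω, U ((fun g => (g, ω)) ⁻¹' W) ∂P).toReal :=
    integral_toReal hkm.aemeasurable (ae_of_all _ fun ω => measure_lt_top U _)
  have hkid : (fun ω => (U ((fun g => (g, ω)) ⁻¹' W)).toReal)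
      = fun ω => symmPIcdfE U ρt ψ (V (Zv ω)) (symmPIthr U ρt ψ α (V (Zv ω))) := rfl
  have hconn : ∫ g, (P (Prod.mk g ⁻¹' W)).toReal ∂U
      = ∫ ω, symmPIcdfE U ρt ψ (V (Zv ω)) (symmPIthr U ρt ψ α (V (Zv ω))) ∂P := by
    rw [hIf, hswap, ← hJk, hkid]
  -- event identifications
  have hthr_inv : ∀ (g : 𝒢) (z : 𝒵t), symmPIthr U ρt ψ α (ρt g z) = symmPIthr U ρt ψ α z :=
    fun g z => s9_thr_invariant U ρt ψ hU hρt_mul hρt_meas hψρ α g z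
  have hset_cov : {ω | (ψ (V (Zv ω)) : EReal) ≤ symmPIthr U ρt ψ α (V (Zv ω))}
      = (fun ω => ν (V (Zv ω))) ⁻¹' Set.Iic 0 := by
    ext ω
    simp only [Set.mem_setOf_eq, Set.mem_preimage, Set.mem_Iic]
    rw [hν_def]
    exact (s9_ereal_iff _ _).symm
  have hset_g : ∀ g : 𝒢, Prod.mk g ⁻¹' W = (fun ω => ν (ρt g (V (Zv ω)))) ⁻¹' Set.Iic 0 := by
    intro g
    ext ω
    simp only [Set.mem_preimage, Set.mem_Iic, hWdef, Set.mem_setOf_eq]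
    rw [hν_def, hthr_inv g (V (Zv ω))]
    exact (s9_ereal_iff _ _).symm
  have hXm : Measurable fun ω => ν (V (Zv ω)) := hν_meas.comp hzf
  have hYm : ∀ g : 𝒢, Measurable fun ω => ν (ρt g (V (Zv ω))) := fun g =>
    hν_meas.comp ((hρt_meas.comp (measurable_const.prodMk measurable_id)).comp hzf)
  haveI hXP : IsProbabilityMeasure (Measure.map (fun ω => ν (V (Zv ω))) P) :=
    Measure.isProbabilityMeasure_map hXm.aemeasurable
  -- pointwise TV bound
  have hTVpt : ∀ g : 𝒢,
      |(P {ω | (ψ (V (Zv ω)) : EReal) ≤ symmPIthr U ρt ψ α (V (Zv ω))}).toReal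
        - (P (Prod.mk g ⁻¹' W)).toReal|
      ≤ TVdist (Measure.map (fun ω => ν (V (Zv ω))) P)
          (Measure.map (fun ω => ν (ρt g (V (Zv ω)))) P) := by
    intro g
    haveI : IsProbabilityMeasure (Measure.map (fun ω => ν (ρt g (V (Zv ω)))) P) :=
      Measure.isProbabilityMeasure_map (hYm g).aemeasurable
    have h1 : (Measure.map (fun ω => ν (V (Zv ω))) P) (Set.Iic (0:EReal))
        = P {ω | (ψ (V (Zv ω)) : EReal) ≤ symmPIthr U ρt ψ α (V (Zv ω))} := by
      rw [Measure.map_apply hXm measurableSet_Iic, ← hset_cov]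
    have h2 : (Measure.map (fun ω => ν (ρt g (V (Zv ω)))) P) (Set.Iic (0:EReal))
        = P (Prod.mk g ⁻¹' W) := by
      rw [Measure.map_apply (hYm g) measurableSet_Iic, ← hset_g g]
    have h3 := s9_TV_le (Measure.map (fun ω => ν (V (Zv ω))) P)
      (Measure.map (fun ω => ν (ρt g (V (Zv ω)))) P) (measurableSet_Iic (a := (0:EReal)))
    rwa [h1, h2] at h3
  -- integrabilities
  have hfInt : Integrable (fun g => (P (Prod.mk g ⁻¹' W)).toReal) U :=
    ⟨(ENNReal.measurable_toReal.comp hfm).aestronglyMeasurable,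
      HasFiniteIntegral.of_bounded (C := 1) (ae_of_all _ fun g => by
        rw [Real.norm_eq_abs, abs_of_nonneg ENNReal.toReal_nonneg]
        exact (s9_prob_toReal_mem P _).2)⟩
  have hTVInt : Integrable (fun g : 𝒢 =>
      TVdist (Measure.map (fun ω => ν (V (Zv ω))) P)
        (Measure.map (fun ω => ν (ρt g (V (Zv ω)))) P)) U := by
    refine ⟨hTV_meas.aestronglyMeasurable,
      HasFiniteIntegral.of_bounded (C := 1) (ae_of_all _ fun g => ?_)⟩
    haveI : IsProbabilityMeasure (Measure.map (fun ω => ν (ρt g (V (Zv ω)))) P) :=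
      Measure.isProbabilityMeasure_map (hYm g).aemeasurable
    rw [Real.norm_eq_abs, abs_of_nonneg (s9_TV_nonneg _ _)]
    exact s9_TV_le_one _ _
  have hJint : Integrable
      (fun ω => symmPIcdfE U ρt ψ (V (Zv ω)) (symmPIthr U ρt ψ α (V (Zv ω)))) P := by
    rw [← hkid]
    refine ⟨(ENNReal.measurable_toReal.comp hkm).aestronglyMeasurable,
      HasFiniteIntegral.of_bounded (C := 1) (ae_of_all _ fun ω => ?_)⟩
    rw [Real.norm_eq_abs, abs_of_nonneg ENNReal.toReal_nonneg]
    exact (s9_prob_toReal_mem U _).2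
  have hjumpInt : Integrable
      (fun ω => symmPIjump U ρt ψ (V (Zv ω)) (symmPIthr U ρt ψ α (V (Zv ω)))) P :=
    ⟨(hjump_meas.comp hzf).aestronglyMeasurable,
      HasFiniteIntegral.of_bounded (C := 1) (ae_of_all _ fun ω => by
        rw [Real.norm_eq_abs]
        exact s9_jump_abs U ρt ψ _ _)⟩
  -- quantile bounds
  have hquant := fun ω => s9_quantile U ρt ψ hψρ hα (V (Zv ω))
  have hJlow : 1 - α
      ≤ ∫ ω, symmPIcdfE U ρt ψ (V (Zv ω)) (symmPIthr U ρt ψ α (V (Zv ω))) ∂P := by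
    have h := integral_mono (integrable_const (1 - α)) hJint (fun ω => (hquant ω).1)
    simpa using h
  have hJhigh : ∫ ω, symmPIcdfE U ρt ψ (V (Zv ω)) (symmPIthr U ρt ψ α (V (Zv ω))) ∂P
      ≤ (1 - α) + ∫ ω, symmPIjump U ρt ψ (V (Zv ω)) (symmPIthr U ρt ψ α (V (Zv ω))) ∂P := by
    have hpt : ∀ ω, symmPIcdfE U ρt ψ (V (Zv ω)) (symmPIthr U ρt ψ α (V (Zv ω)))
        ≤ (1 - α) + symmPIjump U ρt ψ (V (Zv ω)) (symmPIthr U ρt ψ α (V (Zv ω))) := by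
      intro ω
      have h2 := (hquant ω).2
      unfold symmPIjump
      linarith
    have h := integral_mono hJint ((integrable_const (1 - α)).add hjumpInt) hpt
    simp only [Pi.add_apply] at h
    rwa [integral_add (integrable_const (1 - α)) hjumpInt, integral_const, probReal_univ,
      one_smul] at h
  -- |cov - I| ≤ Δ
  have hsub : ∫ g, ((P {ω | (ψ (V (Zv ω)) : EReal) ≤ symmPIthr U ρt ψ α (V (Zv ω))}).toReal
        - (P (Prod.mk g ⁻¹' W)).toReal) ∂U
      = (P {ω | (ψ (V (Zv ω)) : EReal) ≤ symmPIthr U ρt ψ α (V (Zv ω))}).toReal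
        - ∫ g, (P (Prod.mk g ⁻¹' W)).toReal ∂U := by
    rw [integral_sub (integrable_const _) hfInt, integral_const, probReal_univ,
      one_smul]
  have habs : |(P {ω | (ψ (V (Zv ω)) : EReal) ≤ symmPIthr U ρt ψ α (V (Zv ω))}).toReal
        - ∫ g, (P (Prod.mk g ⁻¹' W)).toReal ∂U|
      ≤ ∫ g, TVdist (Measure.map (fun ω => ν (V (Zv ω))) P)
          (Measure.map (fun ω => ν (ρt g (V (Zv ω)))) P) ∂U := by
    rw [← hsub]
    have h1 : ‖∫ g, ((P {ω | (ψ (V (Zv ω)) : EReal) ≤ symmPIthr U ρt ψ α (V (Zv ω))}).toReal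
          - (P (Prod.mk g ⁻¹' W)).toReal) ∂U‖
        ≤ ∫ g, ‖(P {ω | (ψ (V (Zv ω)) : EReal) ≤ symmPIthr U ρt ψ α (V (Zv ω))}).toReal
          - (P (Prod.mk g ⁻¹' W)).toReal‖ ∂U := norm_integral_le_integral_norm _
    rw [Real.norm_eq_abs] at h1
    refine le_trans h1 ?_
    refine integral_mono ((integrable_const _).sub hfInt).norm hTVInt fun g => ?_
    rw [Real.norm_eq_abs]
    exact hTVpt g
  rw [abs_le] at habs
  constructor
  · linarith [habs.1, hJlow, hconn.ge, hconn.le]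
  · linarith [habs.2, hJhigh, hconn.ge, hconn.le]
end

section
/- (Validity of the Monte Carlo SymmPI quantile.) Assume Z is 𝒢-distributionally invariant (ρ(G)Z =_d Z for G ~ U independent of Z) and V : 𝒵 → 𝒵̃ is 𝒢-distributionally equivariant. Let G_1, …, G_M be i.i.d. with distribution U, independent of Z. For z̃ ∈ 𝒵̃ define the random threshold t̃_{z̃} := Q_{1−α}( ψ(z̃), ψ(ρ̃(G_1)z̃), ψ(ρ̃(G_2)z̃), …, ψ(ρ̃(G_M)z̃) ), the (1−α)-quantile of the empirical distribution of these M+1 values, i.e. the ⌈(1−α)(M+1)⌉-th smallest value. Then P( ψ(V(Z)) ≤ t̃_{V(Z)} ) ≥ 1 − α, where the probability is over (Z, G_1, …, G_M). -/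
open MeasureTheory ProbabilityTheory

/-- The empirical `(1−α)`-quantile of a finite family of reals:
`Q_{1−α}(v) := inf{x : #{j : v_j ≤ x}/N ≥ 1−α}`. -/
noncomputable def empQuantile {ι : Type*} [Fintype ι] (α : ℝ) (v : ι → ℝ) : ℝ :=
  sInf {x : ℝ | 1 - α ≤ ({j : ι | v j ≤ x}.ncard : ℝ) / (Fintype.card ι : ℝ)}


lemma setOf_ncard_eq {N : ℕ} (p : Fin N → Prop) [DecidablePred p] :
    ({i : Fin N | p i}.ncard : ℝ) = ((Finset.univ.filter p).card : ℝ) := by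
  have : {i : Fin N | p i} = ↑(Finset.univ.filter p) := by ext i; simp
  rw [this, Set.ncard_coe_finset]

lemma quantile_le_iff {M : ℕ} {α : ℝ} (hα0 : 0 ≤ α) (hα1 : α < 1) (v : Fin (M + 1) → ℝ) :
    v 0 ≤ empQuantile α v ↔
      ((Finset.univ.filter fun i => v i < v 0).card : ℝ) < (1 - α) * (M + 1) := by
  classical
  have hc0 : 0 < 1 - α := by linarith
  have hN : (0 : ℝ) < ((M : ℝ) + 1) := by positivity
  set S : Set ℝ := {x : ℝ | 1 - α ≤
      (({j : Fin (M + 1) | v j ≤ x}.ncard : ℝ)) / ((Fintype.card (Fin (M + 1)) : ℝ))} with hSdef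
  have hmem : ∀ x : ℝ, x ∈ S ↔
      (1 - α) * (M + 1) ≤ ((Finset.univ.filter fun j => v j ≤ x).card : ℝ) := by
    intro x
    rw [hSdef]
    simp only [Set.mem_setOf_eq, setOf_ncard_eq (fun j => v j ≤ x), Fintype.card_fin]
    push_cast
    exact le_div_iff₀ hN
  obtain ⟨j₀, -, hj₀⟩ := Finset.exists_max_image Finset.univ v ⟨0, Finset.mem_univ 0⟩
  have hSne : S.Nonempty := by
    refine ⟨v j₀, (hmem _).2 ?_⟩
    have : (Finset.univ.filter fun j => v j ≤ v j₀) = Finset.univ := by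
      apply Finset.filter_true_of_mem; intro i _; exact hj₀ i (Finset.mem_univ i)
    rw [this, Finset.card_univ, Fintype.card_fin]
    push_cast
    nlinarith
  obtain ⟨j₁, -, hj₁⟩ := Finset.exists_min_image Finset.univ v ⟨0, Finset.mem_univ 0⟩
  have hSbdd : BddBelow S := by
    refine ⟨v j₁, fun x hx => ?_⟩
    rw [hmem] at hx
    have hpos : (0 : ℝ) < ((Finset.univ.filter fun j => v j ≤ x).card : ℝ) := by nlinarith
    have : (Finset.univ.filter fun j => v j ≤ x).Nonempty := by
      rw [← Finset.card_pos]; exact_mod_cast hpos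
    obtain ⟨j, hj⟩ := this
    rw [Finset.mem_filter] at hj
    exact le_trans (hj₁ j (Finset.mem_univ j)) hj.2
  have hEQ : empQuantile α v = sInf S := rfl
  rw [hEQ, le_csInf_iff hSbdd hSne]
  constructor
  · intro h
    by_contra hK
    push_neg at hK
    have hKpos : (0:ℝ) < ((Finset.univ.filter fun i => v i < v 0).card : ℝ) := by nlinarith
    have hKne : (Finset.univ.filter fun i => v i < v 0).Nonempty := by
      rw [← Finset.card_pos]; exact_mod_cast hKpos
    obtain ⟨i₀, hi₀mem, hi₀⟩ := Finset.exists_max_image _ v hKne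
    rw [Finset.mem_filter] at hi₀mem
    have hsubset : (Finset.univ.filter fun i => v i < v 0) ⊆
        (Finset.univ.filter fun j => v j ≤ v i₀) := by
      intro i hi
      have hi' := hi
      rw [Finset.mem_filter] at hi' ⊢
      exact ⟨hi'.1, hi₀ i hi⟩
    have hcard := Finset.card_le_card hsubset
    have hx : v i₀ ∈ S := by
      rw [hmem]
      exact le_trans hK (by exact_mod_cast hcard)
    exact absurd (h _ hx) (not_le.2 hi₀mem.2)
  · intro hK x hx
    rw [hmem] at hx
    by_contra hlt
    push_neg at hlt
    have hsub : (Finset.univ.filter fun j => v j ≤ x) ⊆ (Finset.univ.filter fun i => v i < v 0) := by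
      intro i hi
      rw [Finset.mem_filter] at *
      exact ⟨hi.1, lt_of_le_of_lt hi.2 hlt⟩
    have := Finset.card_le_card hsub
    have : ((Finset.univ.filter fun j => v j ≤ x).card : ℝ)
        ≤ ((Finset.univ.filter fun i => v i < v 0).card : ℝ) := by exact_mod_cast this
    linarith

lemma count_ge {M : ℕ} {c : ℝ} (hc1 : c ≤ 1) (v : Fin (M + 1) → ℝ) :
    c * (M + 1) ≤ ((Finset.univ.filter fun j : Fin (M + 1) =>
      ((Finset.univ.filter fun i => v i < v j).card : ℝ) < c * (M + 1)).card : ℝ) := by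
  classical
  rcases le_or_gt c 0 with hc | hc
  · have hMn : (0:ℝ) < (M:ℝ) + 1 := by positivity
    have : c * ((M : ℝ) + 1) ≤ 0 := by nlinarith
    exact le_trans this (by positivity)
  have hN : (0 : ℝ) < ((M : ℝ) + 1) := by positivity
  set k := ⌈c * ((M : ℝ) + 1)⌉₊ with hk
  have hck : c * ((M : ℝ) + 1) ≤ k := Nat.le_ceil _
  have hk1 : 1 ≤ k := by
    rw [hk]; exact Nat.ceil_pos.mpr (by positivity)
  obtain ⟨j₀, -, hj₀⟩ := Finset.exists_max_image Finset.univ v ⟨0, Finset.mem_univ 0⟩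
  set T := (Finset.univ.image v).filter
      (fun x => k ≤ (Finset.univ.filter fun j => v j ≤ x).card) with hT
  have hTne : T.Nonempty := by
    refine ⟨v j₀, ?_⟩
    rw [hT, Finset.mem_filter]
    refine ⟨Finset.mem_image_of_mem v (Finset.mem_univ j₀), ?_⟩
    have : (Finset.univ.filter fun j => v j ≤ v j₀) = Finset.univ :=
      Finset.filter_true_of_mem (fun i _ => hj₀ i (Finset.mem_univ i))
    rw [this, Finset.card_univ, Fintype.card_fin]
    have : c * ((M : ℝ) + 1) ≤ 1 * ((M : ℝ) + 1) := by nlinarith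
    rw [hk]
    refine Nat.ceil_le.2 (by push_cast; linarith)
  set t := T.min' hTne with ht
  have htT : t ∈ T := T.min'_mem hTne
  rw [hT, Finset.mem_filter] at htT
  have ht1 : k ≤ (Finset.univ.filter fun j => v j ≤ t).card := htT.2
  have hlt : (Finset.univ.filter fun i => v i < t).card < k := by
    by_contra hcon
    push_neg at hcon
    have hne : (Finset.univ.filter fun i => v i < t).Nonempty := by
      rw [← Finset.card_pos]; omega
    obtain ⟨s₀, hs₀mem, hs₀⟩ := Finset.exists_max_image _ v hne
    rw [Finset.mem_filter] at hs₀mem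
    have hsT : v s₀ ∈ T := by
      rw [hT, Finset.mem_filter]
      refine ⟨Finset.mem_image_of_mem v (Finset.mem_univ s₀), le_trans hcon ?_⟩
      apply Finset.card_le_card
      intro i hi
      have hi' := hi
      rw [Finset.mem_filter] at hi' ⊢
      exact ⟨hi'.1, hs₀ i hi⟩
    have := T.min'_le _ hsT
    rw [← ht] at this
    exact absurd hs₀mem.2 (not_lt.2 this)
  have hsub : (Finset.univ.filter fun j => v j ≤ t) ⊆
      (Finset.univ.filter fun j : Fin (M + 1) =>
        ((Finset.univ.filter fun i => v i < v j).card : ℝ) < c * (M + 1)) := by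
    intro j hj
    rw [Finset.mem_filter] at *
    refine ⟨hj.1, ?_⟩
    have hsub2 : (Finset.univ.filter fun i => v i < v j) ⊆ (Finset.univ.filter fun i => v i < t) := by
      intro i hi
      rw [Finset.mem_filter] at *
      exact ⟨hi.1, lt_of_lt_of_le hi.2 hj.2⟩
    have h1 : (Finset.univ.filter fun i => v i < v j).card ≤ k - 1 := by
      have := Finset.card_le_card hsub2; omega
    have h2 : ((k : ℝ) - 1) < c * ((M : ℝ) + 1) := by
      have := Nat.ceil_lt_add_one (show (0:ℝ) ≤ c * ((M : ℝ) + 1) by positivity)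
      rw [← hk] at this; linarith
    have h3 : ((Finset.univ.filter fun i => v i < v j).card : ℝ) ≤ (k : ℝ) - 1 := by
      have hcast : ((Finset.univ.filter fun i => v i < v j).card : ℝ) ≤ ((k - 1 : ℕ) : ℝ) := by
        exact_mod_cast h1
      rw [Nat.cast_sub hk1] at hcast; simpa using hcast
    linarith
  have := Finset.card_le_card hsub
  have hfin : ((Finset.univ.filter fun j => v j ≤ t).card : ℝ) ≤
      ((Finset.univ.filter fun j : Fin (M + 1) =>
        ((Finset.univ.filter fun i => v i < v j).card : ℝ) < c * (M + 1)).card : ℝ) := by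
    exact_mod_cast this
  have hk' : (k : ℝ) ≤ ((Finset.univ.filter fun j => v j ≤ t).card : ℝ) := by exact_mod_cast ht1
  push_cast at *
  linarith

open scoped ENNReal
set_option linter.unusedSectionVars false

section MeasPart

variable {𝒢 𝒵t : Type*} [MeasurableSpace 𝒢] [MeasurableSpace 𝒵t] [Group 𝒢]

/-- `BB U ρt C w = U {g | ρt g w ∈ C}`. -/
noncomputable def BB (U : Measure 𝒢) (ρt : 𝒢 → 𝒵t → 𝒵t) (C : Set 𝒵t) (w : 𝒵t) : ℝ≥0∞ :=
  U {g | ρt g w ∈ C}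

variable {U : Measure 𝒢} [IsProbabilityMeasure U] {ρt : 𝒢 → 𝒵t → 𝒵t}

lemma BB_le_one {C : Set 𝒵t} (w : 𝒵t) : BB U ρt C w ≤ 1 := prob_le_one

lemma BB_ne_top {C : Set 𝒵t} (w : 𝒵t) : BB U ρt C w ≠ ⊤ :=
  (lt_of_le_of_lt (BB_le_one w) ENNReal.one_lt_top).ne

variable (hρt_meas : Measurable (fun p : 𝒢 × 𝒵t => ρt p.1 p.2))
include hρt_meas

lemma meas_orbit (w : 𝒵t) : Measurable (fun g => ρt g w) :=
  hρt_meas.comp (measurable_id.prodMk measurable_const)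

lemma meas_act (a : 𝒢) : Measurable (ρt a) :=
  hρt_meas.comp (measurable_const.prodMk measurable_id)

lemma BB_measurable {C : Set 𝒵t} (hC : MeasurableSet C) : Measurable (BB U ρt C) := by
  have h : MeasurableSet ((fun p : 𝒢 × 𝒵t => ρt p.1 p.2) ⁻¹' C) := hρt_meas hC
  exact measurable_measure_prodMk_right h

lemma BB_eq_lintegral {C : Set 𝒵t} (hC : MeasurableSet C) (w : 𝒵t) :
    BB U ρt C w = ∫⁻ g, C.indicator (fun _ => (1 : ℝ≥0∞)) (ρt g w) ∂U := by
  have h0 : BB U ρt C w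
      = ∫⁻ g, ({g : 𝒢 | ρt g w ∈ C}).indicator (fun _ => (1:ℝ≥0∞)) g ∂U :=
    (lintegral_indicator_one ((meas_orbit hρt_meas w) hC)).symm
  rw [h0]
  apply lintegral_congr
  intro g
  by_cases h : ρt g w ∈ C <;> simp [Set.indicator_apply, h]

variable (hU : ∀ g : 𝒢, Measure.map (fun h => g * h) U = U)
  (hmul : ∀ a : 𝒢, Measurable (fun g : 𝒢 => a * g))
  (hρt_mul : ∀ g g' : 𝒢, ρt (g * g') = ρt g ∘ ρt g')
include hU hmul hρt_mul

/-- substitution by left translation inside a `U`-integral along an orbit. -/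
lemma lintegral_left_translate {C : Set 𝒵t} (hC : MeasurableSet C) (a : 𝒢) (w : 𝒵t) :
    ∫⁻ g, C.indicator (fun _ => (1:ℝ≥0∞)) (ρt a (ρt g w)) ∂U
      = ∫⁻ g, C.indicator (fun _ => (1:ℝ≥0∞)) (ρt g w) ∂U := by
  have hφ : Measurable (fun g => C.indicator (fun _ => (1:ℝ≥0∞)) (ρt g w)) :=
    (measurable_const.indicator hC).comp (meas_orbit hρt_meas w)
  have h1 : ∀ g : 𝒢, ρt a (ρt g w) = ρt (a * g) w := by
    intro g; rw [hρt_mul a g]; rfl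
  calc ∫⁻ g, C.indicator (fun _ => (1:ℝ≥0∞)) (ρt a (ρt g w)) ∂U
      = ∫⁻ g, (fun h => C.indicator (fun _ => (1:ℝ≥0∞)) (ρt h w)) (a * g) ∂U := by
        simp_rw [h1]
    _ = ∫⁻ h, C.indicator (fun _ => (1:ℝ≥0∞)) (ρt h w) ∂(U.map (fun g => a * g)) :=
        (lintegral_map hφ (hmul a)).symm
    _ = ∫⁻ g, C.indicator (fun _ => (1:ℝ≥0∞)) (ρt g w) ∂U := by rw [hU a]

lemma BB_harmonic {C : Set 𝒵t} (hC : MeasurableSet C) (w : 𝒵t) :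
    ∫⁻ g, BB U ρt C (ρt g w) ∂U = BB U ρt C w := by
  have hmeas2 : Measurable (fun p : 𝒢 × 𝒢 => C.indicator (fun _ => (1:ℝ≥0∞)) (ρt p.2 (ρt p.1 w))) := by
    apply (measurable_const.indicator hC).comp
    exact hρt_meas.comp ((measurable_snd).prodMk ((meas_orbit hρt_meas w).comp measurable_fst))
  calc ∫⁻ g, BB U ρt C (ρt g w) ∂U
      = ∫⁻ g, ∫⁻ g', C.indicator (fun _ => (1:ℝ≥0∞)) (ρt g' (ρt g w)) ∂U ∂U := by
        exact lintegral_congr (fun g => BB_eq_lintegral hρt_meas hC (ρt g w))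
    _ = ∫⁻ g', ∫⁻ g, C.indicator (fun _ => (1:ℝ≥0∞)) (ρt g' (ρt g w)) ∂U ∂U :=
        lintegral_lintegral_swap hmeas2.aemeasurable
    _ = ∫⁻ _g', BB U ρt C w ∂U := by
        apply lintegral_congr; intro g'
        rw [lintegral_left_translate hρt_meas hU hmul hρt_mul hC g' w,
          ← BB_eq_lintegral hρt_meas hC w]
    _ = BB U ρt C w := by simp

omit hU hmul hρt_mul

variable {μt : Measure 𝒵t} [IsProbabilityMeasure μt]
  (hinvt : ∀ a : 𝒢, μt.map (ρt a) = μt)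
include hinvt

lemma act_map_prod : (U.prod μt).map (fun p : 𝒢 × 𝒵t => ρt p.1 p.2) = μt := by
  ext A hA
  rw [Measure.map_apply hρt_meas hA, Measure.prod_apply (hρt_meas hA)]
  have h1 : ∀ g : 𝒢, μt (Prod.mk g ⁻¹' ((fun p : 𝒢 × 𝒵t => ρt p.1 p.2) ⁻¹' A)) = μt A := by
    intro g
    have : (Prod.mk g ⁻¹' ((fun p : 𝒢 × 𝒵t => ρt p.1 p.2) ⁻¹' A)) = (ρt g) ⁻¹' A := rfl
    rw [this, ← Measure.map_apply (meas_act hρt_meas g) hA, hinvt g]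
  simp_rw [h1]
  simp

include hρt_meas hU hmul hρt_mul in
lemma BB_ae_eq {C : Set 𝒵t} (hC : MeasurableSet C) :
    ∀ᵐ p ∂(U.prod μt), BB U ρt C (ρt p.1 p.2) = BB U ρt C p.2 := by
  set B := BB U ρt C with hB
  have hBm : Measurable B := BB_measurable hρt_meas hC
  set X : 𝒢 × 𝒵t → ℝ := fun p => (B (ρt p.1 p.2)).toReal with hX
  set Y : 𝒢 × 𝒵t → ℝ := fun p => (B p.2).toReal with hY
  have hXm : Measurable X := (ENNReal.measurable_toReal).comp (hBm.comp hρt_meas)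
  have hYm : Measurable Y := (ENNReal.measurable_toReal).comp (hBm.comp measurable_snd)
  have hX01 : ∀ p, 0 ≤ X p ∧ X p ≤ 1 := fun p =>
    ⟨ENNReal.toReal_nonneg, ENNReal.toReal_le_of_le_ofReal zero_le_one (by simpa using BB_le_one _)⟩
  have hY01 : ∀ p, 0 ≤ Y p ∧ Y p ≤ 1 := fun p =>
    ⟨ENNReal.toReal_nonneg, ENNReal.toReal_le_of_le_ofReal zero_le_one (by simpa using BB_le_one _)⟩
  have hint : ∀ (f : 𝒢 × 𝒵t → ℝ), Measurable f → (∀ p, |f p| ≤ 1) →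
      Integrable f (U.prod μt) := by
    intro f hf hb
    exact (integrable_const (1:ℝ)).mono' hf.aestronglyMeasurable (Filter.Eventually.of_forall hb)
  have habs : ∀ a b : ℝ, 0 ≤ a → a ≤ 1 → 0 ≤ b → b ≤ 1 → |a * b| ≤ 1 := by
    intro a b ha ha1 hb hb1
    rw [abs_mul, abs_of_nonneg ha, abs_of_nonneg hb]; nlinarith
  have hintXX : Integrable (fun p => X p * X p) (U.prod μt) :=
    hint _ (hXm.mul hXm) (fun p => habs _ _ (hX01 p).1 (hX01 p).2 (hX01 p).1 (hX01 p).2)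
  have hintXY : Integrable (fun p => X p * Y p) (U.prod μt) :=
    hint _ (hXm.mul hYm) (fun p => habs _ _ (hX01 p).1 (hX01 p).2 (hY01 p).1 (hY01 p).2)
  have hintYY : Integrable (fun p => Y p * Y p) (U.prod μt) :=
    hint _ (hYm.mul hYm) (fun p => habs _ _ (hY01 p).1 (hY01 p).2 (hY01 p).1 (hY01 p).2)
  have hmap : (U.prod μt).map (fun p : 𝒢 × 𝒵t => ρt p.1 p.2) = μt :=
    act_map_prod hρt_meas hinvt
  set I : ℝ := ∫ w, (B w).toReal * (B w).toReal ∂μt with hI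
  have hBtm : Measurable (fun w => (B w).toReal * (B w).toReal) :=
    (ENNReal.measurable_toReal.comp hBm).mul (ENNReal.measurable_toReal.comp hBm)
  have hXX : ∫ p, X p * X p ∂(U.prod μt) = I := by
    have h2 := integral_map (μ := U.prod μt) hρt_meas.aemeasurable hBtm.aestronglyMeasurable
    rw [hmap] at h2
    rw [hI, h2]
  have hYY : ∫ p, Y p * Y p ∂(U.prod μt) = I := by
    have h2 := integral_map (μ := U.prod μt) measurable_snd.aemeasurable hBtm.aestronglyMeasurable
    rw [Measure.map_snd_prod, measure_univ, one_smul] at h2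
    rw [hI, h2]
  have hinnerB : ∀ w, ∫ g, (B (ρt g w)).toReal ∂U = (B w).toReal := by
    intro w
    have hfin : ∀ᵐ g ∂U, B (ρt g w) < ⊤ :=
      Filter.Eventually.of_forall (fun g => lt_of_le_of_lt (BB_le_one _) ENNReal.one_lt_top)
    have hmeasf : Measurable fun g => B (ρt g w) := hBm.comp (meas_orbit hρt_meas w)
    rw [integral_toReal hmeasf.aemeasurable hfin,
      BB_harmonic hρt_meas hU hmul hρt_mul hC w]
  have hXY : ∫ p, X p * Y p ∂(U.prod μt) = I := by
    rw [integral_prod_symm _ hintXY]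
    simp only [hX, hY]
    have : ∀ w, ∫ g, (B (ρt g w)).toReal * (B w).toReal ∂U
        = (B w).toReal * (B w).toReal := by
      intro w
      rw [integral_mul_const, hinnerB w]
    rw [hI]
    exact integral_congr_ae (Filter.Eventually.of_forall this)
  have hsq : ∫ p, (X p - Y p) ^ 2 ∂(U.prod μt) = 0 := by
    have hexp : ∀ p, (X p - Y p) ^ 2 = X p * X p - 2 * (X p * Y p) + Y p * Y p := by
      intro p; ring
    calc ∫ p, (X p - Y p) ^ 2 ∂(U.prod μt)
        = ∫ p, (X p * X p - 2 * (X p * Y p) + Y p * Y p) ∂(U.prod μt) := by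
          exact integral_congr_ae (Filter.Eventually.of_forall hexp)
      _ = (∫ p, (X p * X p - 2 * (X p * Y p)) ∂(U.prod μt)) + ∫ p, Y p * Y p ∂(U.prod μt) :=
          integral_add (hintXX.sub (hintXY.const_mul 2)) hintYY
      _ = (∫ p, X p * X p ∂(U.prod μt)) - (∫ p, 2 * (X p * Y p) ∂(U.prod μt)) + I := by
          rw [integral_sub hintXX (hintXY.const_mul 2), hYY]
      _ = I - 2 * I + I := by rw [hXX, integral_const_mul, hXY]
      _ = 0 := by ring
  have hae : (fun p => (X p - Y p) ^ 2) =ᵐ[U.prod μt] 0 := by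
    have hnn : 0 ≤ fun p => (X p - Y p) ^ 2 := fun p => sq_nonneg _
    have hintsq : Integrable (fun p => (X p - Y p) ^ 2) (U.prod μt) := by
      have : ∀ p, |(X p - Y p) ^ 2| ≤ 1 := by
        intro p
        rw [abs_of_nonneg (sq_nonneg _)]
        have := (hX01 p); have := (hY01 p)
        nlinarith [hX01 p, hY01 p]
      exact hint _ ((hXm.sub hYm).pow_const 2) this
    exact (integral_eq_zero_iff_of_nonneg hnn hintsq).1 hsq
  filter_upwards [hae] with p hp
  have hXYp : X p = Y p := by
    have h0 : (X p - Y p) ^ 2 = 0 := hp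
    have := pow_eq_zero_iff (n := 2) (by norm_num) |>.1 h0
    linarith [this]
  exact (ENNReal.toReal_eq_toReal_iff' (BB_ne_top _) (BB_ne_top _)).1 hXYp

include hρt_meas hU hmul hρt_mul hinvt in
lemma core_swap {M : ℕ} (C : Fin (M + 1) → Set 𝒵t) (hC : ∀ k, MeasurableSet (C k)) :
    ∫⁻ w, (C 0).indicator (fun _ => (1:ℝ≥0∞)) w * ∏ i : Fin M, BB U ρt (C i.succ) w ∂μt
      = ∫⁻ w, ∏ k : Fin (M + 1), BB U ρt (C k) w ∂μt := by
  have hact : Measurable (fun p : 𝒢 × 𝒵t => ρt p.1 p.2) := hρt_meas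
  have hBk : ∀ k : Fin (M + 1), Measurable (BB U ρt (C k)) :=
    fun k => BB_measurable hρt_meas (hC k)
  have hprod : Measurable (fun w => ∏ i : Fin M, BB U ρt (C i.succ) w) :=
    Finset.measurable_prod _ (fun i _ => hBk i.succ)
  have hf : Measurable (fun w => (C 0).indicator (fun _ => (1:ℝ≥0∞)) w
      * ∏ i : Fin M, BB U ρt (C i.succ) w) :=
    (measurable_const.indicator (hC 0)).mul hprod
  have hmap : (U.prod μt).map (fun p : 𝒢 × 𝒵t => ρt p.1 p.2) = μt :=
    act_map_prod hρt_meas hinvt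
  have step1 : ∫⁻ w, (C 0).indicator (fun _ => (1:ℝ≥0∞)) w
        * ∏ i : Fin M, BB U ρt (C i.succ) w ∂μt
      = ∫⁻ p : 𝒢 × 𝒵t, (C 0).indicator (fun _ => (1:ℝ≥0∞)) (ρt p.1 p.2)
        * ∏ i : Fin M, BB U ρt (C i.succ) (ρt p.1 p.2) ∂(U.prod μt) := by
    have h2 := lintegral_map (μ := U.prod μt) hf hact
    rw [hmap] at h2
    exact h2
  have step2 : ∫⁻ p : 𝒢 × 𝒵t, (C 0).indicator (fun _ => (1:ℝ≥0∞)) (ρt p.1 p.2)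
        * ∏ i : Fin M, BB U ρt (C i.succ) (ρt p.1 p.2) ∂(U.prod μt)
      = ∫⁻ p : 𝒢 × 𝒵t, (C 0).indicator (fun _ => (1:ℝ≥0∞)) (ρt p.1 p.2)
        * ∏ i : Fin M, BB U ρt (C i.succ) p.2 ∂(U.prod μt) := by
    apply lintegral_congr_ae
    have h : ∀ᵐ p ∂(U.prod μt), ∀ i : Fin M,
        BB U ρt (C i.succ) (ρt p.1 p.2) = BB U ρt (C i.succ) p.2 :=
      (MeasureTheory.ae_all_iff).2
        (fun i => BB_ae_eq hρt_meas hU hmul hρt_mul hinvt (hC i.succ))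
    filter_upwards [h] with p hp
    rw [Finset.prod_congr rfl (fun i _ => hp i)]
  have step3 : ∫⁻ p : 𝒢 × 𝒵t, (C 0).indicator (fun _ => (1:ℝ≥0∞)) (ρt p.1 p.2)
        * ∏ i : Fin M, BB U ρt (C i.succ) p.2 ∂(U.prod μt)
      = ∫⁻ w, ∫⁻ g, (C 0).indicator (fun _ => (1:ℝ≥0∞)) (ρt g w)
        * ∏ i : Fin M, BB U ρt (C i.succ) w ∂U ∂μt := by
    apply lintegral_prod_symm
    exact (((measurable_const.indicator (hC 0)).comp hact).mul
      (hprod.comp measurable_snd)).aemeasurable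
  have step4 : ∫⁻ w, ∫⁻ g, (C 0).indicator (fun _ => (1:ℝ≥0∞)) (ρt g w)
        * ∏ i : Fin M, BB U ρt (C i.succ) w ∂U ∂μt
      = ∫⁻ w, ∏ k : Fin (M + 1), BB U ρt (C k) w ∂μt := by
    apply lintegral_congr
    intro w
    have hind : Measurable fun g => (C 0).indicator (fun _ => (1:ℝ≥0∞)) (ρt g w) :=
      (measurable_const.indicator (hC 0)).comp (meas_orbit hρt_meas w)
    rw [lintegral_mul_const _ hind, ← BB_eq_lintegral hρt_meas (hC 0) w,
      Fin.prod_univ_succ]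
  rw [step1, step2, step3, step4]

end MeasPart

/-- validity of the Monte Carlo SymmPI quantile: if `Z` is
𝒢-distributionally invariant, `V` is 𝒢-distributionally equivariant, and
`G_1, …, G_M` are i.i.d. `~ U` independent of `Z`, then with
`t̃_{z̃} := Q_{1−α}(ψ(z̃), ψ(ρ̃(G_1)z̃), …, ψ(ρ̃(G_M)z̃))` we have
`P(ψ(V(Z)) ≤ t̃_{V(Z)}) ≥ 1 − α`. -/
theorem stmt10
    {Ω 𝒢 𝒵 𝒵t : Type*} [MeasurableSpace Ω] [MeasurableSpace 𝒢] [MeasurableSpace 𝒵]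
    [MeasurableSpace 𝒵t]
    [Group 𝒢] [TopologicalSpace 𝒢] [IsTopologicalGroup 𝒢] [CompactSpace 𝒢] [T2Space 𝒢]
    [BorelSpace 𝒢]
    (P : Measure Ω) [IsProbabilityMeasure P]
    (U : Measure 𝒢) [IsProbabilityMeasure U]
    (hU : ∀ g : 𝒢, Measure.map (fun h => g * h) U = U)
    (ρ : 𝒢 → 𝒵 → 𝒵)
    (hρ_one : ρ 1 = id)
    (hρ_mul : ∀ g g' : 𝒢, ρ (g * g') = ρ g ∘ ρ g')
    (hρ_meas : Measurable (fun p : 𝒢 × 𝒵 => ρ p.1 p.2))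
    (ρt : 𝒢 → 𝒵t → 𝒵t)
    (hρt_one : ρt 1 = id)
    (hρt_mul : ∀ g g' : 𝒢, ρt (g * g') = ρt g ∘ ρt g')
    (hρt_meas : Measurable (fun p : 𝒢 × 𝒵t => ρt p.1 p.2))
    (V : 𝒵 → 𝒵t) (hV : Measurable V)
    (ψ : 𝒵t → ℝ) (hψ : Measurable ψ)
    (hψρ : Measurable (fun p : 𝒢 × 𝒵t => ψ (ρt p.1 p.2)))
    (α : ℝ) (hα : α ∈ Set.Icc (0 : ℝ) 1)
    (Zv : Ω → 𝒵) (hZ : Measurable Zv)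
    -- `G ~ U` independent of `Z`, witnessing the distributional invariance/equivariance
    (Gv : Ω → 𝒢) (hG : Measurable Gv)
    (hGlaw : Measure.map Gv P = U)
    (hGindep : IndepFun Gv Zv P)
    (hinv : Measure.map (fun ω => ρ (Gv ω) (Zv ω)) P = Measure.map Zv P)
    (hequiv : Measure.map (fun ω => V (ρ (Gv ω) (Zv ω))) P
        = Measure.map (fun ω => ρt (Gv ω) (V (Zv ω))) P)
    -- the Monte Carlo sample `G_1, …, G_M`: i.i.d. with law `U`, independent of `Z`
    (M : ℕ) (Gs : Fin M → Ω → 𝒢) (hGs : ∀ i, Measurable (Gs i))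
    (hGslaw : ∀ i, Measure.map (Gs i) P = U)
    (hGsiid : iIndepFun Gs P)
    (hGsindepZ : IndepFun (fun ω => fun i : Fin M => Gs i ω) Zv P) :
    1 - α ≤ (P {ω | ψ (V (Zv ω)) ≤
        empQuantile α (Fin.cons (ψ (V (Zv ω)))
          (fun i : Fin M => ψ (ρt (Gs i ω) (V (Zv ω)))))}).toReal := by
  classical
  rcases le_or_gt (1 - α) 0 with hα1 | hc0
  · exact le_trans hα1 ENNReal.toReal_nonneg
  have hα1 : α < 1 := by linarith
  have hα0 : 0 ≤ α := hα.1
  -- laws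
  set μ : Measure 𝒵 := P.map Zv with hμ
  haveI : IsProbabilityMeasure μ := Measure.isProbabilityMeasure_map hZ.aemeasurable
  set μt : Measure 𝒵t := μ.map V with hμtdef
  haveI : IsProbabilityMeasure μt := Measure.isProbabilityMeasure_map hV.aemeasurable
  have hmul : ∀ a : 𝒢, Measurable (fun g : 𝒢 => a * g) :=
    fun a => (continuous_mul_left a).measurable
  -- pair law of (Gv, Zv)
  have hpairGZ : P.map (fun ω => (Gv ω, Zv ω)) = U.prod μ := by
    rw [hμ, ← hGlaw]
    exact (indepFun_iff_map_prod_eq_prod_map_map hG.aemeasurable hZ.aemeasurable).1 hGindep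
  have hGZmeas : Measurable (fun ω => (Gv ω, Zv ω)) := hG.prodMk hZ
  have hinv' : (U.prod μ).map (fun p : 𝒢 × 𝒵 => ρ p.1 p.2) = μ := by
    rw [← hpairGZ, Measure.map_map hρ_meas hGZmeas]
    exact hinv
  have hVρ_meas : Measurable (fun p : 𝒢 × 𝒵 => V (ρ p.1 p.2)) := hV.comp hρ_meas
  have hρtV_meas : Measurable (fun p : 𝒢 × 𝒵 => ρt p.1 (V p.2)) :=
    hρt_meas.comp (measurable_fst.prodMk (hV.comp measurable_snd))
  have hequiv' : (U.prod μ).map (fun p : 𝒢 × 𝒵 => V (ρ p.1 p.2))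
      = (U.prod μ).map (fun p : 𝒢 × 𝒵 => ρt p.1 (V p.2)) := by
    rw [← hpairGZ, Measure.map_map hVρ_meas hGZmeas, Measure.map_map hρtV_meas hGZmeas]
    exact hequiv
  have hμt : μt = (U.prod μ).map (fun p : 𝒢 × 𝒵 => ρt p.1 (V p.2)) := by
    have h1 : μt = ((U.prod μ).map (fun p : 𝒢 × 𝒵 => ρ p.1 p.2)).map V := by
      rw [hinv']
    rw [h1, Measure.map_map hV hρ_meas]
    exact hequiv'
  -- pointwise invariance of μt
  have hinvt : ∀ a : 𝒢, μt.map (ρt a) = μt := by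
    intro a
    have h1 : μt.map (ρt a) = (U.prod μ).map ((ρt a) ∘ (fun p : 𝒢 × 𝒵 => ρt p.1 (V p.2))) := by
      rw [hμt, Measure.map_map (meas_act hρt_meas a) hρtV_meas]
    have h2 : ((ρt a) ∘ (fun p : 𝒢 × 𝒵 => ρt p.1 (V p.2)))
        = (fun p : 𝒢 × 𝒵 => ρt p.1 (V p.2)) ∘ (Prod.map (fun g => a * g) id) := by
      funext p
      show ρt a (ρt p.1 (V p.2)) = ρt (a * p.1) (V p.2)
      rw [hρt_mul a p.1]
      rfl
    have h3 : (U.prod μ).map (Prod.map (fun g : 𝒢 => a * g) (id : 𝒵 → 𝒵)) = U.prod μ := by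
      rw [← Measure.map_prod_map _ _ (hmul a) measurable_id, hU a, Measure.map_id]
    rw [h1, h2, ← Measure.map_map hρtV_meas ((hmul a).prodMap measurable_id), h3, ← hμt]
  -- law of the tuple (Gs i)
  have htuplemeas : Measurable (fun ω => fun i : Fin M => Gs i ω) :=
    measurable_pi_iff.2 (fun i => hGs i)
  have htuple : P.map (fun ω => fun i : Fin M => Gs i ω) = Measure.pi (fun _ : Fin M => U) := by
    symm
    apply Measure.pi_eq
    intro s hs
    rw [Measure.map_apply htuplemeas (MeasurableSet.univ_pi hs)]
    have hpre : (fun ω => fun i : Fin M => Gs i ω) ⁻¹' (Set.univ.pi s)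
        = ⋂ i ∈ Finset.univ, Gs i ⁻¹' s i := by
      ext ω; simp [Set.mem_univ_pi]
    rw [hpre, (iIndepFun_iff_measure_inter_preimage_eq_mul.1 hGsiid) Finset.univ
      (fun i _ => hs i)]
    apply Finset.prod_congr rfl
    intro i _
    rw [← Measure.map_apply (hGs i) (hs i), hGslaw i]
  haveI : IsProbabilityMeasure (Measure.pi (fun _ : Fin M => U)) := by infer_instance
  set piU : Measure (Fin M → 𝒢) := Measure.pi (fun _ : Fin M => U) with hpiU
  have hpairGsZ : P.map (fun ω => ((fun i : Fin M => Gs i ω), Zv ω)) = piU.prod μ := by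
    rw [hμ, ← htuple]
    exact (indepFun_iff_map_prod_eq_prod_map_map htuplemeas.aemeasurable
      hZ.aemeasurable).1 hGsindepZ
  -- the random vector
  set TT : Ω → (Fin (M + 1) → ℝ) := fun ω => Fin.cons (ψ (V (Zv ω)))
    (fun i : Fin M => ψ (ρt (Gs i ω) (V (Zv ω)))) with hTTdef
  set Φ : (Fin M → 𝒢) × 𝒵 → (Fin (M + 1) → ℝ) := fun p => Fin.cons (ψ (V p.2))
    (fun i : Fin M => ψ (ρt (p.1 i) (V p.2))) with hΦdef
  have hΦmeas : Measurable Φ := by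
    rw [hΦdef]
    apply measurable_pi_iff.2
    intro k
    induction k using Fin.cases with
    | zero => simp only [Fin.cons_zero]; exact hψ.comp (hV.comp measurable_snd)
    | succ i =>
      simp only [Fin.cons_succ]
      have hp : Measurable (fun p : (Fin M → 𝒢) × 𝒵 => ((p.1 i, V p.2) : 𝒢 × 𝒵t)) :=
        ((measurable_pi_apply i).comp measurable_fst).prodMk (hV.comp measurable_snd)
      exact hψρ.comp hp
  have hTTeq : TT = Φ ∘ (fun ω => ((fun i : Fin M => Gs i ω), Zv ω)) := rfl
  have hTTmeas : Measurable TT := by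
    rw [hTTeq]; exact hΦmeas.comp (htuplemeas.prodMk hZ)
  have hLdef : P.map TT = (piU.prod μ).map Φ := by
    rw [hTTeq, ← Measure.map_map hΦmeas (htuplemeas.prodMk hZ), hpairGsZ]
  haveI : IsProbabilityMeasure (P.map TT) := Measure.isProbabilityMeasure_map hTTmeas.aemeasurable
  -- key rectangle formula
  have key : ∀ A : Fin (M + 1) → Set ℝ, (∀ k, MeasurableSet (A k)) →
      (P.map TT) (Set.univ.pi A) = ∫⁻ w, ∏ k : Fin (M + 1), BB U ρt (ψ ⁻¹' (A k)) w ∂μt := by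
    intro A hA
    rw [hLdef, Measure.map_apply hΦmeas (MeasurableSet.univ_pi hA),
      Measure.prod_apply_symm (hΦmeas (MeasurableSet.univ_pi hA))]
    have hfib : ∀ z : 𝒵, piU ((fun gs => (gs, z)) ⁻¹' (Φ ⁻¹' Set.univ.pi A))
        = (ψ ⁻¹' (A 0)).indicator (fun _ => (1 : ℝ≥0∞)) (V z)
          * ∏ i : Fin M, BB U ρt (ψ ⁻¹' (A i.succ)) (V z) := by
      intro z
      have hset : ((fun gs => (gs, z)) ⁻¹' (Φ ⁻¹' Set.univ.pi A))
          = {gs : Fin M → 𝒢 | ψ (V z) ∈ A 0 ∧ ∀ i : Fin M, ψ (ρt (gs i) (V z)) ∈ A i.succ} := by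
        ext gs
        simp only [Set.mem_preimage, Set.mem_univ_pi, hΦdef, Set.mem_setOf_eq]
        rw [Fin.forall_fin_succ]
        simp [Fin.cons_zero, Fin.cons_succ]
      rw [hset]
      by_cases h0 : ψ (V z) ∈ A 0
      · have hset2 : {gs : Fin M → 𝒢 | ψ (V z) ∈ A 0
            ∧ ∀ i : Fin M, ψ (ρt (gs i) (V z)) ∈ A i.succ}
            = Set.univ.pi (fun i : Fin M => {g : 𝒢 | ψ (ρt g (V z)) ∈ A i.succ}) := by
          ext gs; simp [Set.mem_univ_pi, h0]
        rw [hset2, hpiU, Measure.pi_pi]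
        rw [Set.indicator_of_mem (by exact h0) (fun _ => (1:ℝ≥0∞)), one_mul]
        rfl
      · have hset2 : {gs : Fin M → 𝒢 | ψ (V z) ∈ A 0
            ∧ ∀ i : Fin M, ψ (ρt (gs i) (V z)) ∈ A i.succ} = (∅ : Set (Fin M → 𝒢)) := by
          ext gs; simp [h0]
        rw [hset2, Set.indicator_of_notMem (by exact h0) (fun _ => (1:ℝ≥0∞)), zero_mul]
        simp
      -- end hfib
    calc ∫⁻ z, piU ((fun gs => (gs, z)) ⁻¹' (Φ ⁻¹' Set.univ.pi A)) ∂μ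
        = ∫⁻ z, (ψ ⁻¹' (A 0)).indicator (fun _ => (1 : ℝ≥0∞)) (V z)
            * ∏ i : Fin M, BB U ρt (ψ ⁻¹' (A i.succ)) (V z) ∂μ :=
          lintegral_congr hfib
      _ = ∫⁻ w, (ψ ⁻¹' (A 0)).indicator (fun _ => (1 : ℝ≥0∞)) w
            * ∏ i : Fin M, BB U ρt (ψ ⁻¹' (A i.succ)) w ∂μt := by
          have hfm : Measurable (fun w : 𝒵t => (ψ ⁻¹' (A 0)).indicator (fun _ => (1:ℝ≥0∞)) w
              * ∏ i : Fin M, BB U ρt (ψ ⁻¹' (A i.succ)) w) :=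
            (measurable_const.indicator (hψ (hA 0))).mul
              (Finset.measurable_prod _ (fun i _ => BB_measurable hρt_meas (hψ (hA i.succ))))
          have h2 := lintegral_map (μ := μ) hfm hV
          rw [← hμtdef] at h2
          exact h2.symm
      _ = ∫⁻ w, ∏ k : Fin (M + 1), BB U ρt (ψ ⁻¹' (A k)) w ∂μt :=
          core_swap hρt_meas hU hmul hρt_mul hinvt _ (fun k => hψ (hA k))
  -- permutation invariance of the law of TT
  have hperm : ∀ σ : Equiv.Perm (Fin (M + 1)),
      (P.map TT).map (fun v : Fin (M + 1) → ℝ => v ∘ σ) = P.map TT := by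
    intro σ
    have hcm : Measurable (fun v : Fin (M + 1) → ℝ => v ∘ σ) :=
      measurable_pi_iff.2 (fun k => measurable_pi_apply (σ k))
    haveI : IsProbabilityMeasure ((P.map TT).map (fun v : Fin (M + 1) → ℝ => v ∘ σ)) :=
      Measure.isProbabilityMeasure_map hcm.aemeasurable
    apply ext_of_generate_finite _ generateFrom_pi.symm isPiSystem_pi
    · rintro _ ⟨A, hA, rfl⟩
      have hA' : ∀ k, MeasurableSet (A k) := fun k => hA k (Set.mem_univ k)
      rw [Measure.map_apply hcm (MeasurableSet.univ_pi hA')]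
      have hpre : (fun v : Fin (M + 1) → ℝ => v ∘ σ) ⁻¹' (Set.univ.pi A)
          = Set.univ.pi (fun k => A (σ.symm k)) := by
        ext v
        simp only [Set.mem_preimage, Set.mem_univ_pi, Function.comp_apply]
        constructor
        · intro h k
          simpa using h (σ.symm k)
        · intro h k
          simpa using h (σ k)
      rw [hpre, key _ (fun k => hA' (σ.symm k)), key _ hA']
      apply lintegral_congr
      intro w
      exact Equiv.prod_comp σ.symm (fun k => BB U ρt (ψ ⁻¹' (A k)) w)
    · simp
  -- the target set
  set c : ℝ := 1 - α with hc
  have hcountmeas : Measurable (fun v : Fin (M + 1) → ℝ =>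
      ((Finset.univ.filter fun i => v i < v 0).card : ℝ)) := by
    have heq : (fun v : Fin (M + 1) → ℝ => ((Finset.univ.filter fun i => v i < v 0).card : ℝ))
        = fun v => ∑ i : Fin (M + 1), if v i < v 0 then (1 : ℝ) else 0 := by
      funext v
      rw [Finset.card_filter]
      push_cast
      rfl
    rw [heq]
    apply Finset.measurable_sum
    intro i _
    exact Measurable.ite (measurableSet_lt (measurable_pi_apply i) (measurable_pi_apply 0))
      measurable_const measurable_const
  set S : Set (Fin (M + 1) → ℝ) := {v | ((Finset.univ.filter fun i => v i < v 0).card : ℝ)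
      < c * (M + 1)} with hSdef
  have hSmeas : MeasurableSet S := by
    have : S = (fun v : Fin (M + 1) → ℝ =>
        ((Finset.univ.filter fun i => v i < v 0).card : ℝ)) ⁻¹' (Set.Iio (c * (M + 1))) := rfl
    rw [this]
    exact hcountmeas (measurableSet_Iio)
  -- rewrite the event
  have hev : {ω | ψ (V (Zv ω)) ≤ empQuantile α (Fin.cons (ψ (V (Zv ω)))
      (fun i : Fin M => ψ (ρt (Gs i ω) (V (Zv ω)))))} = TT ⁻¹' S := by
    ext ω
    simp only [Set.mem_setOf_eq, Set.mem_preimage, hSdef]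
    have h0 : TT ω 0 = ψ (V (Zv ω)) := by simp [hTTdef]
    rw [← h0]
    exact quantile_le_iff hα0 hα1 (TT ω)
  rw [hev, ← Measure.map_apply hTTmeas hSmeas]
  -- swap sets
  set Sj : Fin (M + 1) → Set (Fin (M + 1) → ℝ) := fun j =>
    (fun v : Fin (M + 1) → ℝ => v ∘ (Equiv.swap 0 j)) ⁻¹' S with hSjdef
  have hcm : ∀ j : Fin (M + 1), Measurable (fun v : Fin (M + 1) → ℝ => v ∘ (Equiv.swap 0 j)) :=
    fun j => measurable_pi_iff.2 (fun k => measurable_pi_apply _)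
  have hSjmeas : ∀ j, MeasurableSet (Sj j) := by
    intro j
    exact (hcm j) hSmeas
  have hSjval : ∀ j, (P.map TT) (Sj j) = (P.map TT) S := by
    intro j
    rw [hSjdef]
    have hpj := hperm (Equiv.swap 0 j)
    conv_rhs => rw [← hpj]
    rw [Measure.map_apply (hcm j) hSmeas]
  have hSjmem : ∀ (v : Fin (M + 1) → ℝ) (j : Fin (M + 1)),
      v ∈ Sj j ↔ ((Finset.univ.filter fun i => v i < v j).card : ℝ) < c * (M + 1) := by
    intro v j
    have hcard : (Finset.univ.filter fun i => v (Equiv.swap 0 j i) < v (Equiv.swap 0 j 0)).card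
        = (Finset.univ.filter fun i => v i < v j).card := by
      have h1 : ∀ i, (if v (Equiv.swap 0 j i) < v j then 1 else 0)
          = (fun i => if v i < v j then (1:ℕ) else 0) (Equiv.swap 0 j i) := fun i => rfl
      rw [Finset.card_filter, Finset.card_filter]
      simp only [Equiv.swap_apply_left]
      rw [show (∑ i : Fin (M+1), if v (Equiv.swap 0 j i) < v j then (1:ℕ) else 0)
        = ∑ i : Fin (M+1), (fun i => if v i < v j then (1:ℕ) else 0) (Equiv.swap 0 j i) from rfl]
      exact Equiv.sum_comp (Equiv.swap 0 j) (fun i => if v i < v j then (1:ℕ) else 0)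
    simp only [hSjdef, Set.mem_preimage, hSdef, Set.mem_setOf_eq, Function.comp_apply]
    rw [hcard]
  -- counting bound
  have hsum : ENNReal.ofReal (c * (M + 1)) ≤ ∑ j : Fin (M + 1), (P.map TT) (Sj j) := by
    have h1 : ∑ j : Fin (M + 1), (P.map TT) (Sj j)
        = ∫⁻ v, ∑ j : Fin (M + 1), (Sj j).indicator (fun _ => (1:ℝ≥0∞)) v ∂(P.map TT) := by
      rw [lintegral_finset_sum _ (fun j _ => measurable_const.indicator (hSjmeas j))]
      exact Finset.sum_congr rfl (fun j _ => (lintegral_indicator_one (hSjmeas j)).symm)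
    rw [h1]
    have h2 : ∀ v : Fin (M + 1) → ℝ, ENNReal.ofReal (c * (M + 1))
        ≤ ∑ j : Fin (M + 1), (Sj j).indicator (fun _ => (1:ℝ≥0∞)) v := by
      intro v
      have h3 : ∑ j : Fin (M + 1), (Sj j).indicator (fun _ => (1:ℝ≥0∞)) v
          = ((Finset.univ.filter fun j => v ∈ Sj j).card : ℝ≥0∞) := by
        rw [Finset.card_filter]
        push_cast
        apply Finset.sum_congr rfl
        intro j _
        by_cases h : v ∈ Sj j <;> simp [Set.indicator_apply, h]
      rw [h3]
      have h4 : c * (M + 1) ≤ ((Finset.univ.filter fun j => v ∈ Sj j).card : ℝ) := by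
        have h5 : (Finset.univ.filter fun j => v ∈ Sj j)
            = (Finset.univ.filter fun j : Fin (M + 1) =>
              ((Finset.univ.filter fun i => v i < v j).card : ℝ) < c * (M + 1)) := by
          apply Finset.filter_congr
          intro j _
          simp [hSjmem v j]
        rw [h5]
        exact count_ge (by linarith : c ≤ 1) v
      calc ENNReal.ofReal (c * (M + 1))
          ≤ ENNReal.ofReal ((Finset.univ.filter fun j => v ∈ Sj j).card : ℝ) :=
            ENNReal.ofReal_le_ofReal h4
        _ = ((Finset.univ.filter fun j => v ∈ Sj j).card : ℝ≥0∞) := ENNReal.ofReal_natCast _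
    calc ENNReal.ofReal (c * (M + 1))
        = ∫⁻ _, ENNReal.ofReal (c * (M + 1)) ∂(P.map TT) := by simp
      _ ≤ ∫⁻ v, ∑ j : Fin (M + 1), (Sj j).indicator (fun _ => (1:ℝ≥0∞)) v ∂(P.map TT) :=
          lintegral_mono h2
  -- combine
  have hfinal : ENNReal.ofReal (c * (M + 1)) ≤ ((M + 1 : ℕ) : ℝ≥0∞) * (P.map TT) S := by
    calc ENNReal.ofReal (c * (M + 1)) ≤ ∑ j : Fin (M + 1), (P.map TT) (Sj j) := hsum
      _ = ∑ _j : Fin (M + 1), (P.map TT) S := Finset.sum_congr rfl (fun j _ => hSjval j)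
      _ = ((M + 1 : ℕ) : ℝ≥0∞) * (P.map TT) S := by
          rw [Finset.sum_const, Finset.card_univ, Fintype.card_fin, nsmul_eq_mul]
  have hne : ((M + 1 : ℕ) : ℝ≥0∞) * (P.map TT) S ≠ ⊤ := by
    apply ENNReal.mul_ne_top (ENNReal.natCast_ne_top _)
    exact (lt_of_le_of_lt prob_le_one ENNReal.one_lt_top).ne
  have hto := ENNReal.toReal_mono hne hfinal
  rw [ENNReal.toReal_ofReal (by positivity), ENNReal.toReal_mul, ENNReal.toReal_natCast] at hto
  have hMpos : (0:ℝ) < (M + 1 : ℕ) := by positivity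
  have : c ≤ ((P.map TT) S).toReal := by
    have hcast : ((M + 1 : ℕ) : ℝ) = (M : ℝ) + 1 := by push_cast; ring
    rw [hcast] at hto
    nlinarith [hto]
  exact this
end

section
/- (Fiber characterization of distributional equivariance on orbits, finite groups.) Let 𝒢 be a finite group acting on sets 𝒵 (via ρ) and 𝒵̃ (via ρ̃). Fix z ∈ 𝒵 and z̃ ∈ 𝒵̃, let O_z := {ρ(g)z : g ∈ 𝒢} and Õ_{z̃} := {ρ̃(g)z̃ : g ∈ 𝒢} be their orbits, and let V : O_z → Õ_{z̃} be a map with V(z) = z̃. Let G be uniformly distributed on 𝒢. Then V(ρ(G)z) =_d ρ̃(G)z̃ if and only if the fiber cardinality |V^{-1}({ρ̃(g)z̃})| is the same for all g ∈ 𝒢, in which case this common cardinality equals |Stab_ρ̃(z̃)|/|Stab_ρ(z)|, where Stab_ρ(z) := {g ∈ 𝒢 : ρ(g)z = z} and Stab_ρ̃(z̃) := {g ∈ 𝒢 : ρ̃(g)z̃ = z̃}. -/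
open scoped ENNReal

/-- fiber characterization of distributional equivariance on orbits, finite
groups: for `V : O_z → Õ_{z̃}` with `V(z) = z̃` and `G` uniform on the finite group `𝒢`,
`V(ρ(G)z) =_d ρ̃(G)z̃` iff the fibers `V⁻¹({ρ̃(g)z̃})` all have the same cardinality, in
which case this common cardinality equals `|Stab_ρ̃(z̃)| / |Stab_ρ(z)|`. -/
theorem stmt15
    {𝒢 𝒵 𝒵t : Type*} [Group 𝒢] [Fintype 𝒢]
    (ρ : 𝒢 → 𝒵 → 𝒵)
    (hρ_one : ρ 1 = id)
    (hρ_mul : ∀ g g' : 𝒢, ρ (g * g') = ρ g ∘ ρ g')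
    (ρt : 𝒢 → 𝒵t → 𝒵t)
    (hρt_one : ρt 1 = id)
    (hρt_mul : ∀ g g' : 𝒢, ρt (g * g') = ρt g ∘ ρt g')
    (z : 𝒵) (zt : 𝒵t)
    -- `V` is a map from the orbit of `z` to the orbit of `z̃` with `V z = z̃`
    (V : 𝒵 → 𝒵t)
    (hVorb : ∀ w : 𝒵, (∃ g : 𝒢, ρ g z = w) → ∃ g : 𝒢, ρt g zt = V w)
    (hVz : V z = zt) :
    ((PMF.map (fun g : 𝒢 => V (ρ g z)) (PMF.uniformOfFintype 𝒢)
        = PMF.map (fun g : 𝒢 => ρt g zt) (PMF.uniformOfFintype 𝒢)) ↔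
      (∀ g g' : 𝒢,
        {w : 𝒵 | (∃ g₀ : 𝒢, ρ g₀ z = w) ∧ V w = ρt g zt}.ncard
          = {w : 𝒵 | (∃ g₀ : 𝒢, ρ g₀ z = w) ∧ V w = ρt g' zt}.ncard)) ∧
    ((PMF.map (fun g : 𝒢 => V (ρ g z)) (PMF.uniformOfFintype 𝒢)
        = PMF.map (fun g : 𝒢 => ρt g zt) (PMF.uniformOfFintype 𝒢)) →
      ∀ g : 𝒢,
        {w : 𝒵 | (∃ g₀ : 𝒢, ρ g₀ z = w) ∧ V w = ρt g zt}.ncard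
          = {g' : 𝒢 | ρt g' zt = zt}.ncard / {g' : 𝒢 | ρ g' z = z}.ncard) := by
  classical
  have : Nonempty 𝒢 := ⟨1⟩
  -- basic action identities
  have hact : ∀ (g : 𝒢) (w : 𝒵), ρ g⁻¹ (ρ g w) = w := by
    intro g w
    have := congrFun (hρ_mul g⁻¹ g) w
    simp only [Function.comp_apply] at this
    rw [← this, inv_mul_cancel, hρ_one, id]
  have hactt : ∀ (g : 𝒢) (w : 𝒵t), ρt g⁻¹ (ρt g w) = w := by
    intro g w
    have := congrFun (hρt_mul g⁻¹ g) w
    simp only [Function.comp_apply] at this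
    rw [← this, inv_mul_cancel, hρt_one, id]
  have hmul : ∀ (g g' : 𝒢) (w : 𝒵), ρ (g * g') w = ρ g (ρ g' w) := fun g g' w =>
    congrFun (hρ_mul g g') w
  have hmult : ∀ (g g' : 𝒢) (w : 𝒵t), ρt (g * g') w = ρt g (ρt g' w) := fun g g' w =>
    congrFun (hρt_mul g g') w
  -- stabilizer cardinalities
  set Sz : ℕ := (Finset.univ.filter fun g : 𝒢 => ρ g z = z).card with hSzdef
  set St : ℕ := (Finset.univ.filter fun g : 𝒢 => ρt g zt = zt).card with hStdef
  have hSzpos : 0 < Sz := by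
    rw [hSzdef]
    refine Finset.card_pos.2 ⟨1, ?_⟩
    simp [hρ_one]
  -- orbit-stabilizer counts
  have lem0 : ∀ g₀ : 𝒢, (Finset.univ.filter fun g : 𝒢 => ρ g z = ρ g₀ z).card = Sz := by
    intro g₀
    rw [hSzdef]
    apply Finset.card_bij' (fun g _ => g₀⁻¹ * g) (fun g _ => g₀ * g)
    · intro a ha
      simp only [Finset.mem_filter, Finset.mem_univ, true_and] at ha ⊢
      rw [hmul, ha, hact]
    · intro a ha
      simp only [Finset.mem_filter, Finset.mem_univ, true_and] at ha ⊢
      rw [hmul, ha]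
    · intro a _; group
    · intro a _; group
  have lem0t : ∀ g₀ : 𝒢, (Finset.univ.filter fun g : 𝒢 => ρt g zt = ρt g₀ zt).card = St := by
    intro g₀
    rw [hStdef]
    apply Finset.card_bij' (fun g _ => g₀⁻¹ * g) (fun g _ => g₀ * g)
    · intro a ha
      simp only [Finset.mem_filter, Finset.mem_univ, true_and] at ha ⊢
      rw [hmult, ha, hactt]
    · intro a ha
      simp only [Finset.mem_filter, Finset.mem_univ, true_and] at ha ⊢
      rw [hmult, ha]
    · intro a _; group
    · intro a _; group
  -- fiber finsets
  set Fb : 𝒵t → Finset 𝒵 := fun t =>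
    (Finset.image (fun g : 𝒢 => ρ g z) Finset.univ).filter (fun w => V w = t) with hFbdef
  have hFbset : ∀ t : 𝒵t,
      {w : 𝒵 | (∃ g₀ : 𝒢, ρ g₀ z = w) ∧ V w = t}.ncard = (Fb t).card := by
    intro t
    rw [← Set.ncard_coe_finset (Fb t)]
    congr 1
    ext w
    simp [hFbdef]
  -- counts
  set NV : 𝒵t → ℕ := fun t => (Finset.univ.filter fun g : 𝒢 => V (ρ g z) = t).card with hNVdef
  set Nρ : 𝒵t → ℕ := fun t => (Finset.univ.filter fun g : 𝒢 => ρt g zt = t).card with hNρdef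
  have lemNV : ∀ t : 𝒵t, NV t = (Fb t).card * Sz := by
    intro t
    have H : ∀ g ∈ (Finset.univ.filter fun g : 𝒢 => V (ρ g z) = t),
        (fun g : 𝒢 => ρ g z) g ∈ Fb t := by
      intro g hg
      simp only [Finset.mem_filter, Finset.mem_univ, true_and] at hg
      simp only [hFbdef, Finset.mem_filter, Finset.mem_image, Finset.mem_univ, true_and]
      exact ⟨⟨g, rfl⟩, hg⟩
    rw [hNVdef]
    simp only
    rw [Finset.card_eq_sum_card_fiberwise H]
    rw [Finset.sum_congr rfl (fun b hb => ?_), Finset.sum_const, smul_eq_mul]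
    · simp only [hFbdef, Finset.mem_filter, Finset.mem_image, Finset.mem_univ, true_and] at hb
      obtain ⟨⟨g₀, hg₀⟩, hVb⟩ := hb
      rw [Finset.filter_filter]
      rw [show (Finset.univ.filter fun g : 𝒢 => V (ρ g z) = t ∧ ρ g z = b)
          = (Finset.univ.filter fun g : 𝒢 => ρ g z = ρ g₀ z) from ?_]
      · exact lem0 g₀
      · apply Finset.filter_congr
        intro g _
        simp only [hg₀]
        constructor
        · rintro ⟨_, h2⟩; exact h2
        · intro h; exact ⟨by rw [h, hVb], h⟩
  -- orbit of zt as a finset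
  set Ot : Finset 𝒵t := Finset.image (fun g : 𝒢 => ρt g zt) Finset.univ with hOtdef
  have hOtpos : 0 < Ot.card := by
    refine Finset.card_pos.2 ⟨ρt 1 zt, ?_⟩
    simp only [hOtdef, Finset.mem_image, Finset.mem_univ, true_and]
    exact ⟨1, rfl⟩
  have hsumNV : ∑ b ∈ Ot, NV b = Fintype.card 𝒢 := by
    rw [← Finset.card_univ]
    rw [Finset.card_eq_sum_card_fiberwise (f := fun g : 𝒢 => V (ρ g z)) (t := Ot)
      (fun g _ => by
        obtain ⟨g', hg'⟩ := hVorb (ρ g z) ⟨g, rfl⟩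
        simp only [hOtdef, Finset.mem_image, Finset.mem_univ, true_and]
        exact Finset.mem_image.2 ⟨g', Finset.mem_univ _, hg'⟩)]
  have hsumNρ : ∑ b ∈ Ot, Nρ b = Fintype.card 𝒢 := by
    rw [← Finset.card_univ]
    rw [Finset.card_eq_sum_card_fiberwise (f := fun g : 𝒢 => ρt g zt) (t := Ot)
      (fun g _ => by
        simp only [hOtdef, Finset.mem_image, Finset.mem_univ, true_and]
        exact Finset.mem_image.2 ⟨g, Finset.mem_univ _, rfl⟩)]
  -- PMF equality as count equality
  have key : (PMF.map (fun g : 𝒢 => V (ρ g z)) (PMF.uniformOfFintype 𝒢)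
      = PMF.map (fun g : 𝒢 => ρt g zt) (PMF.uniformOfFintype 𝒢)) ↔ ∀ t : 𝒵t, NV t = Nρ t := by
    have happly : ∀ (f : 𝒢 → 𝒵t) (t : 𝒵t),
        (PMF.map f (PMF.uniformOfFintype 𝒢)) t
          = ((Finset.univ.filter fun g : 𝒢 => f g = t).card : ℝ≥0∞)
              * ((Fintype.card 𝒢 : ℝ≥0∞))⁻¹ := by
      intro f t
      rw [PMF.map_apply, tsum_fintype]
      rw [show (fun g : 𝒢 => if t = f g then (PMF.uniformOfFintype 𝒢) g else 0)
          = (fun g : 𝒢 => if f g = t then ((Fintype.card 𝒢 : ℝ≥0∞))⁻¹ else 0) from ?_]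
      · rw [← Finset.sum_filter, Finset.sum_const, nsmul_eq_mul]
      · funext g
        simp [PMF.uniformOfFintype_apply, eq_comm]
    constructor
    · intro h t
      have := congrFun (congrArg DFunLike.coe h) t
      rw [happly, happly] at this
      have hc0 : ((Fintype.card 𝒢 : ℝ≥0∞)) ≠ 0 := by
        simp [Fintype.card_ne_zero]
      have hct : ((Fintype.card 𝒢 : ℝ≥0∞)) ≠ ⊤ := by simp
      have := congrArg (· * (Fintype.card 𝒢 : ℝ≥0∞)) this
      simp only [mul_assoc, ENNReal.inv_mul_cancel hc0 hct, mul_one] at this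
      exact_mod_cast this
    · intro h
      apply PMF.ext
      intro t
      have ht := h t
      simp only [hNVdef, hNρdef] at ht
      rw [happly, happly, ht]
  refine ⟨⟨fun h g g' => ?_, fun h => ?_⟩, fun h g => ?_⟩
  · -- fibers equal
    have hN := key.1 h
    rw [hFbset, hFbset]
    have e1 : (Fb (ρt g zt)).card * Sz = St := by
      rw [← lemNV, hN, hNρdef]; exact lem0t g
    have e2 : (Fb (ρt g' zt)).card * Sz = St := by
      rw [← lemNV, hN, hNρdef]; exact lem0t g'
    exact Nat.eq_of_mul_eq_mul_right hSzpos (e1.trans e2.symm)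
  · -- equal fibers imply distributional equality
    apply key.2
    have hc : ∀ g g' : 𝒢, (Fb (ρt g zt)).card = (Fb (ρt g' zt)).card := by
      intro g g'
      have := h g g'
      rwa [hFbset, hFbset] at this
    -- common value of NV on the orbit
    have hNVconst : ∀ b ∈ Ot, NV b = (Fb (ρt 1 zt)).card * Sz := by
      intro b hb
      simp only [hOtdef, Finset.mem_image, Finset.mem_univ, true_and] at hb
      obtain ⟨g', hg'⟩ := hb
      rw [lemNV, ← hg', hc g' 1]
    have hNρconst : ∀ b ∈ Ot, Nρ b = St := by
      intro b hb
      simp only [hOtdef, Finset.mem_image, Finset.mem_univ, true_and] at hb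
      obtain ⟨g', hg'⟩ := hb
      rw [hNρdef]
      simp only [← hg']
      exact lem0t g'
    have hsum1 : Ot.card * ((Fb (ρt 1 zt)).card * Sz) = Fintype.card 𝒢 := by
      rw [← hsumNV, Finset.sum_congr rfl hNVconst, Finset.sum_const, smul_eq_mul]
    have hsum2 : Ot.card * St = Fintype.card 𝒢 := by
      rw [← hsumNρ, Finset.sum_congr rfl hNρconst, Finset.sum_const, smul_eq_mul]
    have hCSt : (Fb (ρt 1 zt)).card * Sz = St :=
      Nat.eq_of_mul_eq_mul_left hOtpos (hsum1.trans hsum2.symm)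
    intro t
    by_cases ht : ∃ g' : 𝒢, ρt g' zt = t
    · obtain ⟨g', hg'⟩ := ht
      rw [lemNV, ← hg', hc g' 1, hCSt, hNρdef]
      simp only
      exact (lem0t g').symm
    · have h1 : NV t = 0 := by
        rw [hNVdef]
        simp only [Finset.card_eq_zero]
        apply Finset.filter_eq_empty_iff.2
        intro g _
        intro hgt
        obtain ⟨g'', hg''⟩ := hVorb (ρ g z) ⟨g, rfl⟩
        exact ht ⟨g'', by rw [hg'', hgt]⟩
      have h2 : Nρ t = 0 := by
        rw [hNρdef]
        simp only [Finset.card_eq_zero]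
        apply Finset.filter_eq_empty_iff.2
        intro g _
        intro hgt
        exact ht ⟨g, hgt⟩
      rw [h1, h2]
  · -- common value equals |Stab zt| / |Stab z|
    have hN := key.1 h
    have e1 : (Fb (ρt g zt)).card * Sz = St := by
      rw [← lemNV, hN, hNρdef]; exact lem0t g
    have hSt' : {g' : 𝒢 | ρt g' zt = zt}.ncard = St := by
      rw [hStdef, ← Set.ncard_coe_finset]
      congr 1
      ext g'
      simp
    have hSz' : {g' : 𝒢 | ρ g' z = z}.ncard = Sz := by
      rw [hSzdef, ← Set.ncard_coe_finset]
      congr 1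
      ext g'
      simp
    rw [hFbset, hSt', hSz', ← e1, Nat.mul_div_cancel _ hSzpos]
end

section
/- (Existence of distributionally equivariant maps between orbits, finite groups.) Let 𝒢 be a finite group acting on sets 𝒵 via ρ and on 𝒵̃ via ρ̃, fix z ∈ 𝒵 and z̃ ∈ 𝒵̃ with orbits O_z and Õ_{z̃}, and let G be uniformly distributed on 𝒢. There exists a map V : O_z → Õ_{z̃} with V(z) = z̃ such that V(ρ(G)z) =_d ρ̃(G)z̃ if and only if |Stab_ρ(z)| divides |Stab_ρ̃(z̃)|, where Stab_ρ(z) := {g ∈ 𝒢 : ρ(g)z = z} and Stab_ρ̃(z̃) := {g ∈ 𝒢 : ρ̃(g)z̃ = z̃}. -/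
open Finset

theorem pmf_map_apply_card {α β : Type*} [Fintype α] [Nonempty α] [DecidableEq β] (f : α → β) (y : β) :
    (PMF.map f (PMF.uniformOfFintype α)) y
      = (univ.filter (fun a => f a = y)).card * (Fintype.card α : ENNReal)⁻¹ := by
  rw [PMF.map_apply, tsum_fintype]
  simp only [PMF.uniformOfFintype_apply]
  rw [Finset.natCast_card_filter, Finset.sum_mul]
  congr 1; ext a
  by_cases h : f a = y
  · simp [h]
  · simp only [h, if_false, zero_mul]
    rw [if_neg (fun e => h e.symm)]

theorem pmf_map_uniform_eq_iff {α β : Type*} [Fintype α] [Nonempty α] [DecidableEq β] (f f' : α → β) :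
    PMF.map f (PMF.uniformOfFintype α) = PMF.map f' (PMF.uniformOfFintype α)
      ↔ ∀ y, (univ.filter (fun a => f a = y)).card = (univ.filter (fun a => f' a = y)).card := by
  rw [DFunLike.ext_iff]
  have hc : (Fintype.card α : ENNReal)⁻¹ ≠ 0 := by simp
  have hc' : (Fintype.card α : ENNReal)⁻¹ ≠ ⊤ := by simp [Fintype.card_ne_zero]
  constructor
  · intro h y
    have := h y
    rw [pmf_map_apply_card, pmf_map_apply_card] at this
    exact Nat.cast_inj.mp ((ENNReal.mul_left_inj hc hc').mp this)
  · intro h y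
    rw [pmf_map_apply_card, pmf_map_apply_card, h y]

theorem card_coset {𝒢 𝒵 : Type*} [Group 𝒢] [Fintype 𝒢] [DecidableEq 𝒵]
    (ρ : 𝒢 → 𝒵 → 𝒵) (hρ_one : ρ 1 = id) (hρ_mul : ∀ g g' : 𝒢, ρ (g * g') = ρ g ∘ ρ g')
    (z w : 𝒵) (g0 : 𝒢) (h0 : ρ g0 z = w) :
    (univ.filter (fun g => ρ g z = w)).card = (univ.filter (fun g => ρ g z = z)).card := by
  have key : ∀ (g g' : 𝒢) (x : 𝒵), ρ (g * g') x = ρ g (ρ g' x) := fun g g' x =>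
    congrFun (hρ_mul g g') x
  have inv : ∀ (g : 𝒢) (x : 𝒵), ρ g⁻¹ (ρ g x) = x := by
    intro g x
    rw [← key, inv_mul_cancel, hρ_one, id]
  refine card_bij' (fun g _ => g0⁻¹ * g) (fun g _ => g0 * g) ?_ ?_ ?_ ?_
  · intro g hg
    simp only [mem_filter, mem_univ, true_and] at hg ⊢
    rw [key, hg, ← h0, inv]
  · intro g hg
    simp only [mem_filter, mem_univ, true_and] at hg ⊢
    rw [key, hg, h0]
  · intro g _; group
  · intro g _; group

/-- key counting identity -/
theorem card_filter_comp {𝒢 𝒵 𝒵t : Type*} [Group 𝒢] [Fintype 𝒢] [DecidableEq 𝒵] [DecidableEq 𝒵t]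
    (ρ : 𝒢 → 𝒵 → 𝒵) (hρ_one : ρ 1 = id) (hρ_mul : ∀ g g' : 𝒢, ρ (g * g') = ρ g ∘ ρ g')
    (z : 𝒵) (V : 𝒵 → 𝒵t) (y : 𝒵t) :
    (univ.filter (fun g => V (ρ g z) = y)).card
      = ((univ.image (fun g => ρ g z)).filter (fun w => V w = y)).card
          * (univ.filter (fun g => ρ g z = z)).card := by
  set I := univ.image (fun g => ρ g z) with hI
  rw [card_eq_sum_card_fiberwise (f := fun g => ρ g z) (t := I)
    (fun g _ => mem_image_of_mem _ (mem_univ g))]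
  have step : ∀ w ∈ I, ((univ.filter (fun g => V (ρ g z) = y)).filter
      (fun g => ρ g z = w)).card = if V w = y then (univ.filter (fun g => ρ g z = z)).card
        else 0 := by
    intro w hw
    obtain ⟨g0, -, hg0⟩ := mem_image.mp hw
    by_cases hVw : V w = y
    · rw [if_pos hVw, ← card_coset ρ hρ_one hρ_mul z w g0 hg0]
      congr 1
      ext g
      simp only [mem_filter, mem_univ, true_and]
      constructor
      · exact fun h => h.2
      · intro h; exact ⟨by rw [h, hVw], h⟩
    · rw [if_neg hVw]
      rw [Finset.card_eq_zero]
      ext g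
      simp only [mem_filter, mem_univ, true_and, Finset.notMem_empty, iff_false, not_and]
      intro h1 h2
      rw [h2] at h1
      exact hVw h1
  rw [Finset.sum_congr rfl step, ← Finset.sum_filter, Finset.sum_const, smul_eq_mul]

theorem orbit_count {𝒢 𝒵 : Type*} [Group 𝒢] [Fintype 𝒢] [DecidableEq 𝒵]
    (ρ : 𝒢 → 𝒵 → 𝒵) (hρ_one : ρ 1 = id) (hρ_mul : ∀ g g' : 𝒢, ρ (g * g') = ρ g ∘ ρ g')
    (z : 𝒵) :
    (univ.image (fun g => ρ g z)).card * (univ.filter (fun g => ρ g z = z)).card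
      = Fintype.card 𝒢 := by
  have := card_filter_comp ρ hρ_one hρ_mul z (fun _ => (0 : ℕ)) 0
  simpa using this.symm

theorem exists_fiber_map {A B : Type*} [Fintype A] [Fintype B] [DecidableEq B] (m : ℕ)
    (hcard : Fintype.card A = Fintype.card B * m) (a0 : A) (b0 : B) :
    ∃ f : A → B, f a0 = b0 ∧ ∀ b : B, (univ.filter (fun a => f a = b)).card = m := by
  have e : A ≃ B × Fin m := Fintype.equivOfCardEq (by simp [hcard])
  refine ⟨fun a => Equiv.swap ((e a0).1) b0 ((e a).1), Equiv.swap_apply_left _ _, fun b => ?_⟩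
  have hinj : ∀ a, Equiv.swap ((e a0).1) b0 ((e a).1) = b
      ↔ (e a).1 = Equiv.swap ((e a0).1) b0 b := by
    intro a
    rw [← Equiv.swap_apply_eq_iff]
  set b' := Equiv.swap ((e a0).1) b0 b with hb'
  have h1 : (univ.filter (fun a => Equiv.swap ((e a0).1) b0 ((e a).1) = b))
      = univ.filter (fun a => (e a).1 = b') := by
    ext a; simp [hinj a]
  rw [h1]
  have h2 : (univ.filter (fun a => (e a).1 = b')).card
      = (univ.filter (fun p : B × Fin m => p.1 = b')).card := by
    refine card_bij' (fun a _ => e a) (fun p _ => e.symm p) ?_ ?_ ?_ ?_ <;>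
      simp +contextual [Finset.mem_filter]
  rw [h2]
  have h3 : (univ.filter (fun p : B × Fin m => p.1 = b')) = {b'} ×ˢ univ := by
    ext p
    simp only [mem_filter, mem_univ, true_and, Finset.mem_product, Finset.mem_singleton]
    constructor
    · intro h; exact ⟨h, trivial⟩
    · intro h; exact h.1
  rw [h3]
  simp

/-- existence of distributionally equivariant maps between orbits, finite
groups: there exists a map `V : O_z → Õ_{z̃}` with `V(z) = z̃` and
`V(ρ(G)z) =_d ρ̃(G)z̃` for `G` uniform on `𝒢` iff `|Stab_ρ(z)|` divides `|Stab_ρ̃(z̃)|`. -/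
theorem stmt18
    {𝒢 𝒵 𝒵t : Type*} [Group 𝒢] [Fintype 𝒢]
    (ρ : 𝒢 → 𝒵 → 𝒵)
    (hρ_one : ρ 1 = id)
    (hρ_mul : ∀ g g' : 𝒢, ρ (g * g') = ρ g ∘ ρ g')
    (ρt : 𝒢 → 𝒵t → 𝒵t)
    (hρt_one : ρt 1 = id)
    (hρt_mul : ∀ g g' : 𝒢, ρt (g * g') = ρt g ∘ ρt g')
    (z : 𝒵) (zt : 𝒵t) :
    (∃ V : 𝒵 → 𝒵t,
      (∀ w : 𝒵, (∃ g : 𝒢, ρ g z = w) → ∃ g : 𝒢, ρt g zt = V w) ∧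
      V z = zt ∧
      PMF.map (fun g : 𝒢 => V (ρ g z)) (PMF.uniformOfFintype 𝒢)
        = PMF.map (fun g : 𝒢 => ρt g zt) (PMF.uniformOfFintype 𝒢))
    ↔ {g : 𝒢 | ρ g z = z}.ncard ∣ {g : 𝒢 | ρt g zt = zt}.ncard := by
  classical
  have hz1 : ρ 1 z = z := by rw [hρ_one]; rfl
  have hzt1 : ρt 1 zt = zt := by rw [hρt_one]; rfl
  have hzI : z ∈ univ.image (fun g : 𝒢 => ρ g z) := mem_image.mpr ⟨1, mem_univ 1, hz1⟩
  have hztIt : zt ∈ univ.image (fun g : 𝒢 => ρt g zt) := mem_image.mpr ⟨1, mem_univ 1, hzt1⟩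
  have hncardH : {g : 𝒢 | ρ g z = z}.ncard = (univ.filter (fun g : 𝒢 => ρ g z = z)).card := by
    rw [← Set.ncard_coe_finset]
    congr 1
    ext g
    simp
  have hncardK : {g : 𝒢 | ρt g zt = zt}.ncard
      = (univ.filter (fun g : 𝒢 => ρt g zt = zt)).card := by
    rw [← Set.ncard_coe_finset]
    congr 1
    ext g
    simp
  rw [hncardH, hncardK]
  constructor
  · rintro ⟨V, -, -, hPMF⟩
    have hcount := (pmf_map_uniform_eq_iff _ _).mp hPMF zt
    rw [card_filter_comp ρ hρ_one hρ_mul z V zt] at hcount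
    exact Dvd.intro_left _ hcount
  · rintro ⟨m, hm⟩
    have hne : (univ.filter (fun g : 𝒢 => ρ g z = z)).card ≠ 0 :=
      Finset.card_ne_zero_of_mem (mem_filter.mpr ⟨mem_univ 1, hz1⟩)
    have hIcount := orbit_count ρ hρ_one hρ_mul z
    have hItcount := orbit_count ρt hρt_one hρt_mul zt
    have hcards : (univ.image (fun g : 𝒢 => ρ g z)).card
        = (univ.image (fun g : 𝒢 => ρt g zt)).card * m := by
      refine Nat.eq_of_mul_eq_mul_right (Nat.pos_of_ne_zero hne) ?_
      rw [hIcount, ← hItcount, hm]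
      ring
    have hcard' : Fintype.card (univ.image (fun g : 𝒢 => ρ g z))
        = Fintype.card (univ.image (fun g : 𝒢 => ρt g zt)) * m := by
      simpa [Fintype.card_coe] using hcards
    obtain ⟨f, hf0, hfib⟩ := exists_fiber_map m hcard' ⟨z, hzI⟩ ⟨zt, hztIt⟩
    set V : 𝒵 → 𝒵t := fun w =>
      if hw : w ∈ univ.image (fun g : 𝒢 => ρ g z) then (f ⟨w, hw⟩ : 𝒵t) else zt with hVdef
    have hV : ∀ (w) (hw : w ∈ univ.image (fun g : 𝒢 => ρ g z)),
        V w = (f ⟨w, hw⟩ : 𝒵t) := fun w hw => dif_pos hw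
    refine ⟨V, ?_, ?_, ?_⟩
    · rintro w ⟨g, hg⟩
      have hw : w ∈ univ.image (fun g : 𝒢 => ρ g z) := mem_image.mpr ⟨g, mem_univ g, hg⟩
      obtain ⟨g', -, hg'⟩ := mem_image.mp (f ⟨w, hw⟩).2
      exact ⟨g', by rw [hV w hw]; exact hg'⟩
    · rw [hV z hzI, hf0]
    · rw [pmf_map_uniform_eq_iff]
      intro y
      rw [card_filter_comp ρ hρ_one hρ_mul z V y]
      by_cases hy : y ∈ univ.image (fun g : 𝒢 => ρt g zt)
      · obtain ⟨g0, -, hg0⟩ := mem_image.mp hy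
        rw [card_coset ρt hρt_one hρt_mul zt y g0 hg0, hm]
        have hbij : ((univ.image (fun g : 𝒢 => ρ g z)).filter (fun w => V w = y)).card
            = (univ.filter (fun a : (univ.image (fun g : 𝒢 => ρ g z)) => f a = ⟨y, hy⟩)).card := by
          refine card_bij' (fun w hw => ⟨w, (mem_filter.mp hw).1⟩)
            (fun a _ => (a : 𝒵)) ?_ ?_ ?_ ?_
          · intro w hw
            obtain ⟨hw1, hw2⟩ := mem_filter.mp hw
            rw [hV w hw1] at hw2
            simp only [mem_filter, mem_univ, true_and]
            exact Subtype.ext hw2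
          · intro a ha
            simp only [mem_filter, mem_univ, true_and] at ha
            refine mem_filter.mpr ⟨a.2, ?_⟩
            rw [hV _ a.2]
            have h2 : (⟨(a : 𝒵), a.2⟩ : (univ.image (fun g : 𝒢 => ρ g z))) = a := rfl
            rw [h2, ha]
          · intro w hw; rfl
          · intro a ha; rfl
        rw [hbij, hfib]
        ring
      · have hR : (univ.filter (fun g : 𝒢 => ρt g zt = y)) = ∅ := by
          ext g
          simp only [mem_filter, mem_univ, true_and, Finset.notMem_empty, iff_false]
          intro hg
          exact hy (mem_image.mpr ⟨g, mem_univ g, hg⟩)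
        have hL : ((univ.image (fun g : 𝒢 => ρ g z)).filter (fun w => V w = y)) = ∅ := by
          ext w
          simp only [mem_filter, Finset.notMem_empty, iff_false, not_and]
          intro hw hVw
          rw [hV w hw] at hVw
          exact hy (hVw ▸ (f ⟨w, hw⟩).2)
        rw [hR, hL]
        simp
end
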